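/- arXiv:0905.3268 — 10 statements merged into one kernel-verified Lean document; each statement's English description precedes it below -/
import Mathlib

section
/- For every n ≥ 4 and every i, the number d(C_n,i) of dominating sets of the cycle C_n of cardinality i satisfies d(C_n,i) = d(C_{n−1},i−1) + d(C_{n−2},i−1) + d(C_{n−3},i−1). -/
/-- The cycle graph `C_n` on vertex set `ZMod n`: two vertices are adjacent
iff they are distinct and differ by `1`. -/
def cycleG (n : ℕ) : SimpleGraph (ZMod n) where
  Adj u v := u ≠ v ∧ (u - v = 1 ∨ v - u = 1)
  symm := ⟨fun u v ⟨h1, h2⟩ => ⟨h1.symm, h2.symm⟩⟩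
  loopless := ⟨fun u ⟨h, _⟩ => h rfl⟩

/-- `S` is a dominating set of `G`: every vertex not in `S` is adjacent to a vertex of `S`. -/
def isDomSet {V : Type*} (G : SimpleGraph V) (S : Finset V) : Prop :=
  ∀ v, v ∉ S → ∃ u ∈ S, G.Adj u v

/-- `d(C_n, i)`: the number of dominating sets of `C_n` of cardinality `i`. -/
noncomputable def domCount (n i : ℕ) : ℕ :=
  Nat.card {S : Finset (ZMod n) // isDomSet (cycleG n) S ∧ S.card = i}

namespace DomRec

/-- no-3-consecutive-gaps condition on subsets of `range n`, circularly. -/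
def nd (n : ℕ) (S : Finset ℕ) : Prop :=
  ∀ k, k < n → (k ∈ S ∨ (k + 1) % n ∈ S ∨ (k + 2) % n ∈ S)

noncomputable def domF (n i : ℕ) : Finset (Finset ℕ) :=
  @Finset.filter _ (fun S => nd n S ∧ S.card = i) (Classical.decPred _)
    ((Finset.range n).powerset)

lemma mem_domF {n i : ℕ} {S : Finset ℕ} :
    S ∈ domF n i ↔ (∀ x ∈ S, x < n) ∧ nd n S ∧ S.card = i := by
  simp [domF, Finset.mem_filter, Finset.mem_powerset, Finset.subset_iff, and_assoc]

lemma mod_two_cases (n x : ℕ) (h : x < 2 * n) :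
    (x < n ∧ x % n = x) ∨ (n ≤ x ∧ x % n = x - n) := by
  rcases Nat.lt_or_ge x n with h1 | h1
  · exact Or.inl ⟨h1, Nat.mod_eq_of_lt h1⟩
  · exact Or.inr ⟨h1, by rw [Nat.mod_eq_sub_mod h1, Nat.mod_eq_of_lt (by omega)]⟩

def mx (T : Finset ℕ) : ℕ := T.sup id

lemma le_mx {T : Finset ℕ} {x : ℕ} (h : x ∈ T) : x ≤ mx T := Finset.le_sup (f := id) h

lemma mx_mem {T : Finset ℕ} (h : T.Nonempty) : mx T ∈ T := by
  obtain ⟨b, hb, he⟩ := Finset.exists_mem_eq_sup T h id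
  rw [mx, he]; exact hb

def g (a : ℕ) (T : Finset ℕ) : Finset ℕ := insert (mx T + a) T

lemma mx_g {a : ℕ} (ha : 1 ≤ a) (T : Finset ℕ) : mx (g a T) = mx T + a := by
  simp only [g, mx, Finset.sup_insert, id_eq]
  exact sup_eq_left.mpr (by omega)

lemma g_erase_eq {a : ℕ} (ha : 1 ≤ a) (T : Finset ℕ) : (g a T).erase (mx T + a) = T :=
  Finset.erase_insert (fun h => by have := le_mx h; omega)

lemma g_inj_eq {a b : ℕ} (ha : 1 ≤ a) (hb : 1 ≤ b) {T T' : Finset ℕ}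
    (h : g a T = g b T') : mx T + a = mx T' + b ∧ T = T' := by
  have h1 : mx T + a = mx T' + b := by rw [← mx_g ha T, ← mx_g hb T', h]
  refine ⟨h1, ?_⟩
  calc T = (g a T).erase (mx T + a) := (g_erase_eq ha T).symm
    _ = (g b T').erase (mx T' + b) := by rw [h, h1]
    _ = T' := g_erase_eq hb T'


lemma domF_zero (m : ℕ) (hm : 1 ≤ m) : domF m 0 = ∅ := by
  ext S
  simp only [Finset.notMem_empty, iff_false]
  intro hS
  obtain ⟨hb, hnd, hc⟩ := mem_domF.mp hS
  rw [Finset.card_eq_zero] at hc; subst hc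
  rcases hnd 0 (by omega) with h | h | h <;> simp at h

lemma domF_one {n : ℕ} (hn : 4 ≤ n) : domF n 1 = ∅ := by
  ext S
  simp only [Finset.notMem_empty, iff_false]
  intro hS
  obtain ⟨hb, hnd, hc⟩ := mem_domF.mp hS
  obtain ⟨m, rfl⟩ := Finset.card_eq_one.mp hc
  have hm : m < n := hb m (Finset.mem_singleton_self m)
  have hk : (m + 1) % n < n := Nat.mod_lt _ (by omega)
  rcases hnd ((m + 1) % n) hk with h | h | h
  · rw [Finset.mem_singleton] at h
    rcases mod_two_cases n (m + 1) (by omega) with ⟨_, he⟩ | ⟨hge, he⟩ <;> omega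
  · rw [Nat.mod_add_mod, Finset.mem_singleton] at h
    rcases mod_two_cases n (m + 1 + 1) (by omega) with ⟨_, he⟩ | ⟨hge, he⟩ <;> omega
  · rw [Nat.mod_add_mod, Finset.mem_singleton] at h
    rcases mod_two_cases n (m + 1 + 2) (by omega) with ⟨_, he⟩ | ⟨hge, he⟩ <;> omega

/-- inserting a new max at distance `a ∈ [1,3]` preserves domination. -/
lemma g_mem_domF {n i a : ℕ} (hn : 4 ≤ n) (ha1 : 1 ≤ a) (ha3 : a ≤ 3) (hi : 2 ≤ i)
    {T : Finset ℕ} (hT : T ∈ domF (n - a) (i - 1)) : g a T ∈ domF n i := by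
  obtain ⟨hTr, hTd, hTc⟩ := mem_domF.mp hT
  have hTne : T.Nonempty := Finset.card_pos.mp (by omega)
  have hM'T : mx T ∈ T := mx_mem hTne
  have hM'lt : mx T < n - a := hTr _ hM'T
  have hlemx : ∀ x ∈ T, x ≤ mx T := fun x hx => le_mx hx
  rw [mem_domF]
  refine ⟨?_, ?_, ?_⟩
  · intro x hx
    rcases Finset.mem_insert.mp hx with rfl | hx
    · omega
    · have := hTr x hx; omega
  · intro k hk
    have hgmem : ∀ w ∈ T, w ∈ g a T := fun w hw => Finset.mem_insert_of_mem hw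
    have hMg : mx T + a ∈ g a T := Finset.mem_insert_self _ _
    by_cases h1 : k + 2 ≤ mx T
    · rcases hTd k (by omega) with h | h | h
      · exact Or.inl (hgmem _ h)
      · rw [Nat.mod_eq_of_lt (by omega)] at h
        exact Or.inr (Or.inl (by rw [Nat.mod_eq_of_lt (by omega)]; exact hgmem _ h))
      · rw [Nat.mod_eq_of_lt (by omega)] at h
        exact Or.inr (Or.inr (by rw [Nat.mod_eq_of_lt (by omega)]; exact hgmem _ h))
    · by_cases h2 : k ≤ mx T
      · by_cases h3 : k = mx T
        · exact Or.inl (hgmem _ (h3 ▸ hM'T))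
        · have h4 : k + 1 = mx T := by omega
          exact Or.inr (Or.inl (by rw [Nat.mod_eq_of_lt (by omega), h4]; exact hgmem _ hM'T))
      · by_cases h5 : k ≤ mx T + a
        · rcases (show k = mx T + a ∨ k + 1 = mx T + a ∨ k + 2 = mx T + a by omega)
            with h7 | h7 | h7
          · exact Or.inl (h7 ▸ hMg)
          · exact Or.inr (Or.inl (by rw [Nat.mod_eq_of_lt (by omega), h7]; exact hMg))
          · exact Or.inr (Or.inr (by rw [Nat.mod_eq_of_lt (by omega), h7]; exact hMg))
        · -- mx T + a < k < n
          have hka : k - a < n - a := by omega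
          rcases hTd (k - a) hka with h | h | h
          · exact absurd (hlemx _ h) (by omega)
          · rcases mod_two_cases (n - a) (k - a + 1) (by omega) with ⟨hlt, he⟩ | ⟨hge, he⟩
            · rw [he] at h; exact absurd (hlemx _ h) (by omega)
            · rw [he] at h
              refine Or.inr (Or.inl ?_)
              have hwb := hlemx _ h
              have e2 : (k + 1) % n = k - a + 1 - (n - a) := by
                rcases mod_two_cases n (k + 1) (by omega) with ⟨h8, h9⟩ | ⟨h8, h9⟩ <;> omega
              rw [e2]; exact hgmem _ h
          · rcases mod_two_cases (n - a) (k - a + 2) (by omega) with ⟨hlt, he⟩ | ⟨hge, he⟩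
            · rw [he] at h; exact absurd (hlemx _ h) (by omega)
            · rw [he] at h
              refine Or.inr (Or.inr ?_)
              have hwb := hlemx _ h
              have e2 : (k + 2) % n = k - a + 2 - (n - a) := by
                rcases mod_two_cases n (k + 2) (by omega) with ⟨h8, h9⟩ | ⟨h8, h9⟩ <;> omega
              rw [e2]; exact hgmem _ h
  · have hnotmem : mx T + a ∉ T := fun h => by have := hlemx _ h; omega
    rw [g, Finset.card_insert_of_notMem hnotmem, hTc]
    omega

/-- the decomposition of a dominating set by its top gap. -/
lemma decompose {n i : ℕ} (hn : 4 ≤ n) {S : Finset ℕ} (hS : S ∈ domF n i) (hi : 2 ≤ i) :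
    ∃ a, 1 ≤ a ∧ a ≤ 3 ∧ ∃ T ∈ domF (n - a) (i - 1), S = g a T := by
  obtain ⟨hSr, hSd, hSc⟩ := mem_domF.mp hS
  have hSne : S.Nonempty := Finset.card_pos.mp (by omega)
  have hMS : mx S ∈ S := mx_mem hSne
  have hMn : mx S < n := hSr _ hMS
  set M : ℕ := mx S with hM
  set T : Finset ℕ := S.erase M with hT
  have hTcard : T.card = i - 1 := by rw [hT, Finset.card_erase_of_mem hMS, hSc]
  have hTne : T.Nonempty := Finset.card_pos.mp (by omega)
  set M' : ℕ := mx T with hM'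
  have hM'T : M' ∈ T := mx_mem hTne
  have hM'S : M' ∈ S := Finset.mem_of_mem_erase hM'T
  have hM'ne : M' ≠ M := (Finset.mem_erase.mp hM'T).1
  have hM'M : M' < M := lt_of_le_of_ne (le_mx hM'S) hM'ne
  have hsec : ∀ x ∈ S, x ≠ M → x ≤ M' := fun x hx hne =>
    le_mx (Finset.mem_erase.mpr ⟨hne, hx⟩)
  have hle : ∀ x ∈ S, x ≤ M := fun x hx => le_mx hx
  set a : ℕ := M - M' with ha
  have ha3 : a ≤ 3 := by
    by_contra hcon
    push_neg at hcon
    rcases hSd (M' + 1) (by omega) with h | h | h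
    · have := hsec _ h (by omega); omega
    · rw [Nat.mod_eq_of_lt (by omega)] at h; have := hsec _ h (by omega); omega
    · rw [Nat.mod_eq_of_lt (by omega)] at h; have := hsec _ h (by omega); omega
  have ha1 : 1 ≤ a := by omega
  have hC : ∀ v, M < v → v < n → ∃ w ∈ T, w + n = v + 1 ∨ w + n = v + 2 := by
    intro v hv1 hv2
    rcases hSd v hv2 with h | h | h
    · exact absurd (hle v h) (by omega)
    · rcases mod_two_cases n (v + 1) (by omega) with ⟨_, he⟩ | ⟨hge, he⟩
      · rw [he] at h; exact absurd (hle _ h) (by omega)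
      · rw [he] at h
        exact ⟨v + 1 - n, Finset.mem_erase.mpr ⟨by omega, h⟩, Or.inl (by omega)⟩
    · rcases mod_two_cases n (v + 2) (by omega) with ⟨_, he⟩ | ⟨hge, he⟩
      · rw [he] at h; exact absurd (hle _ h) (by omega)
      · rw [he] at h
        by_cases hwM : v + 2 - n = M
        · exact ⟨M', hM'T, Or.inl (by omega)⟩
        · exact ⟨v + 2 - n, Finset.mem_erase.mpr ⟨hwM, h⟩, Or.inr (by omega)⟩
  have hTr : ∀ x ∈ T, x < n - a := by
    intro x hx
    have h1 : x ≤ M' := le_mx hx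
    omega
  refine ⟨a, ha1, ha3, T, ?_, ?_⟩
  · rw [mem_domF]
    refine ⟨hTr, ?_, hTcard⟩
    intro k hk
    by_cases hk2 : k + 2 ≤ M'
    · rcases hSd k (by omega) with h | h | h
      · exact Or.inl (Finset.mem_erase.mpr ⟨by omega, h⟩)
      · rw [Nat.mod_eq_of_lt (by omega)] at h
        exact Or.inr (Or.inl (by
          rw [Nat.mod_eq_of_lt (show k + 1 < n - a by omega)]
          exact Finset.mem_erase.mpr ⟨by omega, h⟩))
      · rw [Nat.mod_eq_of_lt (by omega)] at h
        exact Or.inr (Or.inr (by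
          rw [Nat.mod_eq_of_lt (show k + 2 < n - a by omega)]
          exact Finset.mem_erase.mpr ⟨by omega, h⟩))
    · by_cases hkM : k ≤ M'
      · by_cases hkeq : k = M'
        · exact Or.inl (hkeq ▸ hM'T)
        · have h4 : k + 1 = M' := by omega
          exact Or.inr (Or.inl (by
            rw [h4, Nat.mod_eq_of_lt (hTr M' hM'T)]; exact hM'T))
      · obtain ⟨w, hwT, hw⟩ := hC (k + a) (by omega) (by omega)
        have hwM' : w ≤ M' := le_mx hwT
        rcases hw with hw | hw
        · refine Or.inr (Or.inl ?_)
          have e2 : (k + 1) % (n - a) = w := by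
            rcases mod_two_cases (n - a) (k + 1) (by omega) with ⟨h8, h9⟩ | ⟨h8, h9⟩ <;> omega
          rw [e2]; exact hwT
        · refine Or.inr (Or.inr ?_)
          have e2 : (k + 2) % (n - a) = w := by
            rcases mod_two_cases (n - a) (k + 2) (by omega) with ⟨h8, h9⟩ | ⟨h8, h9⟩ <;> omega
          rw [e2]; exact hwT
  · have h2 : M' + a = M := by omega
    rw [g, ← hM', h2, hT, Finset.insert_erase hMS]


lemma disj_g {a b : ℕ} (ha : 1 ≤ a) (hb : 1 ≤ b) (hab : a ≠ b) (A B : Finset (Finset ℕ)) :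
    Disjoint (A.image (g a)) (B.image (g b)) := by
  rw [Finset.disjoint_left]
  intro S hSa hSb
  obtain ⟨T, _, rfl⟩ := Finset.mem_image.mp hSa
  obtain ⟨T', _, hTT'⟩ := Finset.mem_image.mp hSb
  obtain ⟨h1, h2⟩ := g_inj_eq hb ha hTT'
  rw [h2] at h1
  omega

lemma domF_eq {n i : ℕ} (hn : 4 ≤ n) (hi : 2 ≤ i) :
    domF n i = (domF (n - 1) (i - 1)).image (g 1) ∪ (domF (n - 2) (i - 1)).image (g 2)
      ∪ (domF (n - 3) (i - 1)).image (g 3) := by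
  ext S
  simp only [Finset.mem_union, Finset.mem_image]
  constructor
  · intro hS
    obtain ⟨a, ha1, ha3, T, hT, hSeq⟩ := decompose hn hS hi
    subst hSeq
    interval_cases a
    · exact Or.inl (Or.inl ⟨T, hT, rfl⟩)
    · exact Or.inl (Or.inr ⟨T, hT, rfl⟩)
    · exact Or.inr ⟨T, hT, rfl⟩
  · rintro ((⟨T, hT, rfl⟩ | ⟨T, hT, rfl⟩) | ⟨T, hT, rfl⟩)
    · exact g_mem_domF hn (by omega) (by omega) hi hT
    · exact g_mem_domF hn (by omega) (by omega) hi hT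
    · exact g_mem_domF hn (by omega) (by omega) hi hT

lemma domF_card {n : ℕ} (hn : 4 ≤ n) (i : ℕ) :
    (domF n i).card = (domF (n - 1) (i - 1)).card + (domF (n - 2) (i - 1)).card
      + (domF (n - 3) (i - 1)).card := by
  rcases Nat.lt_or_ge i 2 with hi | hi
  · interval_cases i
    · rw [domF_zero n (by omega), domF_zero (n - 1) (by omega),
        domF_zero (n - 2) (by omega), domF_zero (n - 3) (by omega)]
      simp
    · rw [domF_one hn, domF_zero (n - 1) (by omega),
        domF_zero (n - 2) (by omega), domF_zero (n - 3) (by omega)]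
      simp
  · have ginj : ∀ a : ℕ, 1 ≤ a → Function.Injective (g a) := fun a ha T T' h =>
      (g_inj_eq ha ha h).2
    rw [domF_eq hn hi,
      Finset.card_union_of_disjoint (Finset.disjoint_union_left.mpr
        ⟨disj_g (by omega) (by omega) (by omega) _ _, disj_g (by omega) (by omega) (by omega) _ _⟩),
      Finset.card_union_of_disjoint (disj_g (by omega) (by omega) (by omega) _ _),
      Finset.card_image_of_injective _ (ginj 1 (by omega)),
      Finset.card_image_of_injective _ (ginj 2 (by omega)),
      Finset.card_image_of_injective _ (ginj 3 (by omega))]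

lemma isDom_iff {n : ℕ} (S : Finset (ZMod n)) :
    isDomSet (cycleG n) S ↔ ∀ v : ZMod n, v ∈ S ∨ v + 1 ∈ S ∨ v + 2 ∈ S := by
  constructor
  · intro h v
    by_cases h1 : v + 1 ∈ S
    · exact Or.inr (Or.inl h1)
    · obtain ⟨u, hu, hadj⟩ := h (v + 1) h1
      obtain ⟨hne, h2 | h2⟩ := hadj
      · refine Or.inr (Or.inr ?_)
        have e : u = v + 2 := by rw [sub_eq_iff_eq_add] at h2; rw [h2]; ring
        rwa [← e]
      · refine Or.inl ?_
        have e : u = v := by rw [sub_eq_iff_eq_add] at h2; linear_combination -h2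
        rwa [← e]
  · intro h v hv
    rcases h (v - 1) with h1 | h1 | h1
    · refine ⟨v - 1, h1, fun he => hv (he ▸ h1), Or.inr (by ring)⟩
    · rw [show v - 1 + 1 = v by ring] at h1
      exact absurd h1 hv
    · rw [show v - 1 + 2 = v + 1 by ring] at h1
      refine ⟨v + 1, h1, fun he => hv (he ▸ h1), Or.inl (by ring)⟩

lemma domCount_eq_domF (n i : ℕ) (hn : 1 ≤ n) : domCount n i = (domF n i).card := by
  haveI : NeZero n := ⟨by omega⟩
  have key : ∀ S : Finset (ZMod n),
      (isDomSet (cycleG n) S ∧ S.card = i) ↔ S.image ZMod.val ∈ domF n i := by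
    intro S
    rw [mem_domF, isDom_iff]
    have hmemiff : ∀ k : ℕ, (k % n ∈ S.image ZMod.val ↔ (k : ZMod n) ∈ S) := by
      intro k
      constructor
      · intro hk
        obtain ⟨v, hv, hvk⟩ := Finset.mem_image.mp hk
        have e : v = (k : ZMod n) := by
          apply ZMod.val_injective
          rw [hvk, ZMod.val_natCast]
        rwa [← e]
      · intro hk
        have e : (ZMod.val ((k : ZMod n))) = k % n := ZMod.val_natCast n k
        exact e ▸ Finset.mem_image_of_mem _ hk
    constructor
    · rintro ⟨hdom, hcard⟩
      refine ⟨?_, ?_, ?_⟩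
      · intro x hx
        obtain ⟨v, _, rfl⟩ := Finset.mem_image.mp hx
        exact ZMod.val_lt v
      · intro k hk
        rcases hdom (k : ZMod n) with h | h | h
        · left
          have := (hmemiff k).mpr h
          rwa [Nat.mod_eq_of_lt hk] at this
        · exact Or.inr (Or.inl ((hmemiff (k + 1)).mpr (by push_cast; exact h)))
        · exact Or.inr (Or.inr ((hmemiff (k + 2)).mpr (by push_cast; exact h)))
      · rw [Finset.card_image_of_injective _ (ZMod.val_injective n), hcard]
    · rintro ⟨hb, hnd, hcard⟩
      have hvv : ∀ v : ZMod n, ((v.val : ℕ) : ZMod n) = v := fun v =>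
        ZMod.natCast_rightInverse v
      constructor
      · intro v
        rcases hnd v.val (ZMod.val_lt v) with h | h | h
        · left
          have := (hmemiff v.val).mp (by rwa [Nat.mod_eq_of_lt (ZMod.val_lt v)])
          rwa [hvv v] at this
        · right; left
          have := (hmemiff (v.val + 1)).mp h
          rw [show ((v.val + 1 : ℕ) : ZMod n) = v + 1 by push_cast [hvv v]; ring] at this
          exact this
        · right; right
          have := (hmemiff (v.val + 2)).mp h
          rw [show ((v.val + 2 : ℕ) : ZMod n) = v + 2 by push_cast [hvv v]; ring] at this
          exact this
      · rwa [Finset.card_image_of_injective _ (ZMod.val_injective n)] at hcard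
  rw [domCount, ← Nat.card_eq_finsetCard]
  apply Nat.card_congr
  refine Equiv.ofBijective (fun s => ⟨s.1.image ZMod.val, (key s.1).mp s.2⟩) ⟨?_, ?_⟩
  · rintro ⟨S, hS⟩ ⟨S', hS'⟩ h
    simp only [Subtype.mk.injEq] at h ⊢
    exact Finset.image_injective (ZMod.val_injective n) h
  · rintro ⟨T, hT⟩
    have hb : ∀ x ∈ T, x < n := (mem_domF.mp hT).1
    have him : (T.image (Nat.cast : ℕ → ZMod n)).image ZMod.val = T := by
      rw [Finset.image_image]
      calc T.image (ZMod.val ∘ (Nat.cast : ℕ → ZMod n)) = T.image id :=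
            Finset.image_congr (fun x hx => ZMod.val_cast_of_lt (hb x hx))
        _ = T := Finset.image_id
    exact ⟨⟨T.image Nat.cast, (key _).mpr (by rw [him]; exact hT)⟩, Subtype.ext him⟩

end DomRec

theorem domCount_recurrence (n : ℕ) (hn : 4 ≤ n) (i : ℕ) :
    domCount n i = domCount (n - 1) (i - 1) + domCount (n - 2) (i - 1)
      + domCount (n - 3) (i - 1) := by
  rw [DomRec.domCount_eq_domF n i (by omega),
    DomRec.domCount_eq_domF (n - 1) (i - 1) (by omega),
    DomRec.domCount_eq_domF (n - 2) (i - 1) (by omega),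
    DomRec.domCount_eq_domF (n - 3) (i - 1) (by omega)]
  exact DomRec.domF_card hn i
end

section
/- For every n ≥ 1, the cycle C_{3n} has exactly 3 dominating sets of cardinality n. -/
private lemma zmod3_cases : ∀ d : ZMod 3, d ≠ 0 → d = 1 ∨ d = 2 := by decide

theorem domCount_three_n (n : ℕ) (hn : 1 ≤ n) : domCount (3 * n) n = 3 := by
  haveI : NeZero (3 * n) := ⟨by omega⟩
  haveI : Fact (1 < 3 * n) := ⟨by omega⟩
  set f : ZMod (3 * n) →+* ZMod 3 := ZMod.castHom ⟨n, rfl⟩ (ZMod 3) with hfdef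
  have h1ne : (1 : ZMod (3 * n)) ≠ 0 := one_ne_zero
  have h2ne : (2 : ZMod (3 * n)) ≠ 0 := by
    intro h
    have h2 : ((2 : ℕ) : ZMod (3 * n)) = 0 := by exact_mod_cast h
    rw [ZMod.natCast_eq_zero_iff] at h2
    have := Nat.le_of_dvd (by norm_num) h2
    omega
  -- decomposition of elements in the same fiber of f
  have hdec : ∀ u v : ZMod (3 * n), f v = f u →
      ∃ k : ℕ, k < n ∧ v = u + ((3 * k : ℕ) : ZMod (3 * n)) := by
    intro u v h
    have h0 : f (v - u) = 0 := by rw [map_sub, h, sub_self]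
    rw [← ZMod.natCast_zmod_val (v - u), map_natCast,
      ZMod.natCast_eq_zero_iff] at h0
    obtain ⟨k, hk⟩ := h0
    have hlt : (v - u).val < 3 * n := ZMod.val_lt _
    refine ⟨k, by omega, ?_⟩
    have hvu : v - u = ((3 * k : ℕ) : ZMod (3 * n)) := by
      rw [← hk, ZMod.natCast_zmod_val]
    rw [← hvu]; ring
  have hmem : ∀ (u : ZMod (3 * n)) (k : ℕ),
      f (u + ((3 * k : ℕ) : ZMod (3 * n))) = f u := by
    intro u k
    have h3 : ((3 : ℕ) : ZMod 3) = 0 := by decide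
    rw [map_add, map_natCast, Nat.cast_mul, h3, zero_mul, add_zero]
  -- the fibers of f
  set fib : ZMod 3 → Finset (ZMod (3 * n)) :=
    fun r => Finset.univ.filter fun v => f v = r with hfibdef
  have hmemfib : ∀ (r : ZMod 3) (v : ZMod (3 * n)), v ∈ fib r ↔ f v = r := by
    intro r v; simp [hfibdef]
  have hx : ∀ r : ZMod 3, f ((r.val : ℕ) : ZMod (3 * n)) = r := by
    intro r; rw [map_natCast, ZMod.natCast_zmod_val]
  have hfibeq : ∀ r : ZMod 3, fib r = (Finset.univ : Finset (Fin n)).image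
      (fun k : Fin n => ((r.val : ℕ) : ZMod (3 * n)) + ((3 * (k : ℕ) : ℕ) : ZMod (3 * n))) := by
    intro r
    ext v
    rw [hmemfib]
    simp only [Finset.mem_image, Finset.mem_univ, true_and]
    constructor
    · intro h
      obtain ⟨k, hk, hv⟩ := hdec ((r.val : ℕ) : ZMod (3 * n)) v (by rw [hx r, h])
      exact ⟨⟨k, hk⟩, hv.symm⟩
    · rintro ⟨k, rfl⟩
      rw [hmem, hx]
  have hinj : ∀ r : ZMod 3, Function.Injective
      (fun k : Fin n => ((r.val : ℕ) : ZMod (3 * n)) + ((3 * (k : ℕ) : ℕ) : ZMod (3 * n))) := by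
    intro r k k' h
    simp only [add_right_inj] at h
    have h1 : ((3 * (k : ℕ) : ℕ) : ZMod (3 * n)).val = ((3 * (k' : ℕ) : ℕ) : ZMod (3 * n)).val := by
      rw [h]
    rw [ZMod.val_cast_of_lt (by omega), ZMod.val_cast_of_lt (by omega)] at h1
    have := k.2; have := k'.2
    exact Fin.ext (by omega)
  have hfibcard : ∀ r : ZMod 3, (fib r).card = n := by
    intro r
    rw [hfibeq r, Finset.card_image_of_injective _ (hinj r), Finset.card_univ,
      Fintype.card_fin]
  -- fibers are dominating sets
  have hfibdom : ∀ r : ZMod 3, isDomSet (cycleG (3 * n)) (fib r) := by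
    intro r v hv
    rw [hmemfib] at hv
    rcases zmod3_cases (f v - r) (fun h => hv (by rwa [sub_eq_zero] at h)) with h | h
    · refine ⟨v - 1, ?_, (⟨?_, Or.inr ?_⟩ : v - 1 ≠ v ∧ (v - 1 - v = 1 ∨ v - (v - 1) = 1))⟩
      · rw [hmemfib, map_sub, map_one, sub_eq_iff_eq_add.mp h]; ring
      · intro heq
        apply h1ne
        calc (1 : ZMod (3*n)) = v - (v - 1) := by ring
        _ = 0 := by rw [heq]; ring
      · ring
    · refine ⟨v + 1, ?_, (⟨?_, Or.inl ?_⟩ : v + 1 ≠ v ∧ (v + 1 - v = 1 ∨ v - (v + 1) = 1))⟩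
      · rw [hmemfib, map_add, map_one, sub_eq_iff_eq_add.mp h]
        have h3 : ∀ x : ZMod 3, 2 + x + 1 = x := by decide
        rw [h3]
      · intro heq
        apply h1ne
        calc (1 : ZMod (3*n)) = v + 1 - v := by ring
        _ = 0 := by rw [heq]; ring
      · ring
  -- generic 3-element set cardinality
  have card3 : ∀ a b c : ZMod (3 * n), a ≠ b → a ≠ c → b ≠ c →
      ({a, b, c} : Finset (ZMod (3 * n))).card = 3 := by
    intro a b c hab hac hbc
    rw [Finset.card_insert_of_notMem (by simp [hab, hac]),
      Finset.card_insert_of_notMem (by simp [hbc]), Finset.card_singleton]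
  -- hard direction: every dominating set of card n is a fiber
  have hhard : ∀ S : Finset (ZMod (3 * n)), isDomSet (cycleG (3 * n)) S → S.card = n →
      ∃ r : ZMod 3, S = fib r := by
    intro S hdom hcard
    set p : ZMod (3 * n) → ZMod (3 * n) → Prop :=
      fun u v => u = v - 1 ∨ u = v ∨ u = v + 1 with hpdef
    have hlow : ∀ v : ZMod (3 * n), 1 ≤ (S.filter (fun u => p u v)).card := by
      intro v
      rw [Nat.one_le_iff_ne_zero, ← Nat.pos_iff_ne_zero, Finset.card_pos]
      by_cases hv : v ∈ S
      · exact ⟨v, Finset.mem_filter.mpr ⟨hv, Or.inr (Or.inl rfl)⟩⟩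
      · obtain ⟨u, hu, hadj⟩ := hdom v hv
        obtain ⟨_, h1 | h1⟩ := (hadj : u ≠ v ∧ (u - v = 1 ∨ v - u = 1))
        · exact ⟨u, Finset.mem_filter.mpr ⟨hu, Or.inr (Or.inr (by rw [← h1]; ring))⟩⟩
        · exact ⟨u, Finset.mem_filter.mpr ⟨hu, Or.inl (by rw [← h1]; ring)⟩⟩
    have hsum : ∑ v : ZMod (3 * n), (S.filter (fun u => p u v)).card = 3 * n := by
      have step1 : ∀ v : ZMod (3 * n), (S.filter (fun u => p u v)).card
          = ∑ u ∈ S, if p u v then 1 else 0 := by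
        intro v; rw [Finset.card_filter]
      calc ∑ v : ZMod (3 * n), (S.filter (fun u => p u v)).card
          = ∑ v : ZMod (3 * n), ∑ u ∈ S, if p u v then 1 else 0 := by
            exact Finset.sum_congr rfl fun v _ => step1 v
        _ = ∑ u ∈ S, ∑ v : ZMod (3 * n), if p u v then 1 else 0 := Finset.sum_comm
        _ = ∑ u ∈ S, (Finset.univ.filter (fun v => p u v)).card := by
            exact Finset.sum_congr rfl fun u _ => (Finset.card_filter _ _).symm
        _ = ∑ u ∈ S, 3 := by
            refine Finset.sum_congr rfl fun u _ => ?_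
            have : Finset.univ.filter (fun v => p u v)
                = ({u + 1, u, u - 1} : Finset (ZMod (3 * n))) := by
              ext v
              simp only [Finset.mem_filter, Finset.mem_univ, true_and, hpdef,
                Finset.mem_insert, Finset.mem_singleton]
              constructor
              · rintro (h | h | h)
                · left; rw [h]; ring
                · right; left; rw [h]
                · right; right; rw [h]; ring
              · rintro (h | h | h)
                · left; rw [h]; ring
                · right; left; rw [h]
                · right; right; rw [h]; ring
            rw [this]
            refine card3 _ _ _ ?_ ?_ ?_
            · intro h; exact h1ne (by calc (1 : ZMod (3*n)) = u + 1 - u := by ring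
                _ = 0 := by rw [h]; ring)
            · intro h; exact h2ne (by calc (2 : ZMod (3*n)) = u + 1 - (u - 1) := by ring
                _ = 0 := by rw [h]; ring)
            · intro h; exact h1ne (by calc (1 : ZMod (3*n)) = u - (u - 1) := by ring
                _ = 0 := by rw [← h]; ring)
        _ = 3 * n := by rw [Finset.sum_const, hcard, smul_eq_mul, mul_comm]
    have hexact : ∀ v : ZMod (3 * n), (S.filter (fun u => p u v)).card = 1 := by
      by_contra hcon
      push_neg at hcon
      obtain ⟨v0, hv0⟩ := hcon
      have hlt : ∑ v : ZMod (3 * n), (1 : ℕ) < ∑ v : ZMod (3 * n), (S.filter (fun u => p u v)).card :=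
        Finset.sum_lt_sum (fun i _ => hlow i)
          ⟨v0, Finset.mem_univ _, lt_of_le_of_ne (hlow v0) (Ne.symm hv0)⟩
      rw [hsum, Finset.sum_const, Finset.card_univ, ZMod.card, smul_eq_mul, mul_one] at hlt
      omega
    -- the step: u ∈ S → u + 3 ∈ S
    have hstep : ∀ u ∈ S, u + 3 ∈ S := by
      intro u hu
      have h1 := hexact (u + 1)
      obtain ⟨a, ha⟩ := Finset.card_eq_one.mp h1
      have hua : u ∈ ({a} : Finset (ZMod (3 * n))) := by
        rw [← ha]; exact Finset.mem_filter.mpr ⟨hu, Or.inl (by ring)⟩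
      have hau : a = u := (Finset.mem_singleton.mp hua).symm
      have hnot1 : u + 1 ∉ S := by
        intro h
        have : u + 1 ∈ ({a} : Finset (ZMod (3 * n))) := by
          rw [← ha]; exact Finset.mem_filter.mpr ⟨h, Or.inr (Or.inl rfl)⟩
        rw [hau, Finset.mem_singleton] at this
        exact h1ne (by calc (1 : ZMod (3*n)) = u + 1 - u := by ring
          _ = 0 := by rw [this]; ring)
      have hnot2 : u + 2 ∉ S := by
        intro h
        have : u + 2 ∈ ({a} : Finset (ZMod (3 * n))) := by
          rw [← ha]; exact Finset.mem_filter.mpr ⟨h, Or.inr (Or.inr (by ring))⟩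
        rw [hau, Finset.mem_singleton] at this
        exact h2ne (by calc (2 : ZMod (3*n)) = u + 2 - u := by ring
          _ = 0 := by rw [this]; ring)
      have h2 := hexact (u + 2)
      have hne : (S.filter (fun x => p x (u + 2))).Nonempty := by
        rw [← Finset.card_pos, h2]; norm_num
      obtain ⟨b, hb⟩ := hne
      rw [Finset.mem_filter] at hb
      obtain ⟨hbS, hb1 | hb1 | hb1⟩ := hb
      · exfalso; apply hnot1; rw [← show b = u + 1 from by rw [hb1]; ring]; exact hbS
      · exfalso; apply hnot2; rw [← hb1]; exact hbS
      · rw [← show b = u + 3 from by rw [hb1]; ring]; exact hbS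
    have hS0 : S.Nonempty := Finset.card_pos.mp (by omega)
    obtain ⟨u0, hu0⟩ := hS0
    have hclo : ∀ k : ℕ, u0 + ((3 * k : ℕ) : ZMod (3 * n)) ∈ S := by
      intro k
      induction k with
      | zero => simpa using hu0
      | succ k ih =>
        have h := hstep _ ih
        have heq : u0 + ((3 * (k + 1) : ℕ) : ZMod (3 * n))
            = u0 + ((3 * k : ℕ) : ZMod (3 * n)) + 3 := by push_cast; ring
        rw [heq]; exact h
    refine ⟨f u0, ?_⟩
    have hsub : fib (f u0) ⊆ S := by
      intro v hv
      rw [hmemfib] at hv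
      obtain ⟨k, _, rfl⟩ := hdec u0 v hv
      exact hclo k
    exact (Finset.eq_of_subset_of_card_le hsub (by rw [hcard, hfibcard])).symm
  -- conclude
  have hbij : Function.Bijective (fun r : ZMod 3 =>
      (⟨fib r, hfibdom r, hfibcard r⟩ :
        {S : Finset (ZMod (3 * n)) // isDomSet (cycleG (3 * n)) S ∧ S.card = n})) := by
    constructor
    · intro r r' h
      have h' : fib r = fib r' := congrArg Subtype.val h
      have hr : ((r.val : ℕ) : ZMod (3 * n)) ∈ fib r := (hmemfib r _).mpr (hx r)
      rw [h', hmemfib] at hr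
      rw [← hx r, hr]
    · rintro ⟨S, hd, hc⟩
      obtain ⟨r, hr⟩ := hhard S hd hc
      exact ⟨r, Subtype.ext hr.symm⟩
  unfold domCount
  rw [Nat.card_congr (Equiv.ofBijective _ hbij).symm, Nat.card_zmod]
end

section
/- For every n ≥ 1, the number of dominating sets of the cycle C_{3n+2} of cardinality n+1 equals 3n+2. -/
/- ### Auxiliary development -/

instance instNZ (n : ℕ) : NeZero (3 * n + 2) := ⟨by omega⟩

/-- The `j`-th offset of the canonical dominating set: `0, 2, 5, 8, …, 3j-1, …`. -/
def offs (j : ℕ) : ℕ := if j = 0 then 0 else 3 * j - 1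

/-- The canonical dominating set starting at `a`. -/
def DS (n : ℕ) (a : ZMod (3 * n + 2)) : Finset (ZMod (3 * n + 2)) :=
  (Finset.range (n + 1)).image (fun j => a + (offs j : ZMod (3 * n + 2)))

lemma cast_injj {n : ℕ} {x y : ℕ} (hx : x < 3 * n + 2) (hy : y < 3 * n + 2)
    (h : (x : ZMod (3 * n + 2)) = y) : x = y := by
  have := congrArg ZMod.val h
  rwa [ZMod.val_cast_of_lt hx, ZMod.val_cast_of_lt hy] at this

lemma offs_lt {n j : ℕ} (hj : j ≤ n) : offs j < 3 * n + 2 := by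
  unfold offs; split <;> omega

lemma mem_DS {n : ℕ} {a x : ZMod (3 * n + 2)} :
    x ∈ DS n a ↔ ∃ j ≤ n, x = a + (offs j : ZMod (3 * n + 2)) := by
  constructor
  · intro hx
    obtain ⟨j, hj, rfl⟩ := Finset.mem_image.mp hx
    exact ⟨j, by simpa [Nat.lt_succ_iff] using hj, rfl⟩
  · rintro ⟨j, hj, rfl⟩
    exact Finset.mem_image.mpr ⟨j, Finset.mem_range.mpr (by omega), rfl⟩

lemma card_DS {n : ℕ} (a : ZMod (3 * n + 2)) : (DS n a).card = n + 1 := by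
  rw [DS, Finset.card_image_of_injOn, Finset.card_range]
  intro j hj k hk h
  simp only [Finset.coe_range, Set.mem_Iio, Nat.lt_succ_iff] at hj hk
  have h2 : (offs j : ZMod (3 * n + 2)) = offs k := by
    exact add_left_cancel h
  have := cast_injj (offs_lt hj) (offs_lt hk) h2
  unfold offs at this; split at this <;> split at this <;> omega

lemma self_mem_DS {n : ℕ} (a : ZMod (3 * n + 2)) : a ∈ DS n a := by
  refine mem_DS.mpr ⟨0, Nat.zero_le n, ?_⟩
  simp [offs]

lemma self_add_two_mem_DS {n : ℕ} (hn : 1 ≤ n) (a : ZMod (3 * n + 2)) :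
    a + 2 ∈ DS n a := by
  refine mem_DS.mpr ⟨1, hn, ?_⟩
  norm_num [offs]

lemma DS_gap {n : ℕ} (hn : 1 ≤ n) {a x : ZMod (3 * n + 2)} (hx : x ∈ DS n a)
    (hx2 : x + 2 ∈ DS n a) : x = a := by
  obtain ⟨j, hj, rfl⟩ := mem_DS.mp hx
  obtain ⟨k, hk, hk2⟩ := mem_DS.mp hx2
  have h2 : ((offs j + 2 : ℕ) : ZMod (3 * n + 2)) = ((offs k : ℕ) : ZMod (3 * n + 2)) := by
    rw [add_assoc] at hk2
    have h := add_left_cancel hk2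
    push_cast
    linear_combination h
  have hlt : offs j + 2 < 3 * n + 2 := by
    unfold offs; split <;> omega
  have heq := cast_injj hlt (offs_lt hk) h2
  have hj0 : j = 0 := by
    unfold offs at heq; split at heq <;> split at heq <;> omega
  subst hj0
  simp [offs]

lemma domDS {n : ℕ} (hn : 1 ≤ n) (a : ZMod (3 * n + 2)) :
    isDomSet (cycleG (3 * n + 2)) (DS n a) := by
  intro v hv
  set t := (v - a).val with ht
  have htlt : t < 3 * n + 2 := ZMod.val_lt _
  have hv_eq : v = a + (t : ZMod (3 * n + 2)) := by
    rw [ht, ZMod.natCast_val, ZMod.cast_id]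
    ring
  have hone : (1 : ZMod (3 * n + 2)) ≠ 0 := by
    haveI : Fact (1 < 3 * n + 2) := ⟨by omega⟩
    exact one_ne_zero
  by_cases h0 : t = 0
  · exfalso; apply hv; rw [hv_eq, h0]; simpa using self_mem_DS a
  by_cases hbig : t = 3 * n + 1
  · -- v = a - 1, dominated by a
    refine ⟨a, self_mem_DS a, ?_, ?_⟩
    · intro hav
      apply hv; rw [← hav]; exact self_mem_DS a
    · left
      rw [hv_eq, hbig]
      have hm : ((3 * n + 2 : ℕ) : ZMod (3 * n + 2)) = 0 := ZMod.natCast_self _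
      push_cast at hm ⊢
      linear_combination -hm
  · -- 1 ≤ t ≤ 3n
    have h1t : 1 ≤ t ∧ t ≤ 3 * n := ⟨by omega, by omega⟩
    set j := (t + 2) / 3 with hjdef
    have hj1 : 1 ≤ j := by omega
    have hjn : j ≤ n := by omega
    have hcases : t = 3 * j - 2 ∨ t = 3 * j - 1 ∨ t = 3 * j := by omega
    have hoffs : offs j = 3 * j - 1 := by unfold offs; split <;> omega
    have humem : a + ((offs j : ℕ) : ZMod (3 * n + 2)) ∈ DS n a :=
      mem_DS.mpr ⟨j, hjn, rfl⟩
    rcases hcases with hc | hc | hc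
    · -- t = offs j - 1, so u - v = 1
      refine ⟨_, humem, ?_, Or.inl ?_⟩
      · intro huv
        have h2 : ((offs j : ℕ) : ZMod (3 * n + 2)) = ((t : ℕ) : ZMod (3 * n + 2)) := by
          rw [hv_eq] at huv; exact add_left_cancel huv
        have := cast_injj (offs_lt hjn) htlt h2
        omega
      · rw [hv_eq]
        have hto : offs j = t + 1 := by omega
        rw [hto]
        push_cast
        ring
    · -- v ∈ DS, contradiction
      exfalso; apply hv
      rw [hv_eq]
      refine mem_DS.mpr ⟨j, hjn, ?_⟩
      congr 1
      congr 1
      omega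
    · -- t = offs j + 1, so v - u = 1
      refine ⟨_, humem, ?_, Or.inr ?_⟩
      · intro huv
        have h2 : ((offs j : ℕ) : ZMod (3 * n + 2)) = ((t : ℕ) : ZMod (3 * n + 2)) := by
          rw [hv_eq] at huv; exact add_left_cancel huv
        have := cast_injj (offs_lt hjn) htlt h2
        omega
      · rw [hv_eq]
        have hto : t = offs j + 1 := by omega
        rw [hto]
        push_cast
        ring

lemma exists_DS {n : ℕ} (hn : 1 ≤ n) {S : Finset (ZMod (3 * n + 2))}
    (hdom : isDomSet (cycleG (3 * n + 2)) S) (hcard : S.card = n + 1) :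
    ∃ a, S = DS n a := by
  classical
  haveI : Fact (1 < 3 * n + 2) := ⟨by omega⟩
  set g : ZMod (3 * n + 2) → ℕ := fun v =>
    (if v - 1 ∈ S then 1 else 0) + (if v ∈ S then 1 else 0) + (if v + 1 ∈ S then 1 else 0)
    with hg
  have hcardS : ∀ f : ZMod (3 * n + 2) → ZMod (3 * n + 2), Function.Bijective f →
      (∑ v : ZMod (3 * n + 2), if f v ∈ S then 1 else 0) = n + 1 := by
    intro f hf
    rw [Fintype.sum_bijective f hf _ (fun v => if v ∈ S then (1:ℕ) else 0) (fun x => rfl)]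
    rw [Finset.sum_ite_mem, Finset.univ_inter, Finset.sum_const, hcard]
    simp
  have hsum : ∑ v, g v = 3 * n + 3 := by
    simp only [hg]
    rw [Finset.sum_add_distrib, Finset.sum_add_distrib]
    have h1 := hcardS (fun v => v - 1) (Equiv.subRight (1 : ZMod (3 * n + 2))).bijective
    have h2 := hcardS (fun v => v) Function.bijective_id
    have h3 := hcardS (fun v => v + 1) (Equiv.addRight (1 : ZMod (3 * n + 2))).bijective
    rw [h1, h2, h3]; ring
  have hge : ∀ v, 1 ≤ g v := by
    intro v
    by_cases hvS : v ∈ S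
    · have : (if v ∈ S then (1:ℕ) else 0) = 1 := if_pos hvS
      simp only [hg]; rw [this]; omega
    · obtain ⟨u, huS, hne, hadj⟩ := hdom v hvS
      rcases hadj with h | h
      · have hu : u = v + 1 := by linear_combination h
        have : (if v + 1 ∈ S then (1:ℕ) else 0) = 1 := if_pos (hu ▸ huS)
        simp only [hg]; rw [this]; omega
      · have hu : u = v - 1 := by linear_combination -h
        have : (if v - 1 ∈ S then (1:ℕ) else 0) = 1 := if_pos (hu ▸ huS)
        simp only [hg]; rw [this]; omega
  have hcardU : Fintype.card (ZMod (3 * n + 2)) = 3 * n + 2 := ZMod.card _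
  -- there is a vertex with g ≥ 2
  obtain ⟨w, hw2⟩ : ∃ w, 2 ≤ g w := by
    by_contra hcon
    push_neg at hcon
    have : ∑ v, g v ≤ ∑ _v : ZMod (3 * n + 2), 1 :=
      Finset.sum_le_sum (fun v _ => by have := hcon v; omega)
    rw [hsum] at this
    simp [hcardU] at this
  -- all other vertices have g = 1
  have hone : ∀ v, v ≠ w → g v = 1 := by
    intro v hvw
    by_contra hcon
    have hv2 : 2 ≤ g v := by have := hge v; omega
    have hwu : w ∈ (Finset.univ : Finset (ZMod (3 * n + 2))) := Finset.mem_univ _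
    have hvu : v ∈ Finset.univ.erase w := Finset.mem_erase.mpr ⟨hvw, Finset.mem_univ _⟩
    have e1 : ∑ x ∈ Finset.univ, g x = g w + ∑ x ∈ Finset.univ.erase w, g x :=
      (Finset.add_sum_erase _ g hwu).symm
    have e2 : ∑ x ∈ Finset.univ.erase w, g x
        = g v + ∑ x ∈ (Finset.univ.erase w).erase v, g x :=
      (Finset.add_sum_erase _ g hvu).symm
    have hlb : ((Finset.univ.erase w).erase v).card
        ≤ ∑ x ∈ (Finset.univ.erase w).erase v, g x := by
      calc ((Finset.univ.erase w).erase v).card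
          = ∑ _x ∈ (Finset.univ.erase w).erase v, 1 := by simp
        _ ≤ _ := Finset.sum_le_sum (fun x _ => hge x)
    have hc1 : (Finset.univ.erase w : Finset (ZMod (3 * n + 2))).card = 3 * n + 1 := by
      rw [Finset.card_erase_of_mem hwu, Finset.card_univ, hcardU]
      omega
    have hc2 : ((Finset.univ.erase w).erase v).card = 3 * n := by
      rw [Finset.card_erase_of_mem hvu, hc1]
      omega
    rw [hsum] at e1
    omega
  have hwone : g w = 2 := by
    have e1 : ∑ x ∈ Finset.univ, g x = g w + ∑ x ∈ Finset.univ.erase w, g x :=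
      (Finset.add_sum_erase _ g (Finset.mem_univ w)).symm
    have hub : ∑ x ∈ Finset.univ.erase w, g x = (Finset.univ.erase w).card := by
      rw [Finset.sum_congr rfl (fun x hx => hone x (Finset.mem_erase.mp hx).1)]
      simp
    have hc1 : (Finset.univ.erase w : Finset (ZMod (3 * n + 2))).card = 3 * n + 1 := by
      rw [Finset.card_erase_of_mem (Finset.mem_univ w), Finset.card_univ, hcardU]
      omega
    rw [hsum, hub, hc1] at e1
    omega
  -- no two consecutive elements of S
  have hcons : ∀ x : ZMod (3 * n + 2), x ∈ S → x + 1 ∈ S → False := by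
    intro x hx hx1
    have hgx : 2 ≤ g x := by
      have h1 : (if x ∈ S then (1:ℕ) else 0) = 1 := if_pos hx
      have h2 : (if x + 1 ∈ S then (1:ℕ) else 0) = 1 := if_pos hx1
      simp only [hg]; rw [h1, h2]; omega
    have hgx1 : 2 ≤ g (x + 1) := by
      have hsub : x + 1 - 1 = x := by ring
      have h1 : (if x + 1 - 1 ∈ S then (1:ℕ) else 0) = 1 := by rw [hsub]; exact if_pos hx
      have h2 : (if x + 1 ∈ S then (1:ℕ) else 0) = 1 := if_pos hx1
      simp only [hg]; rw [h1, h2]; omega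
    have hxx : x ≠ x + 1 := by
      intro h
      have : (1 : ZMod (3 * n + 2)) = 0 := by linear_combination -h
      exact one_ne_zero this
    by_cases hxw : x = w
    · have := hone (x + 1) (by rw [← hxw]; exact fun h => hxx h.symm)
      omega
    · have := hone x hxw
      omega
  -- structure at w : w ∉ S, w - 1 ∈ S, w + 1 ∈ S
  have hwS : w ∉ S := by
    intro hwS
    have h1 : w - 1 ∉ S := by
      intro h; exact hcons (w - 1) h (by rw [sub_add_cancel]; exact hwS)
    have h2 : w + 1 ∉ S := fun h => hcons w hwS h
    have e1 : (if w - 1 ∈ S then (1:ℕ) else 0) = 0 := if_neg h1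
    have e2 : (if w ∈ S then (1:ℕ) else 0) = 1 := if_pos hwS
    have e3 : (if w + 1 ∈ S then (1:ℕ) else 0) = 0 := if_neg h2
    simp only [hg] at hwone; rw [e1, e2, e3] at hwone; omega
  have hwm : w - 1 ∈ S ∧ w + 1 ∈ S := by
    have e2 : (if w ∈ S then (1:ℕ) else 0) = 0 := if_neg hwS
    by_cases h1 : w - 1 ∈ S <;> by_cases h3 : w + 1 ∈ S
    · exact ⟨h1, h3⟩
    all_goals {
      exfalso
      simp only [hg] at hwone
      rw [e2] at hwone
      simp [h1, h3] at hwone }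
  set a := w - 1 with hadef
  have haS : a ∈ S := hwm.1
  have ha2S : a + 2 ∈ S := by
    have : a + 2 = w + 1 := by rw [hadef]; ring
    rw [this]; exact hwm.2
  have huniq : ∀ b ∈ S, b + 2 ∈ S → b = a := by
    intro b hb hb2
    have hsub : b + 1 - 1 = b := by ring
    have hadd : b + 1 + 1 = b + 2 := by ring
    have hgb : 2 ≤ g (b + 1) := by
      have h1 : (if b + 1 - 1 ∈ S then (1:ℕ) else 0) = 1 := by rw [hsub]; exact if_pos hb
      have h3 : (if b + 1 + 1 ∈ S then (1:ℕ) else 0) = 1 := by rw [hadd]; exact if_pos hb2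
      simp only [hg]; rw [h1, h3]; omega
    have hbw : b + 1 = w := by
      by_contra hcon
      have := hone (b + 1) hcon
      omega
    rw [hadef, ← hbw]; ring
  -- the chain of elements a + (3j+2)
  have hchain : ∀ j, j < n → a + ((3 * j + 2 : ℕ) : ZMod (3 * n + 2)) ∈ S := by
    intro j
    induction j with
    | zero =>
      intro _
      have : ((3 * 0 + 2 : ℕ) : ZMod (3 * n + 2)) = 2 := by norm_num
      rw [this]; exact ha2S
    | succ k ih =>
      intro hk
      have hb := ih (by omega)
      set b := a + ((3 * k + 2 : ℕ) : ZMod (3 * n + 2)) with hbdef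
      have hb1 : b + 1 ∉ S := fun h => hcons b hb h
      have hb2 : b + 2 ∉ S := by
        intro h
        have hba := huniq b hb h
        have hz : ((3 * k + 2 : ℕ) : ZMod (3 * n + 2)) = ((0 : ℕ) : ZMod (3 * n + 2)) := by
          push_cast
          have : a + ((3 * k + 2 : ℕ) : ZMod (3 * n + 2)) = a + 0 := by
            rw [add_zero]; exact hba
          have := add_left_cancel this
          push_cast at this
          linear_combination this
        have := cast_injj (by omega) (by omega) hz
        omega
      obtain ⟨u, huS, hne, hadj⟩ := hdom (b + 2) hb2
      rcases hadj with h | h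
      · have hu : u = b + 3 := by linear_combination h
        have : a + ((3 * (k + 1) + 2 : ℕ) : ZMod (3 * n + 2)) = b + 3 := by
          rw [hbdef]; push_cast; ring
        rw [this, ← hu]; exact huS
      · exfalso
        have hu : u = b + 1 := by linear_combination -h
        exact hb1 (hu ▸ huS)
  -- conclude S = DS n a
  refine ⟨a, ?_⟩
  have hsub : DS n a ⊆ S := by
    intro x hx
    obtain ⟨j, hj, rfl⟩ := mem_DS.mp hx
    by_cases hj0 : j = 0
    · subst hj0
      simpa [offs] using haS
    · have hoj : offs j = 3 * (j - 1) + 2 := by unfold offs; split <;> omega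
      rw [hoj]
      exact hchain (j - 1) (by omega)
  exact (Finset.eq_of_subset_of_card_le hsub (by rw [hcard, card_DS])).symm

theorem domCount_three_n_add_two (n : ℕ) (hn : 1 ≤ n) :
    domCount (3 * n + 2) (n + 1) = 3 * n + 2 := by
  have key : Function.Bijective (fun a : ZMod (3 * n + 2) =>
      (⟨DS n a, domDS hn a, card_DS a⟩ :
        {S : Finset (ZMod (3 * n + 2)) //
          isDomSet (cycleG (3 * n + 2)) S ∧ S.card = n + 1})) := by
    constructor
    · intro a b hab
      have h : DS n a = DS n b := congrArg Subtype.val hab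
      have ha : a ∈ DS n b := h ▸ self_mem_DS a
      have ha2 : a + 2 ∈ DS n b := h ▸ self_add_two_mem_DS hn a
      exact DS_gap hn ha ha2
    · rintro ⟨S, hdom, hcard⟩
      obtain ⟨a, rfl⟩ := exists_DS hn hdom hcard
      exact ⟨a, rfl⟩
  rw [domCount, ← Nat.card_eq_of_bijective _ key, Nat.card_zmod]
end

section
/- For every n ≥ 1, the number of dominating sets of the cycle C_{3n+1} of cardinality n+1 equals (n(3n+7)+2)/2. -/
open Finset

namespace DomAux

/-- step distance to next element of S (1, 2, or 3) -/
def stepd {m : ℕ} (S : Finset (ZMod m)) (v : ZMod m) : ℕ :=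
  if v+1 ∈ S then 1 else if v+2 ∈ S then 2 else 3

def traj {m : ℕ} (S : Finset (ZMod m)) (a : ZMod m) : ℕ → ZMod m
  | 0 => a
  | k+1 => traj S a k + (stepd S (traj S a k) : ZMod m)

def psum {m : ℕ} (S : Finset (ZMod m)) (a : ZMod m) : ℕ → ℕ
  | 0 => 0
  | k+1 => psum S a k + stepd S (traj S a k)

variable {m : ℕ} {S : Finset (ZMod m)} {a : ZMod m}

lemma roundtrip [NeZero m] (x : ZMod m) : ((x.val : ℕ) : ZMod m) = x :=
  ZMod.natCast_rightInverse x

lemma cast_inj_of_lt [NeZero m] {j1 j2 : ℕ} (h1 : j1 < m) (h2 : j2 < m)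
    (h : (j1 : ZMod m) = j2) : j1 = j2 := by
  have := congrArg ZMod.val h
  rwa [ZMod.val_cast_of_lt h1, ZMod.val_cast_of_lt h2] at this

lemma mem_off [NeZero m] {O : Finset ℕ} (hO : ∀ o ∈ O, o < m) (a x : ZMod m) :
    x ∈ O.image (fun o : ℕ => a + (o:ZMod m)) ↔ (x - a).val ∈ O := by
  simp only [mem_image]
  constructor
  · rintro ⟨o, ho, rfl⟩
    simpa [ZMod.val_cast_of_lt (hO o ho)] using ho
  · intro h
    exact ⟨(x-a).val, h, by rw [roundtrip]; ring⟩

lemma stepd_bounds (v : ZMod m) : 1 ≤ stepd S v ∧ stepd S v ≤ 3 := by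
  unfold stepd; split_ifs <;> omega

/-- window condition -/
def wcond (S : Finset (ZMod m)) : Prop := ∀ v : ZMod m, v ∈ S ∨ v + 1 ∈ S ∨ v - 1 ∈ S

lemma stepd_mem (hC : wcond S) (v : ZMod m) (hv : v ∈ S) : v + (stepd S v : ZMod m) ∈ S := by
  unfold stepd
  split_ifs with h1 h2
  · simpa using h1
  · push_cast; simpa [add_assoc, one_add_one_eq_two] using h2
  · rcases hC (v+2) with h | h | h
    · exact absurd h h2
    · have he : v + ((3:ℕ) : ZMod m) = v + 2 + 1 := by push_cast; ring
      rwa [he]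
    · have he : v + 2 - 1 = v + 1 := by ring
      rw [he] at h
      exact absurd h h1

lemma stepd_mid (v : ZMod m) {e : ℕ} (he1 : 1 ≤ e) (he2 : e < stepd S v) :
    v + (e : ZMod m) ∉ S := by
  unfold stepd at he2
  split_ifs at he2 with h1 h2
  · omega
  · interval_cases e
    · simpa using h1
  · interval_cases e
    · simpa using h1
    · push_cast; simpa [one_add_one_eq_two] using h2

lemma traj_mem (hC : wcond S) (ha : a ∈ S) : ∀ k, traj S a k ∈ S
  | 0 => ha
  | k+1 => stepd_mem hC _ (traj_mem hC ha k)

lemma traj_eq : ∀ k, traj S a k = a + (psum S a k : ZMod m)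
  | 0 => by simp [traj, psum]
  | k+1 => by
      rw [traj, psum, traj_eq k]
      push_cast
      ring

lemma psum_step (k : ℕ) : psum S a (k+1) = psum S a k + stepd S (traj S a k) := rfl

lemma psum_mono : ∀ {k l : ℕ}, k < l → psum S a k < psum S a l := by
  intro k l h
  induction l with
  | zero => omega
  | succ l ih =>
    rw [psum_step]
    have := (stepd_bounds (S := S) (traj S a l)).1
    rcases Nat.lt_succ_iff_lt_or_eq.1 h with h' | rfl
    · have := ih h'; omega
    · omega

lemma psum_le (k : ℕ) : psum S a k ≤ 3 * k := by
  induction k with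
  | zero => simp [psum]
  | succ k ih =>
    rw [psum_step]
    have := (stepd_bounds (S := S) (traj S a k)).2
    omega

lemma psum_ge (k : ℕ) : k ≤ psum S a k := by
  induction k with
  | zero => simp [psum]
  | succ k ih =>
    rw [psum_step]
    have := (stepd_bounds (S := S) (traj S a k)).1
    omega

lemma coverage (hC : wcond S) (ha : a ∈ S) :
    ∀ k, ∀ j, j < psum S a k → (∀ l, l < k → psum S a l ≠ j) → a + (j : ZMod m) ∉ S := by
  intro k
  induction k with
  | zero => simp [psum]
  | succ k ih =>
    intro j hj hne
    by_cases h : j < psum S a k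
    · exact ih j h (fun l hl => hne l (by omega))
    · push_neg at h
      have hne' : psum S a k ≠ j := hne k (by omega)
      set e := j - psum S a k with hedef
      have he1 : 1 ≤ e := by omega
      have he2 : e < stepd S (traj S a k) := by
        rw [psum_step] at hj; omega
      have hj' : j = psum S a k + e := by omega
      have : a + (j : ZMod m) = traj S a k + (e : ZMod m) := by
        rw [traj_eq, hj']; push_cast; ring
      rw [this]
      exact stepd_mid _ he1 he2

end DomAux

namespace DomAux
open Finset
variable {m : ℕ} {S : Finset (ZMod m)} {a : ZMod m}

lemma psum_inj_on [NeZero m] {K : ℕ} (hK' : ∀ l, l < K → psum S a l < m) :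
    Set.InjOn (fun k => a + (psum S a k : ZMod m)) ↑(range K) := by
  intro k1 h1 k2 h2 h
  simp only [coe_range, Set.mem_Iio] at h1 h2
  have h' : psum S a k1 = psum S a k2 := by
    have := add_left_cancel h
    exact cast_inj_of_lt (hK' _ h1) (hK' _ h2) this
  rcases lt_trichotomy k1 k2 with hlt | heq | hgt
  · exact absurd h' (Nat.ne_of_lt (psum_mono hlt))
  · exact heq
  · exact absurd h'.symm (Nat.ne_of_lt (psum_mono hgt))

lemma cycle_struct [NeZero m] (hC : wcond S) (ha : a ∈ S) :
    psum S a S.card = m ∧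
      S = (range S.card).image (fun k => a + (psum S a k : ZMod m)) := by
  have hm : 0 < m := Nat.pos_of_ne_zero (NeZero.ne m)
  have hex : ∃ k, m ≤ psum S a k := ⟨m, psum_ge m⟩
  set K := Nat.find hex with hKdef
  have hK : m ≤ psum S a K := Nat.find_spec hex
  have hK' : ∀ l, l < K → psum S a l < m := by
    intro l hl
    have := Nat.find_min hex hl
    omega
  -- image of range K is inside S
  have hsub : (range K).image (fun k => a + (psum S a k : ZMod m)) ⊆ S := by
    intro x hx
    simp only [mem_image, mem_range] at hx
    obtain ⟨k, _, rfl⟩ := hx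
    rw [← traj_eq]
    exact traj_mem hC ha k
  have hcardim : ((range K).image (fun k => a + (psum S a k : ZMod m))).card = K := by
    rw [card_image_of_injOn (psum_inj_on hK'), card_range]
  -- psum K = m
  have hKm : psum S a K = m := by
    by_contra hne
    have hmlt : m < psum S a K := by omega
    have := coverage hC ha K m hmlt (fun l hl => by have := hK' l hl; omega)
    rw [ZMod.natCast_self, add_zero] at this
    exact this ha
  -- S ⊆ image
  have hsub2 : S ⊆ (range K).image (fun k => a + (psum S a k : ZMod m)) := by
    intro w hw
    have hj : (w - a).val < m := ZMod.val_lt _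
    by_cases hex2 : ∃ l, l < K ∧ psum S a l = (w - a).val
    · obtain ⟨l, hl, hpl⟩ := hex2
      simp only [mem_image, mem_range]
      exact ⟨l, hl, by rw [hpl, roundtrip]; ring⟩
    · push_neg at hex2
      have := coverage hC ha K (w - a).val (by omega) (fun l hl => hex2 l hl)
      rw [roundtrip] at this
      have hwa : a + (w - a) = w := by ring
      rw [hwa] at this
      exact absurd hw this
  have hSeq : S = (range K).image (fun k => a + (psum S a k : ZMod m)) :=
    Finset.Subset.antisymm hsub2 hsub
  have hcard : S.card = K := by rw [hSeq, hcardim]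
  rw [hcard]
  exact ⟨hKm, hSeq⟩

end DomAux

namespace DomAux
open Finset

instance instNZ (n : ℕ) : NeZero (3*n+1) := ⟨by omega⟩

lemma modm {m : ℕ} (hm : 0 < m) {x : ℕ} (h : x < 2*m) :
    x % m = if x < m then x else x - m := by
  split_ifs with h'
  · exact Nat.mod_eq_of_lt h'
  · rw [Nat.mod_eq_sub_mod (by omega), Nat.mod_eq_of_lt (by omega)]

lemma shift_val {m : ℕ} [NeZero m] (x : ZMod m) (c : ℕ) (hc : c < m) :
    (x + (c : ZMod m)).val = (x.val + c) % m := by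
  rw [ZMod.val_add, ZMod.val_cast_of_lt hc]

def OA (n : ℕ) : Finset ℕ := insert 0 ((range n).image fun i => 3*i+1)

def OB (n t : ℕ) : Finset ℕ :=
  insert 0 ((range n).image fun i => if i ≤ t then 3*i+2 else 3*i+1)

lemma mem_OA {n u : ℕ} (hn : 1 ≤ n) : u ∈ OA n ↔ u = 0 ∨ (u % 3 = 1 ∧ u ≤ 3*n-2) := by
  simp only [OA, mem_insert, mem_image, mem_range]
  constructor
  · rintro (rfl | ⟨i, hi, rfl⟩)
    · left; rfl
    · right; omega
  · rintro (rfl | ⟨h1, h2⟩)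
    · left; rfl
    · exact Or.inr ⟨u/3, by omega, by omega⟩

lemma mem_OB {n t u : ℕ} (hn : 1 ≤ n) (ht : t < n) :
    u ∈ OB n t ↔ u = 0 ∨ (u % 3 = 2 ∧ u ≤ 3*t+2) ∨ (u % 3 = 1 ∧ 3*t+4 ≤ u ∧ u ≤ 3*n-2) := by
  simp only [OB, mem_insert, mem_image, mem_range]
  constructor
  · rintro (rfl | ⟨i, hi, rfl⟩)
    · left; rfl
    · split_ifs with h <;> omega
  · rintro (rfl | ⟨h1, h2⟩ | ⟨h1, h2, h3⟩)
    · left; rfl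
    · refine Or.inr ⟨u/3, by omega, ?_⟩
      rw [if_pos (by omega)]; omega
    · refine Or.inr ⟨u/3, by omega, ?_⟩
      rw [if_neg (by omega)]; omega

lemma OA_lt {n : ℕ} (hn : 1 ≤ n) : ∀ o ∈ OA n, o < 3*n+1 := by
  intro o ho; rw [mem_OA hn] at ho; omega

lemma OB_lt {n t : ℕ} (hn : 1 ≤ n) (ht : t < n) : ∀ o ∈ OB n t, o < 3*n+1 := by
  intro o ho; rw [mem_OB hn ht] at ho; omega

lemma OA_card {n : ℕ} : (OA n).card = n + 1 := by
  rw [OA, card_insert_of_notMem (by simp), card_image_of_injOn ?_, card_range]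
  intro i _ j _ h
  dsimp at h
  omega

lemma OB_card {n t : ℕ} : (OB n t).card = n + 1 := by
  rw [OB, card_insert_of_notMem ?_, card_image_of_injOn ?_, card_range]
  · intro i hi j hj h
    simp only [coe_range, Set.mem_Iio] at hi hj
    dsimp at h
    split_ifs at h <;> omega
  · intro h
    simp only [mem_image, mem_range] at h
    obtain ⟨i, hi, h⟩ := h
    split_ifs at h <;> omega

def SA (n : ℕ) (a : ZMod (3*n+1)) : Finset (ZMod (3*n+1)) :=
  (OA n).image (fun o : ℕ => a + (o : ZMod (3*n+1)))

def SB (n : ℕ) (a : ZMod (3*n+1)) (t : ℕ) : Finset (ZMod (3*n+1)) :=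
  (OB n t).image (fun o : ℕ => a + (o : ZMod (3*n+1)))

lemma mem_SA {n : ℕ} (hn : 1 ≤ n) (a x : ZMod (3*n+1)) :
    x ∈ SA n a ↔ (x - a).val ∈ OA n := mem_off (OA_lt hn) a x

lemma mem_SB {n t : ℕ} (hn : 1 ≤ n) (ht : t < n) (a x : ZMod (3*n+1)) :
    x ∈ SB n a t ↔ (x - a).val ∈ OB n t := mem_off (OB_lt hn ht) a x

lemma card_off {m : ℕ} [NeZero m] {O : Finset ℕ} (hO : ∀ o ∈ O, o < m) (a : ZMod m) :
    (O.image (fun o : ℕ => a + (o : ZMod m))).card = O.card := by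
  apply card_image_of_injOn
  intro o1 h1 o2 h2 h
  exact cast_inj_of_lt (hO o1 h1) (hO o2 h2) (add_left_cancel h)

lemma SA_card {n : ℕ} (hn : 1 ≤ n) (a : ZMod (3*n+1)) : (SA n a).card = n + 1 := by
  rw [SA, card_off (OA_lt hn), OA_card]

lemma SB_card {n t : ℕ} (hn : 1 ≤ n) (ht : t < n) (a : ZMod (3*n+1)) :
    (SB n a t).card = n + 1 := by
  rw [SB, card_off (OB_lt hn ht), OB_card]

/-- reduction of the window condition to arithmetic on offsets -/
lemma wcond_off {n : ℕ} (hn : 1 ≤ n) {O : Finset ℕ} (hO : ∀ o ∈ O, o < 3*n+1) (a : ZMod (3*n+1))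
    (hwin : ∀ u, u < 3*n+1 →
      u ∈ O ∨ (if u+1 < 3*n+1 then u+1 else u+1-(3*n+1)) ∈ O ∨
        (if u+3*n < 3*n+1 then u+3*n else u+3*n-(3*n+1)) ∈ O) :
    wcond (O.image (fun o : ℕ => a + (o : ZMod (3*n+1)))) := by
  intro v
  have hm0 : 0 < 3*n+1 := by omega
  rw [mem_off hO, mem_off hO, mem_off hO]
  have hu : (v - a).val < 3*n+1 := ZMod.val_lt _
  have hcast : ((3*n : ℕ) : ZMod (3*n+1)) = -1 := by
    have h0 : ((3*n+1 : ℕ) : ZMod (3*n+1)) = 0 := ZMod.natCast_self _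
    push_cast at h0 ⊢
    linear_combination h0
  have h1 : v + 1 - a = (v - a) + ((1:ℕ) : ZMod (3*n+1)) := by push_cast; ring
  have h2 : v - 1 - a = (v - a) + ((3*n : ℕ) : ZMod (3*n+1)) := by rw [hcast]; ring
  rw [h1, h2, shift_val _ 1 (by omega), shift_val _ (3*n) (by omega),
    modm hm0 (by omega), modm hm0 (by omega)]
  exact hwin _ hu

lemma wcond_SA {n : ℕ} (hn : 1 ≤ n) (a : ZMod (3*n+1)) : wcond (SA n a) := by
  apply wcond_off hn (OA_lt hn)
  intro u hu
  rw [mem_OA hn, mem_OA hn, mem_OA hn]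
  split_ifs <;> omega

lemma wcond_SB {n t : ℕ} (hn : 1 ≤ n) (ht : t < n) (a : ZMod (3*n+1)) : wcond (SB n a t) := by
  apply wcond_off hn (OB_lt hn ht)
  intro u hu
  rw [mem_OB hn ht, mem_OB hn ht, mem_OB hn ht]
  split_ifs <;> omega

end DomAux

namespace DomAux
open Finset

lemma psum_eq_sum {m : ℕ} (S : Finset (ZMod m)) (a : ZMod m) (k : ℕ) :
    psum S a k = ∑ l ∈ range k, stepd S (traj S a l) := by
  induction k with
  | zero => simp [psum]
  | succ k ih => rw [psum_step, Finset.sum_range_succ, ih]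

lemma sum_all_three {N : ℕ} {f : ℕ → ℕ} (hub : ∀ k, k < N → f k ≤ 3)
    (hs : ∑ k ∈ range N, f k = 3*N) : ∀ k, k < N → f k = 3 := by
  intro k hk
  by_contra hk3
  have hlt : ∑ k ∈ range N, f k < ∑ k ∈ range N, 3 :=
    Finset.sum_lt_sum (fun i hi => hub i (mem_range.1 hi))
      ⟨k, mem_range.2 hk, by have := hub k hk; omega⟩
  rw [Finset.sum_const, card_range, smul_eq_mul] at hlt
  omega

lemma sum_classify {N : ℕ} {f : ℕ → ℕ} (hN : 1 ≤ N) (hlb : ∀ k, k < N → 1 ≤ f k)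
    (hub : ∀ k, k < N → f k ≤ 3) (hs : ∑ k ∈ range N, f k = 3*N - 1) :
    ∃ j, j < N ∧ f j = 2 ∧ ∀ k, k < N → k ≠ j → f k = 3 := by
  have hj : ∃ j ∈ range N, f j < 3 := by
    by_contra h
    push_neg at h
    have : ∑ k ∈ range N, f k = ∑ k ∈ range N, 3 :=
      Finset.sum_congr rfl (fun k hk => by
        have := hub k (mem_range.1 hk); have := h k hk; omega)
    rw [Finset.sum_const, card_range, smul_eq_mul] at this
    omega
  obtain ⟨j, hjr, hflt⟩ := hj
  have hsplit : f j + ∑ k ∈ (range N).erase j, f k = 3*N - 1 := by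
    rw [Finset.add_sum_erase _ f hjr]; exact hs
  have hcard : ((range N).erase j).card = N - 1 := by
    rw [card_erase_of_mem hjr, card_range]
  have hle : ∑ k ∈ (range N).erase j, f k ≤ 3*(N-1) := by
    calc ∑ k ∈ (range N).erase j, f k ≤ ∑ _k ∈ (range N).erase j, 3 :=
          Finset.sum_le_sum (fun k hk => hub k (mem_range.1 (mem_of_mem_erase hk)))
      _ = 3*(N-1) := by rw [Finset.sum_const, hcard, smul_eq_mul]; ring
  have hfj : f j = 2 := by have := hlb j (mem_range.1 hjr); omega
  refine ⟨j, mem_range.1 hjr, hfj, ?_⟩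
  intro k hk hkj
  by_contra hk3
  have hkerase : k ∈ (range N).erase j := mem_erase.2 ⟨hkj, mem_range.2 hk⟩
  have hlt : ∑ k ∈ (range N).erase j, f k < ∑ _k ∈ (range N).erase j, 3 :=
    Finset.sum_lt_sum (fun i hi => hub i (mem_range.1 (mem_of_mem_erase hi)))
      ⟨k, hkerase, by have := hub k hk; omega⟩
  rw [Finset.sum_const, hcard, smul_eq_mul] at hlt
  omega

/-- any set satisfying the window condition is nonempty -/
lemma wcond_nonempty {m : ℕ} {S : Finset (ZMod m)} (hC : wcond S) : ∃ a, a ∈ S := by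
  rcases hC 0 with h | h | h
  exacts [⟨_, h⟩, ⟨_, h⟩, ⟨_, h⟩]

theorem classify {n : ℕ} (hn : 1 ≤ n) {S : Finset (ZMod (3*n+1))} (hC : wcond S)
    (hcard : S.card = n+1) :
    (∃ a, S = SA n a) ∨ (∃ a t, t < n ∧ S = SB n a t) := by
  -- first run to find a good anchor
  obtain ⟨a₀, ha₀⟩ := wcond_nonempty hC
  obtain ⟨hpm₀, -⟩ := cycle_struct hC ha₀
  rw [hcard] at hpm₀
  have hsum₀ : ∑ k ∈ range (n+1), stepd S (traj S a₀ k) = 3*n+1 := by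
    rw [← psum_eq_sum, hpm₀]
  have hanchor : ∃ j, j < n+1 ∧ stepd S (traj S a₀ j) ≤ 2 := by
    by_contra h
    push_neg at h
    have : ∑ k ∈ range (n+1), stepd S (traj S a₀ k) = ∑ k ∈ range (n+1), 3 :=
      Finset.sum_congr rfl (fun k hk => by
        have h1 := (stepd_bounds (S := S) (traj S a₀ k)).2
        have h2 := h k (mem_range.1 hk)
        omega)
    rw [Finset.sum_const, card_range, smul_eq_mul] at this
    omega
  obtain ⟨j₀, hj₀, hstep0⟩ := hanchor
  set a := traj S a₀ j₀ with ha_def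
  have ha : a ∈ S := traj_mem hC ha₀ j₀
  -- second run from the good anchor
  obtain ⟨hpm, hSeq⟩ := cycle_struct hC ha
  rw [hcard] at hpm hSeq
  have hf0 : stepd S (traj S a 0) = stepd S a := rfl
  have hsum : ∑ k ∈ range (n+1), stepd S (traj S a k) = 3*n+1 := by
    rw [← psum_eq_sum, hpm]
  rw [Finset.sum_range_succ'] at hsum
  have hb := fun k => stepd_bounds (S := S) (traj S a k)
  rcases (by have := (hb 0).1; rw [hf0] at this; omega :
      stepd S a = 1 ∨ stepd S a = 2) with h1 | h2
  · -- case A : all remaining steps are 3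
    left
    refine ⟨a, ?_⟩
    have hall : ∀ k, k < n → stepd S (traj S a (k+1)) = 3 := by
      apply sum_all_three (f := fun k => stepd S (traj S a (k+1)))
        (fun k _ => (hb (k+1)).2)
      rw [hf0, h1] at hsum
      omega
    have hps : ∀ k, k ≤ n → psum S a k = if k = 0 then 0 else 3*k-2 := by
      intro k
      induction k with
      | zero => intro _; simp [psum]
      | succ k ih =>
        intro hk
        rw [psum_step]
        rcases Nat.eq_zero_or_pos k with rfl | hkpos
        · simp [psum, hf0, h1]
        · have hk' : k - 1 < n := by omega
          have : stepd S (traj S a k) = 3 := by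
            have := hall (k-1) hk'
            rwa [Nat.sub_add_cancel hkpos] at this
          rw [this, ih (by omega)]
          simp only [if_neg (by omega : ¬ k = 0), if_neg (by omega : ¬ k + 1 = 0)]
          omega
    -- S = SA n a
    symm
    apply Finset.eq_of_subset_of_card_le
    · -- SA n a ⊆ S
      intro x hx
      simp only [SA, mem_image] at hx
      obtain ⟨o, ho, rfl⟩ := hx
      rw [hSeq]
      simp only [mem_image, mem_range]
      rw [mem_OA hn] at ho
      rcases ho with rfl | ⟨h3, h4⟩
      · exact ⟨0, by omega, by simp [psum]⟩
      · refine ⟨o/3 + 1, by omega, ?_⟩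
        rw [hps (o/3+1) (by omega)]
        rw [if_neg (by omega)]
        congr 1
        congr 1
        omega
    · rw [hcard, SA_card hn]
  · -- case B
    right
    have hsum' : ∑ k ∈ range n, stepd S (traj S a (k+1)) = 3*n - 1 := by
      rw [hf0, h2] at hsum
      omega
    obtain ⟨t, ht, hft, hrest⟩ := sum_classify hn (fun k _ => (hb (k+1)).1)
      (fun k _ => (hb (k+1)).2) hsum'
    refine ⟨a, t, ht, ?_⟩
    have hps : ∀ k, k ≤ n →
        psum S a k = if k = 0 then 0 else if k ≤ t+1 then 3*k-1 else 3*k-2 := by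
      intro k
      induction k with
      | zero => intro _; simp [psum]
      | succ k ih =>
        intro hk
        rw [psum_step]
        rcases Nat.eq_zero_or_pos k with rfl | hkpos
        · simp [psum, hf0, h2]
        · have hk1 : k - 1 < n := by omega
          rcases eq_or_ne (k-1) t with he | hne
          · have : stepd S (traj S a k) = 2 := by
              have := hft
              rw [← he] at this
              rwa [Nat.sub_add_cancel hkpos] at this
            rw [this, ih (by omega)]
            simp only [if_neg (by omega : ¬ k = 0), if_neg (by omega : ¬ k + 1 = 0)]
            rw [if_pos (by omega : k ≤ t+1), if_neg (by omega : ¬ k + 1 ≤ t+1)]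
            omega
          · have : stepd S (traj S a k) = 3 := by
              have := hrest (k-1) hk1 hne
              rwa [Nat.sub_add_cancel hkpos] at this
            rw [this, ih (by omega)]
            simp only [if_neg (by omega : ¬ k = 0), if_neg (by omega : ¬ k + 1 = 0)]
            rcases le_or_gt (k+1) (t+1) with hle | hlt
            · rw [if_pos (by omega : k ≤ t+1), if_pos hle]; omega
            · rw [if_neg (by omega : ¬ k + 1 ≤ t+1)]
              rcases le_or_gt k (t+1) with hle2 | hlt2
              · have : k = t + 1 := by omega
                rw [if_pos (by omega : k ≤ t+1)]; omega
              · rw [if_neg (by omega : ¬ k ≤ t+1)]; omega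
    symm
    apply Finset.eq_of_subset_of_card_le
    · intro x hx
      simp only [SB, mem_image] at hx
      obtain ⟨o, ho, rfl⟩ := hx
      rw [hSeq]
      simp only [mem_image, mem_range]
      rw [mem_OB hn ht] at ho
      rcases ho with rfl | ⟨h3, h4⟩ | ⟨h3, h4, h5⟩
      · exact ⟨0, by omega, by simp [psum]⟩
      · refine ⟨o/3 + 1, by omega, ?_⟩
        rw [hps (o/3+1) (by omega), if_neg (by omega), if_pos (by omega)]
        congr 2
        omega
      · refine ⟨o/3 + 1, by omega, ?_⟩
        rw [hps (o/3+1) (by omega), if_neg (by omega), if_neg (by omega)]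
        congr 2
        omega
    · rw [hcard, SB_card hn ht]

end DomAux

namespace DomAux
open Finset

variable {n : ℕ}

lemma off_mem_SA (a : ZMod (3*n+1)) {o : ℕ} (ho : o ∈ OA n) :
    a + (o : ZMod (3*n+1)) ∈ SA n a := Finset.mem_image_of_mem _ ho

lemma off_mem_SB (a : ZMod (3*n+1)) {t o : ℕ} (ho : o ∈ OB n t) :
    a + (o : ZMod (3*n+1)) ∈ SB n a t := Finset.mem_image_of_mem _ ho

lemma val_off (a : ZMod (3*n+1)) {o : ℕ} (ho : o < 3*n+1) :
    (a + (o : ZMod (3*n+1)) - a).val = o := by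
  rw [add_sub_cancel_left, ZMod.val_cast_of_lt ho]

lemma one_mem_OA (hn : 1 ≤ n) : 1 ∈ OA n := by rw [mem_OA hn]; omega

lemma zero_mem_OA (hn : 1 ≤ n) : (0:ℕ) ∈ OA n := by rw [mem_OA hn]; omega

lemma zero_mem_OB (hn : 1 ≤ n) {t : ℕ} (ht : t < n) : (0:ℕ) ∈ OB n t := by
  rw [mem_OB hn ht]; omega

lemma two_mem_OB (hn : 1 ≤ n) {t : ℕ} (ht : t < n) : (2:ℕ) ∈ OB n t := by
  rw [mem_OB hn ht]; omega

lemma self_mem_SA (hn : 1 ≤ n) (a : ZMod (3*n+1)) : a ∈ SA n a := by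
  have := off_mem_SA a (zero_mem_OA hn)
  simpa using this

lemma add_one_mem_SA (hn : 1 ≤ n) (a : ZMod (3*n+1)) : a + 1 ∈ SA n a := by
  have := off_mem_SA a (one_mem_OA hn)
  simpa using this

lemma self_mem_SB (hn : 1 ≤ n) {t : ℕ} (ht : t < n) (a : ZMod (3*n+1)) : a ∈ SB n a t := by
  have := off_mem_SB a (zero_mem_OB hn ht)
  simpa using this

lemma add_two_mem_SB (hn : 1 ≤ n) {t : ℕ} (ht : t < n) (a : ZMod (3*n+1)) :
    a + 2 ∈ SB n a t := by
  have := off_mem_SB a (two_mem_OB hn ht)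
  push_cast at this
  convert this using 1

lemma sub_val_add_one (hn : 1 ≤ n) (x a : ZMod (3*n+1)) :
    (x + 1 - a).val = ((x - a).val + 1) % (3*n+1) := by
  have h : x + 1 - a = (x - a) + ((1:ℕ) : ZMod (3*n+1)) := by push_cast; ring
  rw [h, shift_val _ 1 (by omega)]

lemma sub_val_add_two (hn : 1 ≤ n) (x a : ZMod (3*n+1)) :
    (x + 2 - a).val = ((x - a).val + 2) % (3*n+1) := by
  have h : x + 2 - a = (x - a) + ((2:ℕ) : ZMod (3*n+1)) := by push_cast; ring
  rw [h, shift_val _ 2 (by omega)]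

lemma SA_inj (hn : 1 ≤ n) {a a' : ZMod (3*n+1)} (h : SA n a = SA n a') : a = a' := by
  have h1 : a' ∈ SA n a := h ▸ self_mem_SA hn a'
  have h2 : a' + 1 ∈ SA n a := h ▸ add_one_mem_SA hn a'
  rw [mem_SA hn] at h1 h2
  rw [sub_val_add_one hn, modm (by omega) (by have := ZMod.val_lt (a' - a); omega)] at h2
  have hu := ZMod.val_lt (a' - a)
  rw [mem_OA hn] at h1 h2
  have hz : (a' - a).val = 0 := by
    split_ifs at h2 <;>
      (try simp only [false_or, or_false, false_and, and_false] at h2) <;> omega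
  have hz2 : a' - a = 0 := (ZMod.val_eq_zero _).1 hz
  linear_combination -hz2

lemma SA_ne_SB (hn : 1 ≤ n) {t : ℕ} (ht : t < n) (a a' : ZMod (3*n+1)) :
    SA n a ≠ SB n a' t := by
  intro h
  have h1 : a ∈ SB n a' t := h ▸ self_mem_SA hn a
  have h2 : a + 1 ∈ SB n a' t := h ▸ add_one_mem_SA hn a
  rw [mem_SB hn ht] at h1 h2
  rw [sub_val_add_one hn, modm (by omega) (by have := ZMod.val_lt (a - a'); omega)] at h2
  have hu := ZMod.val_lt (a - a')
  rw [mem_OB hn ht] at h1 h2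
  split_ifs at h2 <;>
    (try simp only [false_or, or_false, false_and, and_false] at h2) <;> omega

lemma SB_anchor (hn : 1 ≤ n) {t : ℕ} (ht : t < n) {a b : ZMod (3*n+1)}
    (h1 : b ∈ SB n a t) (h2 : b + 2 ∈ SB n a t) :
    b = a ∨ b = a + ((3*t+2 : ℕ) : ZMod (3*n+1)) := by
  rw [mem_SB hn ht] at h1 h2
  rw [sub_val_add_two hn, modm (by omega) (by have := ZMod.val_lt (b - a); omega)] at h2
  have hu := ZMod.val_lt (b - a)
  rw [mem_OB hn ht] at h1 h2
  have hcase : (b - a).val = 0 ∨ (b - a).val = 3*t+2 := by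
    split_ifs at h2 <;>
      (try simp only [false_or, or_false, false_and, and_false] at h2) <;> omega
  rcases hcase with hc | hc
  · left
    have : b - a = 0 := (ZMod.val_eq_zero _).1 hc
    linear_combination this
  · right
    have : b - a = ((3*t+2 : ℕ) : ZMod (3*n+1)) := by
      rw [← roundtrip (b - a), hc]
    linear_combination this

lemma SB_t_inj (hn : 1 ≤ n) {t t' : ℕ} (ht : t < n) (ht' : t' < n) {a : ZMod (3*n+1)}
    (h : SB n a t = SB n a t') : t = t' := by
  have key : ∀ s s' : ℕ, s < n → s' < n → SB n a s = SB n a s' → s ≤ s' := by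
    intro s s' hs hs' hss
    have hmem : a + ((3*s+2 : ℕ) : ZMod (3*n+1)) ∈ SB n a s' := by
      rw [← hss]
      exact off_mem_SB a (by rw [mem_OB hn hs]; omega)
    rw [mem_SB hn hs', val_off a (by omega), mem_OB hn hs'] at hmem
    omega
  exact le_antisymm (key t t' ht ht' h) (key t' t ht' ht h.symm)

lemma SB_shift (hn : 1 ≤ n) {t : ℕ} (ht : t < n) (a : ZMod (3*n+1)) :
    SB n (a + ((3*t+2 : ℕ) : ZMod (3*n+1))) (n-1-t) = SB n a t := by
  have ht2 : n-1-t < n := by omega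
  apply Finset.eq_of_subset_of_card_le
  · intro x hx
    rw [mem_SB hn ht2] at hx
    rw [mem_SB hn ht]
    have heq : x - a = (x - (a + ((3*t+2 : ℕ) : ZMod (3*n+1)))) + ((3*t+2 : ℕ) : ZMod (3*n+1)) := by
      ring
    rw [heq, shift_val _ (3*t+2) (by omega),
      modm (by omega) (by have := ZMod.val_lt (x - (a + ((3*t+2 : ℕ) : ZMod (3*n+1)))); omega)]
    have hu := ZMod.val_lt (x - (a + ((3*t+2 : ℕ) : ZMod (3*n+1))))
    rw [mem_OB hn ht2] at hx
    rw [mem_OB hn ht]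
    split_ifs <;>
      (try simp only [false_or, or_false, false_and, and_false] at hx) <;> omega
  · rw [SB_card hn ht, SB_card hn ht2]

lemma SB_inj (hn : 1 ≤ n) {t t' : ℕ} (ht : t < n) (ht' : t' < n) {a a' : ZMod (3*n+1)}
    (h : SB n a t = SB n a' t') :
    (a' = a ∧ t' = t) ∨ (a' = a + ((3*t+2 : ℕ) : ZMod (3*n+1)) ∧ t' = n-1-t) := by
  have h1 : a' ∈ SB n a t := h ▸ self_mem_SB hn ht' a'
  have h2 : a' + 2 ∈ SB n a t := h ▸ add_two_mem_SB hn ht' a'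
  rcases SB_anchor hn ht h1 h2 with rfl | rfl
  · left
    exact ⟨rfl, (SB_t_inj hn ht ht' h).symm⟩
  · right
    refine ⟨rfl, ?_⟩
    have hh : SB n (a + ((3*t+2 : ℕ) : ZMod (3*n+1))) (n-1-t)
        = SB n (a + ((3*t+2 : ℕ) : ZMod (3*n+1))) t' := (SB_shift hn ht a).trans h
    exact (SB_t_inj hn (by omega) ht' hh).symm

end DomAux

namespace DomAux
open Finset

lemma one_ne_zero' {n : ℕ} (hn : 1 ≤ n) : (1 : ZMod (3*n+1)) ≠ 0 := by
  intro h
  have h1 : ((1:ℕ) : ZMod (3*n+1)) = 0 := by push_cast; exact h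
  have := congrArg ZMod.val h1
  rw [ZMod.val_cast_of_lt (by omega), ZMod.val_zero] at this
  omega

lemma dom_iff {n : ℕ} (hn : 1 ≤ n) (S : Finset (ZMod (3*n+1))) :
    isDomSet (cycleG (3*n+1)) S ↔ wcond S := by
  constructor
  · intro h v
    by_cases hv : v ∈ S
    · exact Or.inl hv
    · obtain ⟨u, hu, hadj0⟩ := h v hv
      obtain ⟨hne, hadj⟩ : u ≠ v ∧ (u - v = 1 ∨ v - u = 1) := hadj0
      rcases hadj with h1 | h1
      · refine Or.inr (Or.inl ?_)
        have : u = v + 1 := by linear_combination h1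
        rwa [← this]
      · refine Or.inr (Or.inr ?_)
        have : u = v - 1 := by linear_combination -h1
        rwa [← this]
  · intro h v hv
    rcases h v with h1 | h1 | h1
    · exact absurd h1 hv
    · refine ⟨v + 1, h1, (⟨?_, Or.inl (by ring)⟩ : v + 1 ≠ v ∧ (v + 1 - v = 1 ∨ v - (v + 1) = 1))⟩
      intro he
      exact one_ne_zero' hn (by linear_combination he)
    · refine ⟨v - 1, h1, (⟨?_, Or.inr (by ring)⟩ : v - 1 ≠ v ∧ (v - 1 - v = 1 ∨ v - (v - 1) = 1))⟩
      intro he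
      exact one_ne_zero' hn (by linear_combination -he)

theorem main_count (n : ℕ) (hn : 1 ≤ n) :
    Nat.card {S : Finset (ZMod (3*n+1)) // isDomSet (cycleG (3*n+1)) S ∧ S.card = n+1}
      = (n * (3 * n + 7) + 2) / 2 := by
  classical
  set P : Finset (ZMod (3*n+1)) → Prop :=
    fun S => isDomSet (cycleG (3*n+1)) S ∧ S.card = n+1 with hP
  have hcardN : Nat.card {S // P S} = (univ.filter P).card := by
    rw [Nat.card_eq_fintype_card, Fintype.card_subtype]
  rw [hcardN]
  set A : Finset (Finset (ZMod (3*n+1))) := univ.image (fun a => SA n a) with hA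
  set Bs : Finset (Finset (ZMod (3*n+1))) :=
    (univ : Finset (ZMod (3*n+1) × Fin n)).image (fun p => SB n p.1 p.2.val) with hBs
  have hF : univ.filter P = A ∪ Bs := by
    ext S
    simp only [mem_filter, mem_union, hA, hBs, mem_image, mem_univ, true_and]
    constructor
    · rintro ⟨hdom, hcard⟩
      have hw : wcond S := (dom_iff hn S).1 hdom
      rcases classify hn hw hcard with ⟨a, rfl⟩ | ⟨a, t, ht, rfl⟩
      · exact Or.inl ⟨a, rfl⟩
      · exact Or.inr ⟨(a, ⟨t, ht⟩), rfl⟩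
    · rintro (⟨a, rfl⟩ | ⟨p, rfl⟩)
      · exact ⟨(dom_iff hn _).2 (wcond_SA hn a), SA_card hn a⟩
      · exact ⟨(dom_iff hn _).2 (wcond_SB hn p.2.2 p.1), SB_card hn p.2.2 p.1⟩
  have hAcard : A.card = 3*n+1 := by
    rw [hA, card_image_of_injOn (fun a _ a' _ h => SA_inj hn h), card_univ, ZMod.card]
  have hdisj : Disjoint A Bs := by
    rw [Finset.disjoint_left]
    rintro S hSA hSB
    rw [hA, mem_image] at hSA
    rw [hBs, mem_image] at hSB
    obtain ⟨a, -, rfl⟩ := hSA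
    obtain ⟨p, -, hp⟩ := hSB
    exact SA_ne_SB hn p.2.2 a p.1 hp.symm
  have hBcard : 2 * Bs.card = (3*n+1) * n := by
    have hfib := Finset.card_eq_sum_card_fiberwise
      (f := fun p : ZMod (3*n+1) × Fin n => SB n p.1 p.2.val)
      (s := univ) (t := Bs) (fun p _ => by rw [hBs]; exact mem_image_of_mem _ (mem_univ p))
    have huniv : (univ : Finset (ZMod (3*n+1) × Fin n)).card = (3*n+1) * n := by
      rw [card_univ, Fintype.card_prod, ZMod.card, Fintype.card_fin]
    have hfib2 : ∀ b ∈ Bs,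
        (univ.filter (fun p : ZMod (3*n+1) × Fin n => SB n p.1 p.2.val = b)).card = 2 := by
      intro b hb
      rw [hBs, mem_image] at hb
      obtain ⟨⟨a, t⟩, -, rfl⟩ := hb
      have hpairs : univ.filter
          (fun p : ZMod (3*n+1) × Fin n => SB n p.1 p.2.val = SB n a t.val) =
          {(a, t), (a + ((3*t.val+2 : ℕ) : ZMod (3*n+1)), ⟨n-1-t.val, by omega⟩)} := by
        ext p
        simp only [mem_filter, mem_univ, true_and, mem_insert, mem_singleton]
        constructor
        · intro h
          rcases SB_inj hn t.2 p.2.2 h.symm with ⟨ha, htv⟩ | ⟨ha, htv⟩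
          · left
            exact Prod.ext ha (Fin.ext htv)
          · right
            exact Prod.ext ha (Fin.ext htv)
        · rintro (rfl | rfl)
          · rfl
          · exact SB_shift hn t.2 a
      rw [hpairs]
      rw [card_insert_of_notMem, card_singleton]
      simp only [mem_singleton]
      intro h
      have h1 := congrArg Prod.fst h
      simp only at h1
      have : ((3*t.val+2 : ℕ) : ZMod (3*n+1)) = 0 := by linear_combination -h1
      have := congrArg ZMod.val this
      rw [ZMod.val_cast_of_lt (by have := t.2; omega), ZMod.val_zero] at this
      omega
    rw [huniv] at hfib
    rw [Finset.sum_congr rfl hfib2, Finset.sum_const, smul_eq_mul] at hfib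
    omega
  rw [hF, card_union_of_disjoint hdisj, hAcard]
  have harith : n * (3*n + 7) + 2 = 2 * ((3*n+1) + Bs.card) := by
    have : n * (3*n+7) + 2 = 2*(3*n+1) + (3*n+1)*n := by ring
    rw [this, ← hBcard]
    ring
  rw [harith]
  exact (Nat.mul_div_cancel_left _ (by norm_num)).symm

end DomAux


theorem domCount_three_n_add_one (n : ℕ) (hn : 1 ≤ n) :
    domCount (3 * n + 1) (n + 1) = (n * (3 * n + 7) + 2) / 2 := by
  simp only [domCount]
  exact DomAux.main_count n hn
end

section
/- For every n ≥ 4, the number of dominating sets of the cycle C_n of cardinality n−3 equals (n−4)·n·(n+1)/6. -/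
lemma c2aux (m : ℕ) : 2 * m.choose 2 = m * (m - 1) := by
  induction m with
  | zero => rfl
  | succ k ih =>
    rw [Nat.choose_succ_succ, Nat.mul_add, ih, Nat.choose_one_right]
    rcases k with _ | j
    · rfl
    · simp only [Nat.succ_sub_one]
      ring

lemma c3aux (m : ℕ) : 6 * m.choose 3 = m * (m - 1) * (m - 2) := by
  induction m with
  | zero => rfl
  | succ k ih =>
    rw [Nat.choose_succ_succ, Nat.mul_add, ih,
      show (6 : ℕ) * k.choose 2 = 3 * (2 * k.choose 2) by ring, c2aux]
    rcases k with _ | _ | j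
    · rfl
    · rfl
    · simp only [Nat.succ_sub_one, Nat.succ_sub_succ, Nat.sub_zero]
      ring


theorem domCount_card_n_sub_three (n : ℕ) (hn : 4 ≤ n) :
    domCount n (n - 3) = (n - 4) * n * (n + 1) / 6 := by
  classical
  haveI : NeZero n := ⟨by omega⟩
  have hcard : Fintype.card (ZMod n) = n := ZMod.card n
  have hkey : ∀ k : ℕ, 0 < k → k < n → (k : ZMod n) ≠ 0 := by
    intro k hk hkn h
    rw [ZMod.natCast_eq_zero_iff] at h
    exact absurd (Nat.le_of_dvd hk h) (by omega)
  have h1 : (1 : ZMod n) ≠ 0 := by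
    have := hkey 1 (by omega) (by omega); simpa using this
  have h2 : (2 : ZMod n) ≠ 0 := by
    have := hkey 2 (by omega) (by omega); push_cast at this; exact this
  have h3 : (3 : ZMod n) ≠ 0 := by
    have := hkey 3 (by omega) (by omega); push_cast at this; exact this
  set f : ZMod n → Finset (ZMod n) := fun v => {v - 1, v, v + 1} with hf
  -- adjacency characterization
  have hadj : ∀ u v : ZMod n, (cycleG n).Adj u v ↔ (u = v + 1 ∨ u = v - 1) := by
    intro u v
    constructor
    · rintro ⟨hne, h | h⟩
      · left; rw [← h]; ring
      · right; rw [← h]; ring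
    · rintro (rfl | rfl)
      · exact ⟨fun h => h1 (by linear_combination h), Or.inl (by ring)⟩
      · exact ⟨fun h => h1 (by linear_combination -h), Or.inr (by ring)⟩
  -- elements of f v
  have hfv3 : ∀ v : ZMod n, (f v).card = 3 := by
    intro v
    have e1 : v - 1 ≠ v := fun h => h1 (by linear_combination -h)
    have e2 : v - 1 ≠ v + 1 := fun h => h2 (by linear_combination -h)
    have e3 : v ≠ v + 1 := fun h => h1 (by linear_combination -h)
    rw [hf]
    rw [Finset.card_insert_of_notMem (by simp [e1, e2]),
      Finset.card_insert_of_notMem (by simp [e3])]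
    simp
  have hfinj : Function.Injective f := by
    intro v w h
    have hv : v ∈ f w := by rw [← h]; simp [hf]
    simp only [hf, Finset.mem_insert, Finset.mem_singleton] at hv
    rcases hv with hv | hv | hv
    · -- v = w - 1
      have hv1 : v - 1 ∈ f w := by rw [← h]; simp [hf]
      simp only [hf, Finset.mem_insert, Finset.mem_singleton] at hv1
      rcases hv1 with h' | h' | h'
      · exact absurd (show (1 : ZMod n) = 0 by linear_combination hv - h') h1
      · exact absurd (show (2 : ZMod n) = 0 by linear_combination hv - h') h2
      · exact absurd (show (3 : ZMod n) = 0 by linear_combination hv - h') h3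
    · exact hv
    · -- v = w + 1
      have hv1 : v + 1 ∈ f w := by rw [← h]; simp [hf]
      simp only [hf, Finset.mem_insert, Finset.mem_singleton] at hv1
      rcases hv1 with h' | h' | h'
      · exact absurd (show (3 : ZMod n) = 0 by linear_combination h' - hv) h3
      · exact absurd (show (2 : ZMod n) = 0 by linear_combination h' - hv) h2
      · exact absurd (show (1 : ZMod n) = 0 by linear_combination h' - hv) h1
  -- non-domination characterization
  have hnd : ∀ S : Finset (ZMod n), ¬ isDomSet (cycleG n) S ↔ ∃ v, f v ⊆ Sᶜ := by
    intro S
    unfold isDomSet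
    push_neg
    constructor
    · rintro ⟨v, hv, hall⟩
      refine ⟨v, ?_⟩
      have hm : v - 1 ∉ S := fun hm => (hall _ hm) ((hadj _ _).2 (Or.inr rfl))
      have hp : v + 1 ∉ S := fun hm => (hall _ hm) ((hadj _ _).2 (Or.inl rfl))
      simp [hf, Finset.insert_subset_iff, Finset.mem_compl, hv, hm, hp]
    · rintro ⟨v, hsub⟩
      simp only [hf, Finset.insert_subset_iff, Finset.singleton_subset_iff,
        Finset.mem_compl] at hsub
      refine ⟨v, hsub.2.1, fun u hu hadj' => ?_⟩
      rcases (hadj _ _).1 hadj' with rfl | rfl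
      · exact hsub.2.2 hu
      · exact hsub.1 hu
  -- the main set identity
  have hmain : (Finset.univ.filter fun S : Finset (ZMod n) =>
      isDomSet (cycleG n) S ∧ S.card = n - 3)
      = (Finset.powersetCard 3 (Finset.univ : Finset (ZMod n)) \
          Finset.univ.image f).image compl := by
    ext S
    simp only [Finset.mem_filter, Finset.mem_univ, true_and, Finset.mem_image,
      Finset.mem_sdiff, Finset.mem_powersetCard_univ]
    constructor
    · rintro ⟨hdom, hc⟩
      have hSle : S.card ≤ n := by
        have := Finset.card_le_univ S
        rwa [hcard] at this
      refine ⟨Sᶜ, ⟨⟨?_, ?_⟩, compl_compl S⟩⟩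
      · rw [Finset.card_compl, hcard, hc]; omega
      · rintro ⟨v, hv⟩
        exact (hnd S).2 ⟨v, hv ▸ Finset.Subset.refl _⟩ hdom
    · rintro ⟨T, ⟨⟨hT3, hTbad⟩, rfl⟩⟩
      constructor
      · by_contra hdom
        obtain ⟨v, hsub⟩ := (hnd Tᶜ).1 hdom
        rw [compl_compl] at hsub
        have : f v = T := Finset.eq_of_subset_of_card_le hsub (by rw [hfv3, hT3])
        exact hTbad ⟨v, this⟩
      · rw [Finset.card_compl, hcard, hT3]
  -- counting
  have hsub : Finset.univ.image f ⊆ Finset.powersetCard 3 (Finset.univ : Finset (ZMod n)) := by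
    intro T hT
    obtain ⟨v, -, rfl⟩ := Finset.mem_image.1 hT
    exact Finset.mem_powersetCard_univ.2 (hfv3 v)
  have hcount : domCount n (n - 3) = n.choose 3 - n := by
    rw [domCount, Nat.card_eq_fintype_card, Fintype.card_subtype, hmain,
      Finset.card_image_of_injective _ compl_injective, Finset.card_sdiff_of_subset hsub,
      Finset.card_powersetCard, Finset.card_image_of_injective _ hfinj,
      Finset.card_univ, hcard]
  rw [hcount]
  -- arithmetic
  obtain ⟨m, rfl⟩ : ∃ m, n = m + 4 := ⟨n - 4, by omega⟩
  have h6 : 6 * (m + 4).choose 3 = (m + 4) * (m + 3) * (m + 2) := by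
    rw [c3aux, show m + 4 - 1 = m + 3 by omega, show m + 4 - 2 = m + 2 by omega]
  have hpoly : (m + 4) * (m + 3) * (m + 2) = m * (m + 4) * (m + 5) + 6 * (m + 4) := by ring
  have key : ∀ c x : ℕ, 6 * c = x + 6 * (m + 4) → x / 6 = c - (m + 4) := by
    intro c x h
    omega
  have := key ((m + 4).choose 3) (m * (m + 4) * (m + 5)) (by rw [h6, hpoly])
  rw [show (m + 4 - 4) * (m + 4) * (m + 4 + 1) = m * (m + 4) * (m + 5) by
    rw [Nat.add_sub_cancel], this]
end

section
/- For every j ≥ 4, the sum over i from j to 3j of d(C_i, j) equals 3 times the sum over i from j−1 to 3j−3 of d(C_i, j−1). -/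
namespace DomProofAux
open Finset

def stp (j : ℕ) (g : Fin j → Fin 3) (r : ℕ) : ℕ :=
  if h : r < j then (g ⟨r, h⟩ : ℕ) + 1 else 1

def pos (j : ℕ) (g : Fin j → Fin 3) (k : ℕ) : ℕ :=
  ∑ r ∈ Finset.range k, stp j g r

lemma one_le_stp (j : ℕ) (g : Fin j → Fin 3) (r : ℕ) : 1 ≤ stp j g r := by
  unfold stp; split <;> omega

lemma stp_le (j : ℕ) (g : Fin j → Fin 3) (r : ℕ) : stp j g r ≤ 3 := by
  unfold stp; split
  · have := (g ⟨r, ‹_›⟩).is_lt; omega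
  · omega

lemma pos_zero (j : ℕ) (g : Fin j → Fin 3) : pos j g 0 = 0 := by simp [pos]

lemma pos_succ (j : ℕ) (g : Fin j → Fin 3) (k : ℕ) :
    pos j g (k+1) = pos j g k + stp j g k := Finset.sum_range_succ _ _

lemma pos_strictMono (j : ℕ) (g : Fin j → Fin 3) : StrictMono (pos j g) :=
  strictMono_nat_of_lt_succ fun k => by
    rw [pos_succ]; have := one_le_stp j g k; omega

lemma pos_top (j : ℕ) (g : Fin j → Fin 3) : pos j g j = j + ∑ t, (g t : ℕ) := by
  unfold pos
  rw [← Fin.sum_univ_eq_sum_range (fun r => stp j g r) j]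
  have h : ∀ i : Fin j, stp j g i = (g i : ℕ) + 1 := by
    intro i; unfold stp; rw [dif_pos i.is_lt]
  rw [Finset.sum_congr rfl (fun i _ => h i), Finset.sum_add_distrib]
  simp [add_comm, Finset.card_univ]

-- ZMod helpers
lemma cast_val_eq {n : ℕ} [NeZero n] (x : ZMod n) : ((x.val : ℕ) : ZMod n) = x := by
  simp [ZMod.natCast_val, ZMod.cast_id]

lemma natCast_inj_lt {n a b : ℕ} [NeZero n] (ha : a < n) (hb : b < n)
    (h : (a : ZMod n) = b) : a = b := by
  have := congrArg ZMod.val h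
  rwa [ZMod.val_natCast_of_lt ha, ZMod.val_natCast_of_lt hb] at this

/-- the dominating set associated to a gap sequence and a base point -/
def dset (n j : ℕ) (g : Fin j → Fin 3) (s : ZMod n) : Finset (ZMod n) :=
  (Finset.range j).image (fun k => s + ((pos j g k : ℕ) : ZMod n))

lemma pos_lt_n {n j : ℕ} {g : Fin j → Fin 3} (hpj : pos j g j = n) {k : ℕ} (hk : k < j) :
    pos j g k < n := hpj ▸ pos_strictMono j g hk

lemma dset_card {n j : ℕ} [NeZero n] {g : Fin j → Fin 3} (hpj : pos j g j = n) (s : ZMod n) :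
    (dset n j g s).card = j := by
  rw [dset, Finset.card_image_of_injOn, Finset.card_range]
  intro k hk k' hk' h
  have h2 : ((pos j g k : ℕ) : ZMod n) = ((pos j g k' : ℕ) : ZMod n) := by
    have := add_left_cancel h; exact this
  have := natCast_inj_lt (pos_lt_n hpj (Finset.mem_range.mp hk))
    (pos_lt_n hpj (Finset.mem_range.mp hk')) h2
  exact (pos_strictMono j g).injective this

lemma self_mem_dset {n j : ℕ} (hj0 : 0 < j) (g : Fin j → Fin 3) (s : ZMod n) :
    s ∈ dset n j g s := by
  refine Finset.mem_image.mpr ⟨0, Finset.mem_range.mpr hj0, ?_⟩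
  rw [pos_zero]; simp

lemma exists_seg (p : ℕ → ℕ) (m : ℕ) :
    ∀ j, p 0 ≤ m → m < p j → ∃ k, k < j ∧ p k ≤ m ∧ m < p (k+1) := by
  intro j; induction j with
  | zero => intro h1 h2; omega
  | succ j ih =>
    intro h1 h2
    by_cases h : m < p j
    · obtain ⟨k, hk, hk1, hk2⟩ := ih h1 h; exact ⟨k, by omega, hk1, hk2⟩
    · exact ⟨j, by omega, by omega, h2⟩

lemma dset_dom {n j : ℕ} [NeZero n] {g : Fin j → Fin 3} (hj0 : 0 < j) (hn2 : 2 ≤ n)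
    (hpj : pos j g j = n) (s : ZMod n) : isDomSet (cycleG n) (dset n j g s) := by
  intro v hv
  set m := (v - s).val with hm
  have hmn : m < n := ZMod.val_lt _
  have hv' : v = s + (m : ZMod n) := by rw [hm, cast_val_eq]; ring
  obtain ⟨k, hk, h1, h2⟩ := exists_seg (pos j g) m j (by rw [pos_zero]; omega) (by omega)
  have hstp3 := stp_le j g k
  have hstp1 := one_le_stp j g k
  rw [pos_succ] at h2
  have hone : (1 : ZMod n) ≠ 0 := by
    haveI : Fact (1 < n) := ⟨by omega⟩
    exact one_ne_zero
  have hd : m = pos j g k ∨ m = pos j g k + 1 ∨ m = pos j g k + 2 := by omega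
  rcases hd with hd | hd | hd
  · exact absurd (Finset.mem_image.mpr ⟨k, Finset.mem_range.mpr hk, by rw [hv', hd]⟩) hv
  · have hsub : v - (s + ((pos j g k : ℕ) : ZMod n)) = 1 := by
      rw [hv', hd]; push_cast; ring
    refine ⟨s + ((pos j g k : ℕ) : ZMod n), Finset.mem_image.mpr ⟨k, Finset.mem_range.mpr hk, rfl⟩,
      ?_, Or.inr hsub⟩
    intro he; rw [he, sub_self] at hsub; exact hone hsub.symm
  · have h3 : pos j g (k+1) = m + 1 := by rw [pos_succ]; omega
    have hsub : (s + ((pos j g (k+1) : ℕ) : ZMod n)) - v = 1 := by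
      rw [hv', h3]; push_cast; ring
    refine ⟨s + ((pos j g (k+1) : ℕ) : ZMod n), ?_, ?_, Or.inl hsub⟩
    · by_cases hk1 : k + 1 < j
      · exact Finset.mem_image.mpr ⟨k+1, Finset.mem_range.mpr hk1, rfl⟩
      · have hkj : k + 1 = j := by omega
        refine Finset.mem_image.mpr ⟨0, Finset.mem_range.mpr hj0, ?_⟩
        rw [pos_zero, hkj, hpj]
        simp [ZMod.natCast_self]
    · intro he; rw [he, sub_self] at hsub; exact hone hsub.symm


lemma dset_image_val {n j : ℕ} [NeZero n] {g : Fin j → Fin 3} (hpj : pos j g j = n)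
    (s : ZMod n) :
    (dset n j g s).image (fun v => (v - s).val) = (Finset.range j).image (pos j g) := by
  rw [dset, Finset.image_image]
  apply Finset.image_congr
  intro k hk
  simp only [Function.comp_apply, add_sub_cancel_left]
  exact ZMod.val_natCast_of_lt (pos_lt_n hpj (Finset.mem_range.mp hk))

lemma dset_inj {n j : ℕ} [NeZero n] {g g' : Fin j → Fin 3} {s : ZMod n}
    (h1 : pos j g j = n) (h2 : pos j g' j = n) (h : dset n j g s = dset n j g' s) :
    g = g' := by
  have hM : (Finset.range j).image (pos j g) = (Finset.range j).image (pos j g') := by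
    rw [← dset_image_val h1 s, ← dset_image_val h2 s, h]
  set M : Finset ℕ := (Finset.range j).image (pos j g) with hMdef
  have hcard : M.card = j := by
    rw [hMdef, Finset.card_image_of_injOn (pos_strictMono j g).injective.injOn, Finset.card_range]
  have hf : ∀ x : Fin j, pos j g x ∈ M :=
    fun x => Finset.mem_image_of_mem _ (Finset.mem_range.mpr x.is_lt)
  have hf' : ∀ x : Fin j, pos j g' x ∈ M := by
    rw [hM]; exact fun x => Finset.mem_image_of_mem _ (Finset.mem_range.mpr x.is_lt)
  have hmono : StrictMono (fun x : Fin j => pos j g x) :=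
    fun a b hab => pos_strictMono j g (show (a : ℕ) < b from hab)
  have hmono' : StrictMono (fun x : Fin j => pos j g' x) :=
    fun a b hab => pos_strictMono j g' (show (a : ℕ) < b from hab)
  have e1 := Finset.orderEmbOfFin_unique hcard hf hmono
  have e2 := Finset.orderEmbOfFin_unique hcard hf' hmono'
  have hpos : ∀ k, k ≤ j → pos j g k = pos j g' k := by
    intro k hkj
    rcases lt_or_eq_of_le hkj with hk | hk
    · have := congrFun (e1.trans e2.symm) ⟨k, hk⟩
      exact this
    · rw [hk, h1, h2]
  funext t
  have hs1 : pos j g (t + 1) = pos j g' (t + 1) := hpos _ t.is_lt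
  have hs0 : pos j g t = pos j g' t := hpos _ (le_of_lt t.is_lt)
  rw [pos_succ, pos_succ] at hs1
  have hstp : stp j g t = stp j g' t := by omega
  unfold stp at hstp
  rw [dif_pos t.is_lt, dif_pos t.is_lt] at hstp
  exact Fin.ext (by simpa using hstp)

lemma exists_gap {n j : ℕ} [NeZero n] (hj0 : 0 < j) {S : Finset (ZMod n)} {s : ZMod n}
    (hdom : isDomSet (cycleG n) S) (hcard : S.card = j) (hs : s ∈ S) :
    ∃ g : Fin j → Fin 3, pos j g j = n ∧ dset n j g s = S := by
  have hinj : Function.Injective (fun v : ZMod n => (v - s).val) := by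
    intro a b hab
    have : a - s = b - s := ZMod.val_injective _ hab
    exact sub_left_inj.mp this
  set M : Finset ℕ := S.image (fun v => (v - s).val) with hMdef
  have hMcard : M.card = j := by rw [hMdef, Finset.card_image_of_injective _ hinj, hcard]
  have hMlt : ∀ x ∈ M, x < n := by
    intro x hx
    obtain ⟨v, _, rfl⟩ := Finset.mem_image.mp hx
    exact ZMod.val_lt _
  have h0M : (0:ℕ) ∈ M := Finset.mem_image.mpr ⟨s, hs, by simp⟩
  set e := M.orderEmbOfFin hMcard with hedef
  have he_mem : ∀ i, e i ∈ M := fun i => Finset.orderEmbOfFin_mem M hMcard i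
  have hmemM : ∀ x ∈ M, ∃ i, e i = x := by
    intro x hx
    have : x ∈ Set.range e := by rw [Finset.range_orderEmbOfFin]; exact_mod_cast hx
    exact this
  set E : ℕ → ℕ := fun k => if h : k < j then e ⟨k, h⟩ else n with hEdef
  have hE0 : E 0 = 0 := by
    obtain ⟨i, hi⟩ := hmemM 0 h0M
    have h1 : e ⟨0, hj0⟩ ≤ e i := e.monotone (by exact Fin.mk_le_of_le_val (Nat.zero_le _))
    rw [hi] at h1
    simp only [hEdef, dif_pos hj0]
    omega
  have hElt : ∀ k, k < j → E k < n := by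
    intro k hk
    simp only [hEdef, dif_pos hk]
    exact hMlt _ (he_mem _)
  have hEle : ∀ k, E k ≤ n := by
    intro k
    by_cases hk : k < j
    · exact le_of_lt (hElt k hk)
    · simp [hEdef, dif_neg hk]
  have hEmemM : ∀ k, k < j → E k ∈ M := by
    intro k hk; simp only [hEdef, dif_pos hk]; exact he_mem _
  have hEmono : ∀ k, k < j → E k < E (k+1) := by
    intro k hk
    by_cases hk1 : k + 1 < j
    · simp only [hEdef, dif_pos hk, dif_pos hk1]
      exact e.strictMono (by exact Fin.mk_lt_mk.mpr (by omega))
    · simp only [hEdef, dif_pos hk, dif_neg hk1]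
      exact hMlt _ (he_mem _)
  have noMid : ∀ k, k < j → ∀ x, E k < x → x < E (k+1) → x ∉ M := by
    intro k hk x hx1 hx2 hxM
    obtain ⟨i, hi⟩ := hmemM x hxM
    simp only [hEdef, dif_pos hk] at hx1
    have hki : (⟨k, hk⟩ : Fin j) < i := e.strictMono.lt_iff_lt.mp (by rw [hi]; exact hx1)
    have hki' : k + 1 ≤ (i : ℕ) := hki
    by_cases hk1 : k + 1 < j
    · simp only [hEdef, dif_pos hk1] at hx2
      have : e ⟨k+1, hk1⟩ ≤ e i := e.monotone (by exact Fin.mk_le_of_le_val hki')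
      rw [hi] at this; omega
    · have := i.is_lt; omega
  have hgap : ∀ k, k < j → E (k+1) ≤ E k + 3 := by
    intro k hk
    by_contra hcon
    push_neg at hcon
    have hEk1n : E (k+1) ≤ n := hEle _
    have hlt2 : E k + 2 < n := by omega
    have hlt3 : E k + 3 < n := by omega
    have hlt1 : E k + 1 < n := by omega
    set w : ZMod n := s + ((E k + 2 : ℕ) : ZMod n) with hwdef
    have hval : ∀ a : ℕ, a < n → ((s + (a : ZMod n)) - s).val = a := by
      intro a ha; rw [add_sub_cancel_left]; exact ZMod.val_natCast_of_lt ha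
    have hwS : w ∉ S := by
      intro hwS
      have : E k + 2 ∈ M := Finset.mem_image.mpr ⟨w, hwS, hval _ hlt2⟩
      exact noMid k hk _ (by omega) (by omega) this
    obtain ⟨u, huS, hadj⟩ := hdom w hwS
    obtain ⟨hne, hor⟩ := hadj
    have huM : (u - s).val ∈ M := Finset.mem_image.mpr ⟨u, huS, rfl⟩
    rcases hor with h1 | h1
    · have hu : u = s + ((E k + 3 : ℕ) : ZMod n) := by
        have : u = w + 1 := by rw [← h1]; ring
        rw [this, hwdef]; push_cast; ring
      rw [hu, hval _ hlt3] at huM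
      exact noMid k hk _ (by omega) (by omega) huM
    · have hu : u = s + ((E k + 1 : ℕ) : ZMod n) := by
        have : u = w - 1 := by rw [← h1]; ring
        rw [this, hwdef]; push_cast; ring
      rw [hu, hval _ hlt1] at huM
      exact noMid k hk _ (by omega) (by omega) huM
  -- define the gap sequence
  set g : Fin j → Fin 3 := fun t =>
    ⟨E ((t : ℕ) + 1) - E (t : ℕ) - 1, by
      have h1 := hEmono t t.is_lt
      have h2 := hgap t t.is_lt
      omega⟩ with hgdef
  have hstp : ∀ k, (hk : k < j) → stp j g k = E (k+1) - E k := by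
    intro k hk
    unfold stp
    rw [dif_pos hk]
    simp only [hgdef]
    have := hEmono k hk
    omega
  have hposE : ∀ k, k ≤ j → pos j g k = E k := by
    intro k
    induction k with
    | zero => intro _; rw [pos_zero, hE0]
    | succ k ih =>
      intro hkj
      rw [pos_succ, ih (by omega), hstp k (by omega)]
      have := hEmono k (by omega)
      omega
  have hEj : E j = n := by simp [hEdef]
  have hpj : pos j g j = n := by rw [hposE j le_rfl, hEj]
  refine ⟨g, hpj, ?_⟩
  apply Finset.eq_of_subset_of_card_le
  · intro v hv
    obtain ⟨k, hk, rfl⟩ := Finset.mem_image.mp hv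
    rw [Finset.mem_range] at hk
    have hmem : pos j g k ∈ M := by rw [hposE k (le_of_lt hk)]; exact hEmemM k hk
    obtain ⟨w, hwS, hwval⟩ := Finset.mem_image.mp hmem
    have : w = s + ((pos j g k : ℕ) : ZMod n) := by
      rw [← hwval, cast_val_eq]; ring
    rw [← this]; exact hwS
  · rw [hcard, dset_card hpj]


/-- gap sequences with a prescribed sum -/
def Gap (j m : ℕ) : Finset (Fin j → Fin 3) :=
  Finset.univ.filter (fun g => ∑ t, (g t : ℕ) = m)

def A (j m : ℕ) : ℕ := (Gap j m).card

lemma key {n j : ℕ} (hj : 3 ≤ j) (hjn : j ≤ n) :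
    j * domCount n j = n * A j (n - j) := by
  haveI : NeZero n := ⟨by omega⟩
  classical
  set D : Finset (Finset (ZMod n)) :=
    Finset.univ.filter (fun S => isDomSet (cycleG n) S ∧ S.card = j) with hDdef
  have hD : domCount n j = D.card := by
    rw [domCount, Nat.card_eq_fintype_card, Fintype.card_subtype]
  set Y : Finset (Finset (ZMod n) × ZMod n) :=
    D.biUnion (fun S => S.image (fun s => (S, s))) with hYdef
  have hYmem : ∀ p : Finset (ZMod n) × ZMod n,
      p ∈ Y ↔ isDomSet (cycleG n) p.1 ∧ p.1.card = j ∧ p.2 ∈ p.1 := by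
    intro p
    simp only [hYdef, Finset.mem_biUnion, hDdef, Finset.mem_filter, Finset.mem_univ, true_and,
      Finset.mem_image]
    constructor
    · rintro ⟨S, ⟨h1, h2⟩, s, hsS, rfl⟩
      exact ⟨h1, h2, hsS⟩
    · rintro ⟨h1, h2, h3⟩
      exact ⟨p.1, ⟨h1, h2⟩, p.2, h3, rfl⟩
  have hdisj : ∀ S1 ∈ D, ∀ S2 ∈ D, S1 ≠ S2 →
      Disjoint (S1.image (fun s => (S1, s))) (S2.image (fun s => (S2, s))) := by
    intro S1 _ S2 _ hne
    rw [Finset.disjoint_left]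
    rintro p hp1 hp2
    obtain ⟨s1, _, rfl⟩ := Finset.mem_image.mp hp1
    obtain ⟨s2, _, heq⟩ := Finset.mem_image.mp hp2
    exact hne ((Prod.mk.injEq _ _ _ _).mp heq).1.symm
  have hYcard : Y.card = D.card * j := by
    rw [hYdef, Finset.card_biUnion hdisj]
    calc ∑ S ∈ D, (S.image fun s => (S, s)).card
        = ∑ _S ∈ D, j := by
          apply Finset.sum_congr rfl
          intro S hS
          rw [Finset.card_image_of_injective _ (fun a b hab => congrArg Prod.snd hab)]
          exact ((Finset.mem_filter.mp hS).2).2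
      _ = D.card * j := by rw [Finset.sum_const, smul_eq_mul]
  set X : Finset ((Fin j → Fin 3) × ZMod n) := (Gap j (n - j)) ×ˢ Finset.univ with hXdef
  have hXcard : X.card = A j (n - j) * n := by
    rw [hXdef, Finset.card_product, Finset.card_univ, ZMod.card]; rfl
  have hpj : ∀ g ∈ Gap j (n - j), pos j g j = n := by
    intro g hg
    have := (Finset.mem_filter.mp hg).2
    rw [pos_top, this]; omega
  have hXY : X.card = Y.card := by
    apply Finset.card_bij (fun p _ => (dset n j p.1 p.2, p.2))
    · intro p hp
      rw [hXdef, Finset.mem_product] at hp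
      have hpj' := hpj p.1 hp.1
      rw [hYmem]
      exact ⟨dset_dom (by omega) (by omega) hpj' p.2, dset_card hpj' p.2,
        self_mem_dset (by omega) p.1 p.2⟩
    · intro p1 hp1 p2 hp2 heq
      rw [hXdef, Finset.mem_product] at hp1 hp2
      have h2 : p1.2 = p2.2 := ((Prod.mk.injEq _ _ _ _).mp heq).2
      have h1 : dset n j p1.1 p1.2 = dset n j p2.1 p2.2 := ((Prod.mk.injEq _ _ _ _).mp heq).1
      rw [← h2] at h1
      have := dset_inj (hpj _ hp1.1) (hpj _ hp2.1) h1
      exact Prod.ext this h2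
    · intro p hp
      rw [hYmem] at hp
      obtain ⟨hdom, hcard, hmem⟩ := hp
      obtain ⟨g, hgpj, hgset⟩ := exists_gap (n := n) (by omega) hdom hcard hmem
      have hgsum : ∑ t, (g t : ℕ) = n - j := by
        have h1 : n = j + ∑ t, (g t : ℕ) := by rw [← hgpj, pos_top]
        omega
      refine ⟨(g, p.2), ?_, ?_⟩
      · rw [hXdef, Finset.mem_product]
        exact ⟨Finset.mem_filter.mpr ⟨Finset.mem_univ _, hgsum⟩, Finset.mem_univ _⟩
      · exact Prod.ext hgset rfl
  calc j * domCount n j = D.card * j := by rw [hD]; ring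
    _ = Y.card := hYcard.symm
    _ = X.card := hXY.symm
    _ = A j (n - j) * n := hXcard
    _ = n * A j (n - j) := by ring


lemma sum_le_two_j (j : ℕ) (g : Fin j → Fin 3) : ∑ t, (g t : ℕ) ≤ 2 * j := by
  calc ∑ t, (g t : ℕ) ≤ ∑ _t : Fin j, 2 :=
        Finset.sum_le_sum (fun t _ => by have := (g t).is_lt; omega)
    _ = 2 * j := by simp [mul_comm]

lemma sumA (j : ℕ) : ∑ m ∈ Finset.range (2 * j + 1), A j m = 3 ^ j := by
  have h : (Finset.univ : Finset (Fin j → Fin 3)).card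
      = ∑ m ∈ Finset.range (2 * j + 1),
          (Finset.univ.filter fun g : Fin j → Fin 3 => (∑ t, (g t : ℕ)) = m).card := by
    apply Finset.card_eq_sum_card_fiberwise
    intro g _
    exact Finset.mem_range.mpr (by have := sum_le_two_j j g; show (∑ t, (g t : ℕ)) < 2 * j + 1; omega)
  unfold A Gap
  rw [← h]
  simp [Finset.card_univ]

lemma sum_apply_eq (j : ℕ) (hj : 1 ≤ j) (t : Fin j) :
    ∑ g : Fin j → Fin 3, (g t : ℕ) = 3 ^ j := by
  rw [Fintype.sum_equiv (Equiv.funSplitAt t (Fin 3)) (fun g : Fin j → Fin 3 => (g t : ℕ))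
    (fun p => (p.1 : ℕ)) (fun g => rfl)]
  rw [Fintype.sum_prod_type]
  have hcard : Fintype.card ({i : Fin j // i ≠ t} → Fin 3) = 3 ^ (j - 1) := by
    rw [Fintype.card_fun]
    have h := Fintype.card_subtype_compl (fun i : Fin j => i = t)
    simp only [Fintype.card_subtype_eq] at h
    simp only [Fintype.card_fin] at h
    have h2 : Fintype.card {i : Fin j // i ≠ t} = j - 1 := by
      convert h using 2
    rw [h2]
    simp
  have hinner : ∀ a : Fin 3, ∑ _b : ({i : Fin j // i ≠ t} → Fin 3), (a : ℕ) = 3 ^ (j - 1) * a := by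
    intro a
    rw [Finset.sum_const, Finset.card_univ, hcard, smul_eq_mul]
  rw [Finset.sum_congr rfl (fun a _ => hinner a), ← Finset.mul_sum]
  have h3 : ∑ a : Fin 3, (a : ℕ) = 3 := by decide
  rw [h3, ← pow_succ]
  congr 1
  omega

lemma sumMA (j : ℕ) (hj : 1 ≤ j) :
    ∑ m ∈ Finset.range (2 * j + 1), m * A j m = j * 3 ^ j := by
  have h1 : ∀ m ∈ Finset.range (2 * j + 1),
      m * A j m = ∑ g ∈ Gap j m, ∑ t, (g t : ℕ) := by
    intro m _
    have : ∑ g ∈ Gap j m, ∑ t, (g t : ℕ) = ∑ _g ∈ Gap j m, m :=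
      Finset.sum_congr rfl (fun g hg => (Finset.mem_filter.mp hg).2)
    rw [this, Finset.sum_const, smul_eq_mul, mul_comm]
    rfl
  rw [Finset.sum_congr rfl h1]
  unfold Gap
  rw [Finset.sum_fiberwise_of_maps_to
    (fun g _ => Finset.mem_range.mpr (by have := sum_le_two_j j g; omega))]
  rw [Finset.sum_comm]
  rw [Finset.sum_congr rfl (fun t _ => sum_apply_eq j hj t)]
  simp [mul_comm]

lemma total (j : ℕ) (hj : 3 ≤ j) :
    ∑ i ∈ Finset.Icc j (3 * j), domCount i j = 2 * 3 ^ j := by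
  have hmul : j * ∑ i ∈ Finset.Icc j (3 * j), domCount i j = j * (2 * 3 ^ j) := by
    rw [Finset.mul_sum]
    rw [Finset.sum_congr rfl (fun i hi => key hj (Finset.mem_Icc.mp hi).1)]
    have hIcc : Finset.Icc j (3 * j) =
        (Finset.range (2 * j + 1)).map ⟨fun m => j + m, add_right_injective j⟩ := by
      ext x
      simp only [Finset.mem_Icc, Finset.mem_map, Finset.mem_range, Function.Embedding.coeFn_mk]
      constructor
      · intro h; exact ⟨x - j, by omega, by omega⟩
      · rintro ⟨m, hm, rfl⟩; omega
    rw [hIcc, Finset.sum_map]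
    simp only [Function.Embedding.coeFn_mk]
    have h2 : ∀ m ∈ Finset.range (2 * j + 1),
        (j + m) * A j ((j + m) - j) = j * A j m + m * A j m := by
      intro m _
      have : (j + m) - j = m := by omega
      rw [this]; ring
    rw [Finset.sum_congr rfl h2, Finset.sum_add_distrib, ← Finset.mul_sum,
      sumA, sumMA j (by omega)]
    ring
  exact Nat.eq_of_mul_eq_mul_left (by omega) hmul

end DomProofAux

theorem domCount_sum_identity (j : ℕ) (hj : 4 ≤ j) :
    ∑ i ∈ Finset.Icc j (3 * j), domCount i j =
      3 * ∑ i ∈ Finset.Icc (j - 1) (3 * j - 3), domCount i (j - 1) := by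
  obtain ⟨k, rfl⟩ : ∃ k, j = k + 4 := ⟨j - 4, by omega⟩
  have h1 := DomProofAux.total (k + 4) (by omega)
  have h2 := DomProofAux.total (k + 3) (by omega)
  have e1 : k + 4 - 1 = k + 3 := by omega
  have e2 : 3 * (k + 4) - 3 = 3 * (k + 3) := by omega
  rw [h1, e1, e2, h2]
  ring
end

section
/- Let S_n denote the total number of dominating sets of the cycle C_n (of all cardinalities). Then S_1 = 1, S_2 = 3, S_3 = 7, and for every n ≥ 4, S_n = S_{n−1} + S_{n−2} + S_{n−3}. -/
set_option linter.unusedVariables false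

/-- The total number of dominating sets of the cycle `C_n`. -/
noncomputable def totalDomCount (n : ℕ) : ℕ :=
  Nat.card {S : Finset (ZMod n) // isDomSet (cycleG n) S}

/-! ### Auxiliary machinery -/

instance (n : ℕ) : DecidableRel (cycleG n).Adj := fun u v =>
  decidable_of_iff (u ≠ v ∧ (u - v = 1 ∨ v - u = 1)) Iff.rfl

instance (n : ℕ) [NeZero n] : DecidablePred (isDomSet (cycleG n)) := fun S =>
  decidable_of_iff (∀ v : ZMod n, v ∉ S → ∃ u ∈ S, (cycleG n).Adj u v) Iff.rfl

abbrev St : Type := Bool × Bool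

/-- Transfer-matrix style count. -/
def lcount : ℕ → St → St → ℕ
  | 0, s, t => if s = t then 1 else 0
  | n+1, s, t => ∑ c : Bool, (if (s.1 || s.2 || c) = true then 1 else 0) * lcount n (s.2, c) t

lemma lcount_succ (n : ℕ) (s t : St) :
    lcount (n+1) s t
      = ∑ c : Bool, (if (s.1 || s.2 || c) = true then 1 else 0) * lcount n (s.2, c) t :=
  rfl

lemma lcount_rec : ∀ (n : ℕ) (s t : St),
    lcount (n+4) s t = lcount (n+3) s t + lcount (n+2) s t + lcount (n+1) s t := by
  intro n
  induction n with
  | zero => decide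
  | succ n ih =>
    intro s t
    rw [show n+1+4 = (n+4)+1 from rfl, show n+1+3 = (n+3)+1 from rfl,
      show n+1+2 = (n+2)+1 from rfl, lcount_succ, lcount_succ, lcount_succ, lcount_succ,
      ← Finset.sum_add_distrib, ← Finset.sum_add_distrib]
    refine Finset.sum_congr rfl fun c _ => ?_
    rw [ih, mul_add, mul_add]

/-- `validB s l t`: reading the word `l` starting in state `s`, every window of
three consecutive letters (with the two letters of `s` as a virtual prefix) contains
a `true`, and the final state is `t`. -/
def validB : St → List Bool → St → Bool
  | s, [], t => decide (s = t)
  | s, c :: l, t => (s.1 || s.2 || c) && validB (s.2, c) l t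

@[simp] lemma validB_nil (s t : St) : validB s [] t = decide (s = t) := rfl

@[simp] lemma validB_cons (s t : St) (c : Bool) (l : List Bool) :
    validB s (c :: l) t = ((s.1 || s.2 || c) && validB (s.2, c) l t) := rfl

/-- counting words of a given length with `validB`. -/
lemma card_valid : ∀ (n : ℕ) (s t : St),
    Fintype.card {v : List.Vector Bool n // validB s v.toList t = true} = lcount n s t := by
  intro n
  induction n with
  | zero =>
    intro s t
    rcases eq_or_ne s t with h | h
    · subst h
      have : Unique {v : List.Vector Bool 0 // validB s v.toList s = true} :=
        { default := ⟨List.Vector.nil, by simp⟩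
          uniq := fun v => Subtype.ext (by apply List.Vector.eq_nil) }
      rw [Fintype.card_unique]
      simp [lcount]
    · haveI : IsEmpty {v : List.Vector Bool 0 // validB s v.toList t = true} := by
        refine ⟨fun v => ?_⟩
        have h2 := v.2
        rw [v.1.eq_nil] at h2
        simp at h2
        exact h h2
      rw [Fintype.card_eq_zero]
      simp [lcount, h]
  | succ n ih =>
    intro s t
    have E : {v : List.Vector Bool (n+1) // validB s v.toList t = true} ≃
        Σ c : Bool, {v : List.Vector Bool n //
          (validB (s.2, c) v.toList t = true ∧ (s.1 || s.2 || c) = true)} :=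
      { toFun := fun v => ⟨v.1.head, v.1.tail, by
          have h := v.2
          rw [← List.Vector.cons_head_tail v.1, List.Vector.toList_cons, validB_cons,
            Bool.and_eq_true] at h
          exact ⟨h.2, h.1⟩⟩
        invFun := fun p => ⟨p.1 ::ᵥ p.2.1, by
          rw [List.Vector.toList_cons, validB_cons, Bool.and_eq_true]
          exact ⟨p.2.2.2, p.2.2.1⟩⟩
        left_inv := fun v => Subtype.ext (List.Vector.cons_head_tail v.1)
        right_inv := fun p => by
          rcases p with ⟨c, ⟨⟨l, hl⟩, h⟩⟩
          rfl }
    rw [Fintype.card_congr E, Fintype.card_sigma, lcount_succ]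
    refine Finset.sum_congr rfl fun c _ => ?_
    by_cases hc : (s.1 || s.2 || c) = true
    · rw [if_pos hc, one_mul, ← ih (s.2, c) t]
      exact Fintype.card_congr (Equiv.subtypeEquivRight (fun v => by simp [hc]))
    · rw [if_neg hc, zero_mul]
      haveI : IsEmpty {v : List.Vector Bool n //
          (validB (s.2, c) v.toList t = true ∧ (s.1 || s.2 || c) = true)} :=
        ⟨fun v => hc v.2.2⟩
      rw [Fintype.card_eq_zero]

/-- Characterization of `validB` via windows on the padded list. -/
lemma validB_iff : ∀ (l : List Bool) (a b : Bool) (t : St),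
    validB (a, b) l t = true ↔
      ((∀ i < l.length, ((a :: b :: l).getD i false || (a :: b :: l).getD (i+1) false
          || (a :: b :: l).getD (i+2) false) = true)
        ∧ t = ((a :: b :: l).getD l.length false, (a :: b :: l).getD (l.length + 1) false)) := by
  intro l
  induction l with
  | nil =>
    intro a b t
    simp only [validB_nil, decide_eq_true_iff, List.length_nil, List.getD_cons_zero,
      Nat.zero_add, List.getD_cons_succ]
    constructor
    · rintro rfl
      exact ⟨fun i hi => absurd hi (Nat.not_lt_zero i), rfl⟩
    · rintro ⟨-, rfl⟩
      rfl
  | cons c l ih =>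
    intro a b t
    have key : ∀ (m : ℕ), m + 2 = (m + 1) + 1 := fun m => rfl
    rw [validB_cons, Bool.and_eq_true, ih]
    simp only [List.length_cons, List.getD_cons_zero, List.getD_cons_succ]
    constructor
    · rintro ⟨h0, h1, h2⟩
      refine ⟨?_, ?_⟩
      · intro i hi
        cases i with
        | zero =>
          simpa only [List.getD_cons_zero, Nat.zero_add, List.getD_cons_succ, key,
            Bool.or_assoc] using h0
        | succ j =>
          have h := h1 j (by omega)
          simpa only [List.getD_cons_succ, key] using h
      · simpa only [List.getD_cons_succ, key] using h2
    · rintro ⟨h1, h2⟩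
      refine ⟨?_, ?_, ?_⟩
      · have h := h1 0 (by omega)
        simpa only [List.getD_cons_zero, Nat.zero_add, List.getD_cons_succ, key,
          Bool.or_assoc] using h
      · intro j hj
        have h := h1 (j+1) (by omega)
        simpa only [List.getD_cons_succ, key] using h
      · simpa only [List.getD_cons_succ, key] using h2

/-- The cyclic "no 3 consecutive falses" property. -/
def cycP (n : ℕ) (x : ZMod n → Bool) : Prop :=
  ∀ v : ZMod n, (x (v - 2) || x (v - 1) || x v) = true

instance (n : ℕ) [NeZero n] : DecidablePred (cycP n) := fun x => by
  unfold cycP; infer_instance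

lemma cyc_iff {n : ℕ} [NeZero n] (hn : 2 ≤ n) (x : ZMod n → Bool) (s : St) :
    validB s (List.ofFn fun j : Fin n => x ((j : ℕ) : ZMod n)) s = true ↔
      (cycP n x ∧ s = (x (-2), x (-1))) := by
  obtain ⟨a, b⟩ := s
  set l : List Bool := List.ofFn fun j : Fin n => x ((j : ℕ) : ZMod n) with hl
  have hlen : l.length = n := List.length_ofFn
  have hget : ∀ j, j < n → l.getD j false = x ((j : ZMod n)) := by
    intro j hj
    rw [hl, List.getD_eq_getElem _ _ (by simpa using hj), List.getElem_ofFn]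
  have c2 : ∀ j : ℕ, ((j + 2 : ℕ) : ZMod n) - 2 = (j : ZMod n) := by
    intro j; push_cast; ring
  have e2 : ∀ (u v : Bool) (j : ℕ), j < n →
      (u :: v :: l).getD (j+2) false = x ((j : ZMod n)) := by
    intro u v j hj
    rw [show j + 2 = (j+1)+1 from rfl, List.getD_cons_succ, List.getD_cons_succ,
      hget j hj]
  have hend1 : ∀ u v : Bool, (u :: v :: l).getD n false = x (-2) := by
    intro u v
    obtain ⟨m, rfl⟩ : ∃ m, n = m + 2 := ⟨n - 2, by omega⟩
    have hcast : ((m : ℕ) : ZMod (m+2)) = -2 := by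
      have h := ZMod.natCast_self (m+2)
      push_cast at h
      linear_combination h
    rw [e2 u v m (by omega), hcast]
  have hend2 : ∀ u v : Bool, (u :: v :: l).getD (n+1) false = x (-1) := by
    intro u v
    obtain ⟨m, rfl⟩ : ∃ m, n = m + 2 := ⟨n - 2, by omega⟩
    have hcast : ((m + 1 : ℕ) : ZMod (m+2)) = -1 := by
      have h := ZMod.natCast_self (m+2)
      push_cast at h ⊢
      linear_combination h
    rw [show m + 2 + 1 = (m+1) + 2 from rfl, e2 u v (m+1) (by omega), hcast]
  have g0 : ∀ (j : ℕ), j < n →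
      (x (-2) :: x (-1) :: l).getD j false = x ((j : ZMod n) - 2) := by
    intro j hj
    match j, hj with
    | 0, _ => simp
    | 1, _ =>
      have h1 : (1 : ZMod n) - 2 = -1 := by ring
      simp [h1]
    | (k+2), hj =>
      rw [e2 _ _ k (by omega), c2]
  have g1 : ∀ (v : ZMod n),
      (x (-2) :: x (-1) :: l).getD (v.val + 1) false = x ((v.val : ZMod n) - 1) := by
    intro v
    cases hk : v.val with
    | zero =>
      have h1 : (0 : ZMod n) - 1 = -1 := by ring
      simp [h1]
    | succ k =>
      have hkn : k < n := by have := ZMod.val_lt v; omega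
      rw [show k + 1 + 1 = k + 2 from rfl, e2 _ _ k hkn]
      congr 1
      push_cast
      ring
  rw [validB_iff, hlen]
  constructor
  · rintro ⟨hw, ht⟩
    rw [hend1, hend2] at ht
    obtain ⟨rfl, rfl⟩ : a = x (-2) ∧ b = x (-1) :=
      ⟨congrArg Prod.fst ht, congrArg Prod.snd ht⟩
    refine ⟨?_, rfl⟩
    intro v
    have hv := hw v.val (ZMod.val_lt v)
    rw [g0 v.val (ZMod.val_lt v), g1 v,
      show v.val + 1 + 1 = v.val + 2 from rfl, e2 _ _ v.val (ZMod.val_lt v),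
      ZMod.natCast_zmod_val] at hv
    exact hv
  · rintro ⟨hc, heq⟩
    obtain ⟨rfl, rfl⟩ : a = x (-2) ∧ b = x (-1) :=
      ⟨congrArg Prod.fst heq, congrArg Prod.snd heq⟩
    refine ⟨?_, by rw [hend1, hend2]⟩
    intro i hi
    have hv := hc ((i : ZMod n))
    have gi1 : ((i + 1 : ℕ) : ZMod n) - 2 = (i : ZMod n) - 1 := by push_cast; ring
    rcases Nat.lt_or_ge (i + 2) n with h1 | h1
    · rw [g0 i (by omega), g0 (i+1) (by omega), gi1,
        show i + 1 + 1 = i + 2 from rfl, e2 _ _ i (by omega)]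
      exact hv
    rcases Nat.lt_or_ge (i + 1) n with h2 | h2
    · -- i + 2 = n
      have hin : i + 2 = n := by omega
      have hi2 : (i : ZMod n) = -2 := by
        have h : ((i + 2 : ℕ) : ZMod n) = 0 := by rw [hin]; exact ZMod.natCast_self n
        push_cast at h
        linear_combination h
      rw [g0 i (by omega), g0 (i+1) (by omega), gi1,
        show i + 1 + 1 = i + 2 from rfl, show i + 2 = n from hin, hend1,
        show (-2 : ZMod n) = (i : ZMod n) from hi2.symm]
      exact hv
    · -- i + 1 = n
      have hin : i + 1 = n := by omega
      have hi1 : (i : ZMod n) = -1 := by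
        have h : ((i + 1 : ℕ) : ZMod n) = 0 := by rw [hin]; exact ZMod.natCast_self n
        push_cast at h
        linear_combination h
      rw [g0 i (by omega), show i + 1 = n from hin, hend1,
        show i + 2 = n + 1 by omega, hend2,
        show (-2 : ZMod n) = (i : ZMod n) - 1 from by rw [hi1]; ring,
        show (-1 : ZMod n) = (i : ZMod n) from hi1.symm]
      exact hv

lemma adj_iff {n : ℕ} (hn : 2 ≤ n) (u v : ZMod n) :
    (cycleG n).Adj u v ↔ (u = v + 1 ∨ u = v - 1) := by
  haveI : Fact (1 < n) := ⟨hn⟩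
  constructor
  · rintro ⟨hne, h | h⟩
    · left; linear_combination h
    · right; linear_combination -h
  · rintro (rfl | rfl)
    · refine ⟨fun h => ?_, Or.inl (by ring)⟩
      have : (1 : ZMod n) = 0 := by linear_combination h
      exact one_ne_zero this
    · refine ⟨fun h => ?_, Or.inr (by ring)⟩
      have : (1 : ZMod n) = 0 := by linear_combination -h
      exact one_ne_zero this

lemma isDomSet_iff {n : ℕ} (hn : 2 ≤ n) (S : Finset (ZMod n)) :
    isDomSet (cycleG n) S ↔ cycP n (fun v => decide (v ∈ S)) := by
  unfold isDomSet cycP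
  simp only [Bool.or_eq_true, decide_eq_true_eq]
  constructor
  · intro h v
    by_cases hv : v - 1 ∈ S
    · exact Or.inl (Or.inr hv)
    · obtain ⟨u, hu, hadj⟩ := h (v - 1) hv
      rcases (adj_iff hn u (v - 1)).mp hadj with rfl | rfl
      · have h1 : v - 1 + 1 = v := by ring
        rw [h1] at hu
        exact Or.inr hu
      · have h1 : v - 1 - 1 = v - 2 := by ring
        rw [h1] at hu
        exact Or.inl (Or.inl hu)
  · intro h v hv
    rcases h (v + 1) with (h1 | h1) | h1
    · have h2 : v + 1 - 2 = v - 1 := by ring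
      rw [h2] at h1
      exact ⟨v - 1, h1, (adj_iff hn _ _).mpr (Or.inr rfl)⟩
    · have h2 : v + 1 - 1 = v := by ring
      rw [h2] at h1
      exact absurd h1 hv
    · exact ⟨v + 1, h1, (adj_iff hn _ _).mpr (Or.inl rfl)⟩

lemma totalDomCount_eq {n : ℕ} (hn : 2 ≤ n) :
    totalDomCount n = ∑ s : St, lcount n s s := by
  haveI : NeZero n := ⟨by omega⟩
  rw [totalDomCount, Nat.card_eq_fintype_card]
  have e0 : {S : Finset (ZMod n) // isDomSet (cycleG n) S} ≃ {x : ZMod n → Bool // cycP n x} :=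
    { toFun := fun S => ⟨fun v => decide (v ∈ S.1), (isDomSet_iff hn S.1).mp S.2⟩
      invFun := fun x => ⟨Finset.univ.filter (fun v => x.1 v = true), by
        rw [isDomSet_iff hn]
        have hfun : (fun v => decide (v ∈ Finset.univ.filter (fun v => x.1 v = true))) = x.1 := by
          funext v; simp
        rw [hfun]
        exact x.2⟩
      left_inv := fun S => Subtype.ext (by ext v; simp)
      right_inv := fun x => Subtype.ext (by funext v; simp) }
  rw [Fintype.card_congr e0]
  have e1 : {x : ZMod n → Bool // cycP n x} ≃
      Σ s : St, {v : List.Vector Bool n // validB s v.toList s = true} :=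
    { toFun := fun x => ⟨(x.1 (-2), x.1 (-1)),
        List.Vector.ofFn (fun j : Fin n => x.1 ((j : ℕ) : ZMod n)), by
          rw [List.Vector.toList_ofFn]
          exact (cyc_iff hn x.1 _).mpr ⟨x.2, rfl⟩⟩
      invFun := fun p => ⟨fun z => p.2.1.get ⟨z.val, ZMod.val_lt z⟩, by
        set x : ZMod n → Bool := fun z => p.2.1.get ⟨z.val, ZMod.val_lt z⟩ with hx
        have hxl : List.ofFn (fun j : Fin n => x ((j : ℕ) : ZMod n)) = p.2.1.toList := by
          apply List.ext_getElem (by simp)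
          intro j h1 h2
          rw [List.getElem_ofFn]
          have hj : j < n := by simpa using h1
          have hval : ((j : ℕ) : ZMod n).val = j := by
            rw [ZMod.val_natCast, Nat.mod_eq_of_lt hj]
          show p.2.1.get _ = _
          rw [List.Vector.get_eq_get_toList, List.get_eq_getElem]
          congr 1
        exact ((cyc_iff hn x _).mp (by rw [hxl]; exact p.2.2)).1⟩
      left_inv := fun x => Subtype.ext (by
        funext z
        show (List.Vector.ofFn _).get _ = x.1 z
        rw [List.Vector.get_ofFn]
        rw [ZMod.natCast_zmod_val])
      right_inv := fun p => by
        rcases p with ⟨s, v, h⟩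
        set x : ZMod n → Bool := fun z => v.get ⟨z.val, ZMod.val_lt z⟩ with hx
        have hxl : List.ofFn (fun j : Fin n => x ((j : ℕ) : ZMod n)) = v.toList := by
          apply List.ext_getElem (by simp)
          intro j h1 h2
          rw [List.getElem_ofFn]
          have hj : j < n := by simpa using h1
          have hval : ((j : ℕ) : ZMod n).val = j := by
            rw [ZMod.val_natCast, Nat.mod_eq_of_lt hj]
          show v.get _ = _
          rw [List.Vector.get_eq_get_toList, List.get_eq_getElem]
          congr 1
        have hv' : validB s (List.ofFn fun j : Fin n => x ((j : ℕ) : ZMod n)) s = true := by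
          rw [hxl]; exact h
        have hs := ((cyc_iff hn x s).mp hv').2
        subst hs
        apply congrArg (Sigma.mk _)
        apply Subtype.ext
        apply Subtype.ext
        show (List.Vector.ofFn (fun j : Fin n => x ((j : ℕ) : ZMod n))).toList = v.toList
        rw [List.Vector.toList_ofFn, hxl] }
  rw [Fintype.card_congr e1, Fintype.card_sigma]
  exact Finset.sum_congr rfl fun s _ => card_valid n s s

theorem totalDomCount_tribonacci :
    totalDomCount 1 = 1 ∧ totalDomCount 2 = 3 ∧ totalDomCount 3 = 7 ∧
      ∀ n : ℕ, 4 ≤ n →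
        totalDomCount n = totalDomCount (n - 1) + totalDomCount (n - 2)
          + totalDomCount (n - 3) := by
  have h1 : totalDomCount 1 = 1 := by
    rw [totalDomCount, Nat.card_eq_fintype_card]; decide
  have key : ∀ m : ℕ, 1 ≤ m → totalDomCount m = ∑ s : St, lcount m s s := by
    intro m hm
    rcases Nat.lt_or_ge m 2 with h | h
    · interval_cases m
      · rw [h1]; decide
    · exact totalDomCount_eq h
  refine ⟨h1, ?_, ?_, ?_⟩
  · rw [key 2 (by omega)]; decide
  · rw [key 3 (by omega)]; decide
  · intro n hn
    obtain ⟨k, rfl⟩ : ∃ k, n = k + 4 := ⟨n - 4, by omega⟩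
    rw [show k + 4 - 1 = k + 3 from rfl, show k + 4 - 2 = k + 2 from rfl,
      show k + 4 - 3 = k + 1 from rfl,
      key (k+4) (by omega), key (k+3) (by omega), key (k+2) (by omega), key (k+1) (by omega),
      ← Finset.sum_add_distrib, ← Finset.sum_add_distrib]
    exact Finset.sum_congr rfl fun s _ => lcount_rec k s s
end

section
/- For every n ≥ 4, the domination polynomial of the cycle satisfies D(C_n, x) = x·(D(C_{n−1}, x) + D(C_{n−2}, x) + D(C_{n−3}, x)), with initial values D(C_1,x) = x, D(C_2,x) = x² + 2x, D(C_3,x) = x³ + 3x² + 3x. -/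
open Polynomial in
/-- The domination polynomial of the cycle `C_n`. -/
noncomputable def domPoly (n : ℕ) : Polynomial ℕ :=
  ∑ i ∈ Finset.range (n + 1), Polynomial.C (domCount n i) * Polynomial.X ^ i

namespace DomAux



/-- positions of the 1s: start at `j`, block lengths `l`. -/
def pos : ℕ → List ℕ → List ℕ
  | _, [] => []
  | j, b :: t => j :: pos (j + b) t

def Ok (l : List ℕ) : Prop := ∀ b ∈ l, 1 ≤ b ∧ b ≤ 3

/-- last element of a list of naturals (0 for empty). -/
def lastB : List ℕ → ℕ
  | [] => 0
  | [b] => b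
  | _ :: b :: t => lastB (b :: t)

@[simp] lemma lastB_nil : lastB [] = 0 := rfl
@[simp] lemma lastB_single (b : ℕ) : lastB [b] = b := rfl
lemma lastB_cons_of_ne {t : List ℕ} (b : ℕ) (h : t ≠ []) :
    lastB (b :: t) = lastB t := by
  cases t with
  | nil => exact absurd rfl h
  | cons c r => rfl

lemma lastB_mem {l : List ℕ} (h : l ≠ []) : lastB l ∈ l := by
  induction l with
  | nil => exact absurd rfl h
  | cons b t ih =>
    cases t with
    | nil => simp
    | cons c r =>
      rw [lastB_cons_of_ne b (by simp)]
      exact List.mem_cons_of_mem _ (ih (by simp))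

def EncP (m i : ℕ) (p : ℕ × List ℕ) : Prop :=
  Ok p.2 ∧ p.2.sum = m ∧ p.2.length = i ∧ p.1 + 1 ≤ lastB p.2

def decodeSet (m : ℕ) (j : ℕ) (l : List ℕ) : Finset (ZMod m) :=
  ((pos j l).map (Nat.cast : ℕ → ZMod m)).toFinset

@[simp] lemma pos_nil (j : ℕ) : pos j [] = [] := rfl
@[simp] lemma pos_cons (j b : ℕ) (t : List ℕ) : pos j (b :: t) = j :: pos (j + b) t := rfl

lemma pos_length (j : ℕ) (l : List ℕ) : (pos j l).length = l.length := by
  induction l generalizing j with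
  | nil => rfl
  | cons b t ih => simp [ih]

lemma pos_ge {l : List ℕ} {j a : ℕ} (ha : a ∈ pos j l) : j ≤ a := by
  induction l generalizing j with
  | nil => simp at ha
  | cons b t ih =>
    rcases (by simpa using ha : a = j ∨ a ∈ pos (j + b) t) with h | h
    · omega
    · have := ih h; omega

lemma pos_sorted {l : List ℕ} (hl : ∀ b ∈ l, 1 ≤ b) (j : ℕ) :
    (pos j l).Pairwise (· < ·) := by
  induction l generalizing j with
  | nil => simp
  | cons b t ih =>
    rw [pos_cons, List.pairwise_cons]
    refine ⟨fun a ha => ?_, ih (fun b hb => hl b (List.mem_cons_of_mem _ hb)) (j + b)⟩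
    have h1 : 1 ≤ b := (hl b (by simp))
    have := pos_ge ha
    omega

lemma pos_bound {l : List ℕ} (hne : l ≠ []) {j a : ℕ} (ha : a ∈ pos j l) :
    a + lastB l ≤ j + l.sum := by
  induction l generalizing j with
  | nil => exact absurd rfl hne
  | cons b t ih =>
    rcases (by simpa using ha : a = j ∨ a ∈ pos (j + b) t) with h | h
    · subst h
      cases t with
      | nil => simp
      | cons c r =>
        rw [lastB_cons_of_ne b (by simp)]
        have : lastB (c :: r) ∈ c :: r := lastB_mem (by simp)
        have hle : lastB (c :: r) ≤ (c :: r).sum := List.single_le_sum (fun x _ => Nat.zero_le x) _ this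
        simp only [List.sum_cons] at *
        omega
    · have hne' : t ≠ [] := by
        intro h'; subst h'; simp at h
      rw [lastB_cons_of_ne b hne']
      have := ih hne' h
      simp only [List.sum_cons]
      omega

lemma pos_lt_of_encp {m i : ℕ} {j : ℕ} {l : List ℕ} (h : EncP m i (j, l)) :
    ∀ a ∈ pos j l, a < m := by
  obtain ⟨hok, hsum, hlen, hj'⟩ := h
  have hj : j + 1 ≤ lastB l := hj'
  have hsum' : l.sum = m := hsum
  have hne : l ≠ [] := by
    intro h'; subst h'; simp at hj
  intro a ha
  have := pos_bound hne ha
  omega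

lemma pos_nodup {l : List ℕ} (hl : ∀ b ∈ l, 1 ≤ b) (j : ℕ) : (pos j l).Nodup :=
  (pos_sorted hl j).nodup

/-- the covering lemma in ℕ -/
lemma pos_cover {l : List ℕ} (hok : Ok l) :
    ∀ j a, j ≤ a → a < j + l.sum →
      ∃ e, e ≤ 2 ∧ (a + e ∈ pos j l ∨ a + e = j + l.sum) := by
  induction l with
  | nil => intro j a h1 h2; simp at h2; omega
  | cons b t ih =>
    intro j a h1 h2
    have hb := hok b (by simp)
    by_cases hab : a < j + b
    · rcases Nat.eq_or_lt_of_le h1 with he | hlt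
      · exact ⟨0, by omega, Or.inl (by simp [← he])⟩
      · refine ⟨j + b - a, by omega, ?_⟩
        cases t with
        | nil => right; simp; omega
        | cons c r => left; simp; right; left; omega
    · have := ih (fun x hx => hok x (List.mem_cons_of_mem _ hx)) (j + b) a (by omega)
        (by simp only [List.sum_cons] at h2 ⊢; omega)
      obtain ⟨e, he, hor⟩ := this
      refine ⟨e, he, ?_⟩
      rcases hor with h | h
      · left; simp [h]
      · right; simp only [List.sum_cons]; omega

def Dom (m : ℕ) (S : Finset (ZMod m)) : Prop :=
  ∀ v : ZMod m, v ∈ S ∨ v + 1 ∈ S ∨ v + 2 ∈ S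

lemma map_val_cast {m : ℕ} (L : List ℕ) (h : ∀ a ∈ L, a < m) :
    (L.map (Nat.cast : ℕ → ZMod m)).map ZMod.val = L := by
  induction L with
  | nil => rfl
  | cons a t ih =>
    simp only [List.map_cons, List.cons.injEq]
    exact ⟨ZMod.val_cast_of_lt (h a (by simp)), ih (fun x hx => h x (by simp [hx]))⟩

lemma nodup_map_cast {m : ℕ} (L : List ℕ) (h : ∀ a ∈ L, a < m) (hnd : L.Nodup) :
    (L.map (Nat.cast : ℕ → ZMod m)).Nodup := by
  refine List.Nodup.map_on ?_ hnd
  intro x hx y hy hxy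
  have := congrArg ZMod.val hxy
  rwa [ZMod.val_cast_of_lt (h x hx), ZMod.val_cast_of_lt (h y hy)] at this

lemma mem_decodeSet {m j : ℕ} {l : List ℕ} {v : ZMod m} :
    v ∈ decodeSet m j l ↔ ∃ a ∈ pos j l, (a : ZMod m) = v := by
  simp [decodeSet, eq_comm]

lemma decodeSet_card {m i j : ℕ} {l : List ℕ} (h : EncP m i (j, l)) (hm : 0 < m) :
    (decodeSet m j l).card = i := by
  have hok : Ok l := h.1
  have hlen : l.length = i := h.2.2.1
  have hnd : ((pos j l).map (Nat.cast : ℕ → ZMod m)).Nodup :=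
    nodup_map_cast _ (pos_lt_of_encp h) (pos_nodup (fun b hb => (hok b hb).1) j)
  rw [decodeSet, List.toFinset_card_of_nodup hnd, List.length_map, pos_length]
  exact hlen

lemma exists_add_le_two (m : ℕ) (S : Finset (ZMod m)) (v : ZMod m)
    (h : ∃ e : ℕ, e ≤ 2 ∧ v + (e : ZMod m) ∈ S) :
    v ∈ S ∨ v + 1 ∈ S ∨ v + 2 ∈ S := by
  obtain ⟨e, he, hmem⟩ := h
  interval_cases e
  · simp at hmem; tauto
  · simp at hmem; tauto
  · right; right; exact_mod_cast hmem

lemma decodeSet_dom {m i j : ℕ} {l : List ℕ} (h : EncP m i (j, l)) (hm : 0 < m) :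
    Dom m (decodeSet m j l) := by
  haveI : NeZero m := ⟨by omega⟩
  obtain ⟨hok, hsum', hlen, hj'⟩ := h
  have hj : j + 1 ≤ lastB l := hj'
  have hsum : l.sum = m := hsum'
  have hne : l ≠ [] := by intro h'; subst h'; simp at hj
  have hlast3 : lastB l ≤ 3 := (hok _ (lastB_mem hne)).2
  have hjmem : (j : ZMod m) ∈ decodeSet m j l := by
    rw [mem_decodeSet]
    refine ⟨j, ?_, rfl⟩
    cases l with
    | nil => exact absurd rfl hne
    | cons b t => simp
  intro v
  apply exists_add_le_two
  set a := v.val with hadef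
  have hva : v = (a : ZMod m) := (ZMod.natCast_rightInverse v).symm
  have ham : a < m := ZMod.val_lt v
  by_cases hja : a < j
  · refine ⟨j - a, by omega, ?_⟩
    rw [hva, ← Nat.cast_add]
    have : a + (j - a) = j := by omega
    rw [this]; exact hjmem
  · push_neg at hja
    obtain ⟨e, he, hor⟩ := pos_cover hok j a hja (by omega)
    refine ⟨e, he, ?_⟩
    rw [hva, ← Nat.cast_add]
    rcases hor with hmem | heq
    · rw [mem_decodeSet]; exact ⟨a + e, hmem, rfl⟩
    · rw [heq, hsum]
      have : ((j + m : ℕ) : ZMod m) = (j : ZMod m) := by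
        push_cast [ZMod.natCast_self]; ring
      rw [this]; exact hjmem

/-- prefix-sum equality + equal sums + nonempty → list equality -/
lemma pos_inj : ∀ (l l' : List ℕ) (j j' : ℕ), l ≠ [] → l' ≠ [] →
    pos j l = pos j' l' → l.sum = l'.sum → j = j' ∧ l = l' := by
  intro l
  induction l with
  | nil => intro l' j j' h; exact absurd rfl h
  | cons b t ih =>
    intro l' j j' _ hne' hpos hsum
    cases l' with
    | nil => exact absurd rfl hne'
    | cons b' t' =>
      simp only [pos_cons, List.cons.injEq] at hpos
      obtain ⟨hjj, htails⟩ := hpos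
      subst hjj
      cases t with
      | nil =>
        cases t' with
        | nil =>
          simp only [List.sum_cons, List.sum_nil] at hsum
          have : b = b' := by omega
          exact ⟨rfl, by simp [this]⟩
        | cons c' r' =>
          have := congrArg List.length htails
          simp [pos_length] at this
      | cons c r =>
        cases t' with
        | nil =>
          have := congrArg List.length htails
          simp [pos_length] at this
        | cons c' r' =>
          have hb : j + b = j + b' := by
            have : (j + b) :: pos (j + b + c) r = (j + b') :: pos (j + b' + c') r' := htails
            exact (List.cons.injEq _ _ _ _).mp this |>.1
          have hbb : b = b' := by omega
          subst hbb
          have hsum2 : (c :: r).sum = (c' :: r').sum := by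
            simp only [List.sum_cons] at hsum ⊢; omega
          obtain ⟨-, h2⟩ := ih (c' :: r') (j + b) (j + b) (by simp) (by simp) htails hsum2
          exact ⟨rfl, by rw [h2]⟩

lemma decode_inj {m i : ℕ} (hm : 0 < m) {p p' : ℕ × List ℕ}
    (hp : EncP m i p) (hp' : EncP m i p')
    (h : decodeSet m p.1 p.2 = decodeSet m p'.1 p'.2) : p = p' := by
  obtain ⟨j, l⟩ := p
  obtain ⟨j', l'⟩ := p'
  have hok := hp.1
  have hok' := hp'.1
  have hne : l ≠ [] := by
    have := hp.2.2.2; intro h'; rw [h'] at this; simp [lastB] at this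
  have hne' : l' ≠ [] := by
    have := hp'.2.2.2; intro h'; rw [h'] at this; simp [lastB] at this
  -- the mapped lists are nodup with equal toFinsets
  have hlt : ∀ a ∈ pos j l, a < m := pos_lt_of_encp hp
  have hlt' : ∀ a ∈ pos j' l', a < m := pos_lt_of_encp hp'
  have hnd : ((pos j l).map (Nat.cast : ℕ → ZMod m)).Nodup :=
    nodup_map_cast _ hlt (pos_nodup (fun b hb => (hok b hb).1) j)
  have hnd' : ((pos j' l').map (Nat.cast : ℕ → ZMod m)).Nodup :=
    nodup_map_cast _ hlt' (pos_nodup (fun b hb => (hok' b hb).1) j')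
  have hperm : ((pos j l).map (Nat.cast : ℕ → ZMod m)).Perm
      ((pos j' l').map (Nat.cast : ℕ → ZMod m)) :=
    List.perm_of_nodup_nodup_toFinset_eq hnd hnd' h
  have hperm2 : (pos j l).Perm (pos j' l') := by
    have := hperm.map ZMod.val
    rwa [map_val_cast _ hlt, map_val_cast _ hlt'] at this
  have hs1 : (pos j l).Pairwise (· ≤ ·) :=
    (pos_sorted (fun b hb => (hok b hb).1) j).imp (fun h => le_of_lt h)
  have hs2 : (pos j' l').Pairwise (· ≤ ·) :=
    (pos_sorted (fun b hb => (hok' b hb).1) j').imp (fun h => le_of_lt h)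
  have heq : pos j l = pos j' l' := List.Perm.eq_of_pairwise' hs1 hs2 hperm2
  have hsum : l.sum = l'.sum := by rw [hp.2.1, hp'.2.1]
  obtain ⟨h1, h2⟩ := pos_inj l l' j j' hne hne' heq hsum
  simp [h1, h2]


lemma SL : ∀ (k : ℕ) (T : Finset ℕ) (hT : T.Nonempty) (c : ℕ), T.card = k →
    (∀ a ∈ T, a < c) →
    (∀ a ∈ T, ∃ e, 1 ≤ e ∧ e ≤ 3 ∧ (a + e ∈ T ∨ a + e = c)) →
    ∃ l : List ℕ, Ok l ∧ l ≠ [] ∧ l.sum + T.min' hT = c ∧ lastB l + T.max' hT = c ∧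
      pos (T.min' hT) l = T.sort (· ≤ ·) := by
  intro k
  induction k with
  | zero =>
    intro T hT c hcard _ _
    rw [Finset.card_eq_zero] at hcard
    subst hcard
    exact absurd hT (by simp)
  | succ k ih =>
    intro T hT c hcard hbound hgap
    rcases Nat.eq_zero_or_pos k with hk | hk
    · -- singleton
      subst hk
      rw [Finset.card_eq_one] at hcard
      obtain ⟨a, rfl⟩ := hcard
      have hac : a < c := hbound a (by simp)
      have h3 : c - a ≤ 3 := by
        obtain ⟨e, he1, he3, hor⟩ := hgap a (by simp)
        rcases hor with h | h
        · simp at h; omega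
        · omega
      refine ⟨[c - a], ?_, by simp, ?_, ?_, ?_⟩
      · intro b hb; simp at hb; omega
      · simp [Finset.min'_singleton]; omega
      · simp [Finset.max'_singleton]; omega
      · simp [Finset.sort_singleton, Finset.min'_singleton]
    · -- at least two elements
      set j := T.min' hT with hjdef
      have hjmem : j ∈ T := T.min'_mem hT
      set T' := T.erase j with hT'def
      have hcard' : T'.card = k := by
        rw [hT'def, Finset.card_erase_of_mem hjmem, hcard]
        omega
      have hT' : T'.Nonempty := Finset.card_pos.mp (by omega)
      set j' := T'.min' hT' with hj'def
      have hj'T' : j' ∈ T' := T'.min'_mem hT'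
      have hj'T : j' ∈ T := Finset.mem_of_mem_erase hj'T'
      have hjj' : j < j' := by
        have h1 : j ≤ j' := T.min'_le j' hj'T
        have h2 : j' ≠ j := (Finset.mem_erase.mp hj'T').1
        omega
      have hcard2 : 1 < T.card := by omega
      have hminmax : j < T.max' hT := Finset.min'_lt_max'_of_card T hcard2
      have hmaxT' : T.max' hT ∈ T' :=
        Finset.mem_erase.mpr ⟨by omega, T.max'_mem hT⟩
      have hmaxeq : T'.max' hT' = T.max' hT := by
        apply le_antisymm
        · exact Finset.max'_le _ _ _ (fun x hx => T.le_max' x (Finset.mem_of_mem_erase hx))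
        · exact Finset.le_max' _ _ hmaxT'
      have hbound' : ∀ a ∈ T', a < c := fun a ha => hbound a (Finset.mem_of_mem_erase ha)
      have hgap' : ∀ a ∈ T', ∃ e, 1 ≤ e ∧ e ≤ 3 ∧ (a + e ∈ T' ∨ a + e = c) := by
        intro a ha
        obtain ⟨e, he1, he3, hor⟩ := hgap a (Finset.mem_of_mem_erase ha)
        have haj' : j' ≤ a := T'.min'_le a ha
        rcases hor with h | h
        · refine ⟨e, he1, he3, Or.inl (Finset.mem_erase.mpr ⟨by omega, h⟩)⟩
        · exact ⟨e, he1, he3, Or.inr h⟩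
      obtain ⟨l', hok', hne', hsum', hlast', hpos'⟩ := ih T' hT' c hcard' hbound' hgap'
      have hj'c : j' < c := hbound j' hj'T
      have hb3 : j' - j ≤ 3 := by
        obtain ⟨e, he1, he3, hor⟩ := hgap j hjmem
        rcases hor with h | h
        · have : j + e ∈ T' := Finset.mem_erase.mpr ⟨by omega, h⟩
          have := T'.min'_le _ this
          omega
        · omega
      refine ⟨(j' - j) :: l', ?_, by simp, ?_, ?_, ?_⟩
      · intro b hb
        rcases List.mem_cons.mp hb with h | h
        · omega
        · exact hok' b h
      · simp only [List.sum_cons]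
        omega
      · rw [lastB_cons_of_ne _ hne', hmaxeq] at *
        omega
      · rw [pos_cons]
        have hjb : j + (j' - j) = j' := by omega
        rw [hjb, hpos']
        -- sort T = j :: sort T'
        have hnd2 : (j :: T'.sort (· ≤ ·)).Nodup := by
          rw [List.nodup_cons]
          refine ⟨fun hmem => ?_, Finset.sort_nodup _ _⟩
          have := (Finset.mem_sort _).mp hmem
          exact absurd rfl ((Finset.mem_erase.mp this).1)
        have htf : (j :: T'.sort (· ≤ ·)).toFinset = T := by
          rw [List.toFinset_cons, Finset.sort_toFinset, hT'def, Finset.insert_erase hjmem]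
        have hperm : (T.sort (· ≤ ·)).Perm (j :: T'.sort (· ≤ ·)) :=
          List.perm_of_nodup_nodup_toFinset_eq (Finset.sort_nodup _ _) hnd2
            (by rw [Finset.sort_toFinset, htf])
        have hsorted2 : (j :: T'.sort (· ≤ ·)).Pairwise (· ≤ ·) := by
          rw [List.pairwise_cons]
          refine ⟨fun x hx => ?_, Finset.pairwise_sort _ _⟩
          exact T.min'_le x (Finset.mem_of_mem_erase ((Finset.mem_sort _).mp hx))
        exact (List.Perm.eq_of_pairwise' (Finset.pairwise_sort _ _) hsorted2 hperm).symm

lemma dom_iff_s13 {m : ℕ} (S : Finset (ZMod m)) :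
    isDomSet (cycleG m) S ↔ Dom m S := by
  constructor
  · intro h v
    by_contra hc
    push_neg at hc
    obtain ⟨h0, h1, h2⟩ := hc
    obtain ⟨u, huS, hune, hadj⟩ := h (v + 1) h1
    rcases hadj with ha | ha
    · have h' : u = v + 2 := by linear_combination ha
      rw [h'] at huS; exact h2 huS
    · have h' : u = v := by linear_combination -ha
      rw [h'] at huS; exact h0 huS
  · intro h v hv
    rcases h (v - 1) with h' | h' | h'
    · refine ⟨v - 1, h', fun heq => hv (heq ▸ h'), Or.inr (by ring)⟩
    · have hsimp : v - 1 + 1 = v := by ring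
      rw [hsimp] at h'
      exact absurd h' hv
    · have hsimp : v - 1 + 2 = v + 1 := by ring
      rw [hsimp] at h'
      refine ⟨v + 1, h', fun heq => hv (heq ▸ h'), Or.inl (by ring)⟩

lemma decode_surj {m i : ℕ} (hm : 0 < m) (S : Finset (ZMod m)) (hS : Dom m S)
    (hcard : S.card = i) :
    ∃ p : ℕ × List ℕ, EncP m i p ∧ decodeSet m p.1 p.2 = S := by
  haveI : NeZero m := ⟨by omega⟩
  set T := S.image ZMod.val with hTdef
  have hmemT : ∀ a : ℕ, a ∈ T ↔ a < m ∧ (a : ZMod m) ∈ S := by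
    intro a
    constructor
    · intro ha
      obtain ⟨s, hsS, rfl⟩ := Finset.mem_image.mp ha
      refine ⟨ZMod.val_lt s, ?_⟩
      rw [ZMod.natCast_rightInverse s]
      exact hsS
    · intro ⟨h1, h2⟩
      exact Finset.mem_image.mpr ⟨(a : ZMod m), h2, ZMod.val_cast_of_lt h1⟩
  have hSne : S.Nonempty := by
    rcases hS 0 with h | h | h
    exacts [⟨_, h⟩, ⟨_, h⟩, ⟨_, h⟩]
  have hTne : T.Nonempty := hSne.image _
  set j := T.min' hTne with hjdef
  have hjT : j ∈ T := T.min'_mem hTne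
  have hjm : j < m := ((hmemT j).mp hjT).1
  have hbound : ∀ a ∈ T, a < m + j := by
    intro a ha; have := ((hmemT a).mp ha).1; omega
  have hgap : ∀ a ∈ T, ∃ e, 1 ≤ e ∧ e ≤ 3 ∧ (a + e ∈ T ∨ a + e = m + j) := by
    intro a haT
    have ham : a < m := ((hmemT a).mp haT).1
    by_cases h3 : m + j - a ≤ 3
    · exact ⟨m + j - a, by omega, by omega, Or.inr (by omega)⟩
    · have hdom := hS ((a : ZMod m) + 1)
      have c1 : (a : ZMod m) + 1 = ((a + 1 : ℕ) : ZMod m) := by push_cast; ring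
      have c2 : (a : ZMod m) + 1 + 1 = ((a + 2 : ℕ) : ZMod m) := by push_cast; ring
      have c3 : (a : ZMod m) + 1 + 2 = ((a + 3 : ℕ) : ZMod m) := by push_cast; ring
      have key : ∃ e' : ℕ, 1 ≤ e' ∧ e' ≤ 3 ∧ ((a + e' : ℕ) : ZMod m) ∈ S := by
        rcases hdom with h | h | h
        · exact ⟨1, by omega, by omega, by rw [c1] at h; exact h⟩
        · exact ⟨2, by omega, by omega, by rw [c2] at h; exact h⟩
        · exact ⟨3, by omega, by omega, by rw [c3] at h; exact h⟩
      obtain ⟨e', he1, he3, heS⟩ := key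
      rcases Nat.lt_or_ge (a + e') m with hlt | hge
      · exact ⟨e', he1, he3, Or.inl ((hmemT _).mpr ⟨hlt, heS⟩)⟩
      · exfalso
        set r := a + e' - m with hrdef
        have hrj : r < j := by omega
        have hrm : r < m := by omega
        have hre : ((r : ℕ) : ZMod m) = ((a + e' : ℕ) : ZMod m) := by
          have : a + e' = r + m := by omega
          rw [this]
          push_cast [ZMod.natCast_self]
          ring
        have : r ∈ T := (hmemT r).mpr ⟨hrm, by rw [hre]; exact heS⟩
        have := T.min'_le r this
        omega
  obtain ⟨l, hok, hlne, hsum, hlast, hpos⟩ :=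
    SL T.card T hTne (m + j) rfl hbound hgap
  have hmaxT : T.max' hTne ∈ T := T.max'_mem hTne
  have hmaxm : T.max' hTne < m := ((hmemT _).mp hmaxT).1
  have hjmax : j ≤ T.max' hTne := T.min'_le _ hmaxT
  have hcardT : T.card = S.card := Finset.card_image_of_injective S (ZMod.val_injective m)
  refine ⟨(j, l), ⟨hok, (show l.sum = m by omega), ?_, (show j + 1 ≤ lastB l by omega)⟩, ?_⟩
  · show l.length = i
    have h1 : (pos j l).length = (T.sort (· ≤ ·)).length := by rw [hpos]
    rw [pos_length, Finset.length_sort] at h1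
    rw [h1, hcardT, hcard]
  · ext v
    rw [mem_decodeSet]
    constructor
    · intro ⟨a, ha, hav⟩
      rw [hpos] at ha
      have haT := (Finset.mem_sort _).mp ha
      have := ((hmemT a).mp haT).2
      rwa [hav] at this
    · intro hvS
      refine ⟨v.val, ?_, ZMod.natCast_rightInverse v⟩
      rw [hpos]
      exact (Finset.mem_sort _).mpr ((hmemT v.val).mpr
        ⟨ZMod.val_lt v, by rw [ZMod.natCast_rightInverse v]; exact hvS⟩)

abbrev EncT (m i : ℕ) := {p : ℕ × List ℕ // EncP m i p}
abbrev DomT (m i : ℕ) := {S : Finset (ZMod m) // isDomSet (cycleG m) S ∧ S.card = i}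

noncomputable def mainEquiv {m i : ℕ} (hm : 0 < m) : EncT m i ≃ DomT m i :=
  Equiv.ofBijective
    (fun p => ⟨decodeSet m p.1.1 p.1.2,
      (dom_iff_s13 _).mpr (decodeSet_dom p.2 hm), decodeSet_card p.2 hm⟩)
    ⟨fun p q h => Subtype.ext (decode_inj hm p.2 q.2 (congrArg Subtype.val h)),
     fun S => by
       obtain ⟨p, hEnc, hdec⟩ := decode_surj hm S.1 ((dom_iff_s13 _).mp S.2.1) S.2.2
       exact ⟨⟨p, hEnc⟩, Subtype.ext hdec⟩⟩

lemma domCount_eq {m : ℕ} (hm : 0 < m) (i : ℕ) :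
    domCount m i = Nat.card (EncT m i) := by
  have : NeZero m := ⟨by omega⟩
  exact (Nat.card_congr (mainEquiv hm (i := i))).symm

lemma encFinite {m i : ℕ} (hm : 0 < m) : Finite (EncT m i) := by
  have : NeZero m := ⟨by omega⟩
  exact Finite.of_equiv _ (mainEquiv hm).symm

lemma encp_cons {n i k j : ℕ} {t : List ℕ} (hk1 : 1 ≤ k) (hk3 : k ≤ 3) (hkn : k ≤ n)
    (h : EncP (n - k) i (j, t)) : EncP n (i + 1) (j, k :: t) := by
  obtain ⟨hok, hsum, hlen, hj⟩ := h
  have hsum' : t.sum = n - k := hsum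
  have hlen' : t.length = i := hlen
  have hj' : j + 1 ≤ lastB t := hj
  have hne : t ≠ [] := by intro h'; rw [h'] at hj'; simp at hj'
  refine ⟨?_, ?_, ?_, ?_⟩
  · intro b hb
    rcases List.mem_cons.mp hb with h' | h'
    · omega
    · exact hok b h'
  · show (k :: t).sum = n
    rw [List.sum_cons, hsum']
    omega
  · show (k :: t).length = i + 1
    simp [hlen']
  · show j + 1 ≤ lastB (k :: t)
    rw [lastB_cons_of_ne _ hne]
    exact hj'

lemma encp_tail {n i j k : ℕ} {t : List ℕ} (hn : 4 ≤ n)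
    (h : EncP n (i + 1) (j, k :: t)) :
    EncP (n - k) i (j, t) ∧ 1 ≤ k ∧ k ≤ 3 := by
  obtain ⟨hok, hsum, hlen, hj⟩ := h
  have hk := hok k (by simp)
  have hsum' : k + t.sum = n := by
    have : (k :: t).sum = n := hsum
    simpa using this
  have hne : t ≠ [] := by
    intro h'
    rw [h'] at hsum'
    simp at hsum'
    omega
  have hj' : j + 1 ≤ lastB (k :: t) := hj
  rw [lastB_cons_of_ne _ hne] at hj'
  refine ⟨⟨fun b hb => hok b (by simp [hb]), ?_, ?_, hj'⟩, hk.1, hk.2⟩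
  · show t.sum = n - k
    omega
  · show t.length = i
    have : (k :: t).length = i + 1 := hlen
    simpa using this

def recF (n i : ℕ) (hn : 4 ≤ n) :
    EncT n (i + 1) → (EncT (n - 1) i ⊕ EncT (n - 2) i) ⊕ EncT (n - 3) i
  | ⟨(j, []), hp⟩ => absurd hp.2.2.2 (by simp)
  | ⟨(j, k :: t), hp⟩ =>
    if h1 : k = 1 then Sum.inl (Sum.inl ⟨(j, t), by rw [← h1]; exact (encp_tail hn hp).1⟩)
    else if h2 : k = 2 then Sum.inl (Sum.inr ⟨(j, t), by rw [← h2]; exact (encp_tail hn hp).1⟩)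
    else Sum.inr ⟨(j, t), by
      have h := encp_tail hn hp
      have h3 : k = 3 := by omega
      rw [← h3]; exact h.1⟩

def recG (n i : ℕ) (hn : 4 ≤ n) :
    ((EncT (n - 1) i ⊕ EncT (n - 2) i) ⊕ EncT (n - 3) i) → EncT n (i + 1)
  | Sum.inl (Sum.inl ⟨(j, t), hq⟩) =>
      ⟨(j, 1 :: t), encp_cons (by omega) (by omega) (by omega) hq⟩
  | Sum.inl (Sum.inr ⟨(j, t), hq⟩) =>
      ⟨(j, 2 :: t), encp_cons (by omega) (by omega) (by omega) hq⟩
  | Sum.inr ⟨(j, t), hq⟩ =>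
      ⟨(j, 3 :: t), encp_cons (by omega) (by omega) (by omega) hq⟩

def recEquiv (n i : ℕ) (hn : 4 ≤ n) :
    EncT n (i + 1) ≃ (EncT (n - 1) i ⊕ EncT (n - 2) i) ⊕ EncT (n - 3) i where
  toFun := recF n i hn
  invFun := recG n i hn
  left_inv := by
    rintro ⟨⟨j, _ | ⟨k, t⟩⟩, hp⟩
    · exact absurd hp.2.2.2 (by simp)
    · by_cases h1 : k = 1
      · subst h1; simp [recF, recG]
      · by_cases h2 : k = 2
        · subst h2; simp [recF, recG]
        · have h3 : k = 3 := by
            have h := encp_tail hn hp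
            omega
          subst h3; simp [recF, recG]
  right_inv := by
    rintro ((⟨⟨j, t⟩, hq⟩ | ⟨⟨j, t⟩, hq⟩) | ⟨⟨j, t⟩, hq⟩)
    · simp [recF, recG]
    · simp [recF, recG]
    · simp [recF, recG]

lemma card_rec (n i : ℕ) (hn : 4 ≤ n) :
    Nat.card (EncT n (i + 1)) =
      Nat.card (EncT (n - 1) i) + Nat.card (EncT (n - 2) i) + Nat.card (EncT (n - 3) i) := by
  have f1 : Finite (EncT (n - 1) i) := encFinite (by omega)
  have f2 : Finite (EncT (n - 2) i) := encFinite (by omega)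
  have f3 : Finite (EncT (n - 3) i) := encFinite (by omega)
  rw [Nat.card_congr (recEquiv n i hn), Nat.card_sum, Nat.card_sum]

lemma domCount_rec (n i : ℕ) (hn : 4 ≤ n) :
    domCount n (i + 1) =
      domCount (n - 1) i + domCount (n - 2) i + domCount (n - 3) i := by
  rw [domCount_eq (show (0:ℕ) < n by omega), domCount_eq (show (0:ℕ) < n - 1 by omega),
    domCount_eq (show (0:ℕ) < n - 2 by omega), domCount_eq (show (0:ℕ) < n - 3 by omega)]
  exact card_rec n i hn

lemma domCount_zero {m : ℕ} (hm : 0 < m) : domCount m 0 = 0 := by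
  have : IsEmpty (DomT m 0) := by
    constructor
    rintro ⟨S, h1, h2⟩
    rw [Finset.card_eq_zero] at h2
    subst h2
    obtain ⟨u, hu, -⟩ := h1 0 (by simp)
    simp at hu
  exact Nat.card_of_isEmpty

lemma domCount_gt {m i : ℕ} (hm : 0 < m) (h : m < i) : domCount m i = 0 := by
  have : NeZero m := ⟨by omega⟩
  have : IsEmpty (DomT m i) := by
    constructor
    rintro ⟨S, -, h2⟩
    have hle : i ≤ m := by simpa [h2, ZMod.card] using Finset.card_le_univ S
    omega
  exact Nat.card_of_isEmpty

end DomAux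

instance inst_s13 (n : ℕ) [NeZero n] : DecidablePred (isDomSet (cycleG n)) := fun S =>
  decidable_of_iff (∀ v, v ∉ S → ∃ u ∈ S, (cycleG n).Adj u v) Iff.rfl

lemma domCount_fintype (n i : ℕ) [NeZero n] :
    domCount n i = Fintype.card {S : Finset (ZMod n) // isDomSet (cycleG n) S ∧ S.card = i} :=
  Nat.card_eq_fintype_card

open Polynomial in
theorem domPoly_recurrence :
    (∀ n : ℕ, 4 ≤ n →
        domPoly n = X * (domPoly (n - 1) + domPoly (n - 2) + domPoly (n - 3))) ∧
      domPoly 1 = X ∧ domPoly 2 = X ^ 2 + 2 * X ∧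
      domPoly 3 = X ^ 3 + 3 * X ^ 2 + 3 * X := by
  refine ⟨?_, ?_, ?_, ?_⟩
  · intro n hn
    have hn0 : (0:ℕ) < n := by omega
    have hext : ∀ k : ℕ, 1 ≤ k → k ≤ 3 →
        X * domPoly (n - k) =
          ∑ i ∈ Finset.range n, C (domCount (n - k) i) * X ^ (i + 1) := by
      intro k hk1 hk3
      have hnk : (0:ℕ) < n - k := by omega
      show X * ∑ i ∈ Finset.range (n - k + 1), C (domCount (n - k) i) * X ^ i = _
      rw [Finset.mul_sum]
      rw [Finset.sum_subset (Finset.range_subset_range.mpr (show n - k + 1 ≤ n by omega))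
        (fun i _ hi => by
          have : n - k < i := by
            simp only [Finset.mem_range] at hi
            omega
          simp [DomAux.domCount_gt hnk this])]
      apply Finset.sum_congr rfl
      intro i _
      ring
    have hL : domPoly n = ∑ i ∈ Finset.range n, C (domCount n (i + 1)) * X ^ (i + 1) := by
      show ∑ i ∈ Finset.range (n + 1), C (domCount n i) * X ^ i = _
      rw [Finset.sum_range_succ']
      simp [DomAux.domCount_zero hn0]
    rw [hL, mul_add, mul_add, hext 1 (by omega) (by omega), hext 2 (by omega) (by omega),
      hext 3 (by omega) (by omega), ← Finset.sum_add_distrib, ← Finset.sum_add_distrib]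
    apply Finset.sum_congr rfl
    intro i _
    rw [DomAux.domCount_rec n i hn]
    rw [map_add, map_add]
    ring
  · have h0 : domCount 1 0 = 0 := by rw [domCount_fintype]; decide
    have h1 : domCount 1 1 = 1 := by rw [domCount_fintype]; decide
    show ∑ i ∈ Finset.range 2, C (domCount 1 i) * X ^ i = X
    rw [Finset.sum_range_succ, Finset.sum_range_one, h0, h1]
    simp
  · have h0 : domCount 2 0 = 0 := by rw [domCount_fintype]; decide
    have h1 : domCount 2 1 = 2 := by rw [domCount_fintype]; decide
    have h2 : domCount 2 2 = 1 := by rw [domCount_fintype]; decide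
    show ∑ i ∈ Finset.range 3, C (domCount 2 i) * X ^ i = X ^ 2 + 2 * X
    rw [Finset.sum_range_succ, Finset.sum_range_succ, Finset.sum_range_one, h0, h1, h2]
    simp
    ring
  · have h0 : domCount 3 0 = 0 := by rw [domCount_fintype]; decide
    have h1 : domCount 3 1 = 3 := by rw [domCount_fintype]; decide
    have h2 : domCount 3 2 = 3 := by rw [domCount_fintype]; decide
    have h3 : domCount 3 3 = 1 := by rw [domCount_fintype]; decide
    show ∑ i ∈ Finset.range 4, C (domCount 3 i) * X ^ i = X ^ 3 + 3 * X ^ 2 + 3 * X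
    rw [Finset.sum_range_succ, Finset.sum_range_succ, Finset.sum_range_succ,
      Finset.sum_range_one, h0, h1, h2, h3]
    simp
    ring
end

section
/- For n ≥ 3, the unique dominating sets of C_{3n} of minimum cardinality n are the three sets {1,4,...,3n−2}, {2,5,...,3n−1}, {3,6,...,3n} (residue classes modulo 3). -/
namespace C3nAux

/-- Closed neighborhood in the cycle on `ZMod N`. -/
def Nb (N : ℕ) (u : ZMod N) : Finset (ZMod N) := {u - 1, u, u + 1}

lemma cast_inj (n : ℕ) {i j : ℕ} (hi : i < 3*n) (hj : j < 3*n)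
    (h : (i : ZMod (3*n)) = j) : i = j := by
  have := congrArg ZMod.val h
  rwa [ZMod.val_natCast_of_lt hi, ZMod.val_natCast_of_lt hj] at this

lemma one_ne (n : ℕ) (hn : 3 ≤ n) : (1 : ZMod (3*n)) ≠ 0 := by
  intro h
  have h' : ((1:ℕ) : ZMod (3*n)) = ((0:ℕ) : ZMod (3*n)) := by push_cast; exact h
  have := cast_inj n (by omega) (by omega) h'
  omega

lemma two_ne (n : ℕ) (hn : 3 ≤ n) : (2 : ZMod (3*n)) ≠ 0 := by
  intro h
  have h' : ((2:ℕ) : ZMod (3*n)) = ((0:ℕ) : ZMod (3*n)) := by push_cast; exact h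
  have := cast_inj n (by omega) (by omega) h'
  omega

lemma decomp (n : ℕ) (hn : 3 ≤ n) (v : ZMod (3*n)) :
    ∃ q r : ℕ, r < 3 ∧ v = 3*(q : ZMod (3*n)) + (r : ZMod (3*n)) := by
  haveI : NeZero (3*n) := ⟨by omega⟩
  refine ⟨v.val / 3, v.val % 3, Nat.mod_lt _ (by norm_num), ?_⟩
  conv_lhs => rw [← ZMod.natCast_zmod_val v, ← Nat.div_add_mod v.val 3]
  push_cast
  ring

lemma reduce (n : ℕ) (hn : 3 ≤ n) (q : ℕ) :
    ∃ k : ℕ, k < n ∧ (3*(q : ZMod (3*n)) : ZMod (3*n)) = 3*((k : ℕ) : ZMod (3*n)) := by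
  refine ⟨q % n, Nat.mod_lt _ (by omega), ?_⟩
  have h : ((3*q : ℕ) : ZMod (3*n)) = ((3*(q % n) : ℕ) : ZMod (3*n)) := by
    rw [ZMod.natCast_eq_natCast_iff]
    show (3*q) % (3*n) = (3*(q % n)) % (3*n)
    rw [Nat.mul_mod_mul_left, Nat.mul_mod_mul_left, Nat.mod_mod_of_dvd q (dvd_refl n)]
  push_cast at h
  exact h

lemma classInjOn (n : ℕ) (hn : 3 ≤ n) (c : ZMod (3*n)) :
    Set.InjOn (fun k : ℕ => 3*((k:ℕ) : ZMod (3*n)) + c) (Finset.range n) := by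
  intro i hi j hj h
  simp only [Finset.coe_range, Set.mem_Iio] at hi hj
  have h3 : ((3*i : ℕ) : ZMod (3*n)) = ((3*j : ℕ) : ZMod (3*n)) := by
    push_cast
    have := add_right_cancel h
    push_cast at this ⊢
    exact this
  have := cast_inj n (by omega) (by omega) h3
  omega

lemma classCard (n : ℕ) (hn : 3 ≤ n) (c : ZMod (3*n)) :
    ((Finset.range n).image (fun k : ℕ => 3*((k:ℕ) : ZMod (3*n)) + c)).card = n := by
  rw [Finset.card_image_of_injOn (classInjOn n hn c), Finset.card_range]

lemma classMem (n : ℕ) (hn : 3 ≤ n) (c : ZMod (3*n)) (x : ZMod (3*n)) :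
    x ∈ (Finset.range n).image (fun k : ℕ => 3*((k:ℕ) : ZMod (3*n)) + c) ↔
      ∃ m : ZMod (3*n), x = 3*m + c := by
  haveI : NeZero (3*n) := ⟨by omega⟩
  simp only [Finset.mem_image, Finset.mem_range]
  constructor
  · rintro ⟨k, hk, rfl⟩; exact ⟨(k : ZMod (3*n)), rfl⟩
  · rintro ⟨m, rfl⟩
    obtain ⟨k, hk, hkeq⟩ := reduce n hn m.val
    rw [ZMod.natCast_zmod_val] at hkeq
    exact ⟨k, hk, by rw [hkeq]⟩

lemma class_shift (n : ℕ) (a b : ZMod (3*n)) (h : ∃ t : ZMod (3*n), a = 3*t + b) :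
    {x : ZMod (3*n) | ∃ m : ZMod (3*n), x = 3*m + a} = {x | ∃ m : ZMod (3*n), x = 3*m + b} := by
  obtain ⟨t, rfl⟩ := h
  ext x
  simp only [Set.mem_setOf_eq]
  constructor
  · rintro ⟨m, rfl⟩; exact ⟨m + t, by ring⟩
  · rintro ⟨m, rfl⟩; exact ⟨m - t, by ring⟩

lemma backward (n : ℕ) (hn : 3 ≤ n) (S : Finset (ZMod (3*n))) (c : ZMod (3*n))
    (hS : (S : Set (ZMod (3*n))) = {x | ∃ m : ZMod (3*n), x = 3*m + c}) :
    isDomSet (cycleG (3*n)) S ∧ S.card = n := by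
  have hmem : ∀ x : ZMod (3*n), x ∈ S ↔ ∃ m : ZMod (3*n), x = 3*m + c := by
    intro x
    rw [← Finset.mem_coe, hS]
    exact Iff.rfl
  constructor
  · intro v hv
    obtain ⟨q, r, hr3, hveq⟩ := decomp n hn (v - c)
    have hv' : v = 3*(q : ZMod (3*n)) + (r : ZMod (3*n)) + c := by
      have : v - c + c = v := by ring
      rw [← this, hveq]
    interval_cases r
    · exfalso
      exact hv ((hmem v).mpr ⟨(q : ZMod (3*n)), by simpa using hv'⟩)
    · refine ⟨v - 1, (hmem _).mpr ⟨(q : ZMod (3*n)), by rw [hv']; push_cast; ring⟩,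
        ?_, Or.inr (by ring)⟩
      intro h
      exact one_ne n hn (sub_eq_self.mp h)
    · refine ⟨v + 1, (hmem _).mpr ⟨(q : ZMod (3*n)) + 1, by rw [hv']; push_cast; ring⟩,
        ?_, Or.inl (by ring)⟩
      intro h
      exact one_ne n hn (by linear_combination h)
  · have : S = (Finset.range n).image (fun k : ℕ => 3*((k:ℕ) : ZMod (3*n)) + c) := by
      ext x
      rw [hmem, classMem n hn]
    rw [this, classCard n hn]

lemma forward (n : ℕ) (hn : 3 ≤ n) (S : Finset (ZMod (3*n)))
    (hdom : isDomSet (cycleG (3*n)) S) (hcard : S.card = n) :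
    ∃ a : ZMod (3*n), (S : Set (ZMod (3*n))) = {x | ∃ m : ZMod (3*n), x = 3*m + a} := by
  haveI : NeZero (3*n) := ⟨by omega⟩
  have h10 := one_ne n hn
  have h20 := two_ne n hn
  -- neighborhoods have 3 elements
  have hNb : ∀ u : ZMod (3*n), (Nb (3*n) u).card = 3 := by
    intro u
    rw [Nb, Finset.card_insert_of_notMem, Finset.card_insert_of_notMem, Finset.card_singleton]
    · simp only [Finset.mem_singleton]
      intro h
      exact h10 (left_eq_add.mp h)
    · simp only [Finset.mem_insert, Finset.mem_singleton]
      push_neg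
      constructor
      · intro h; exact h10 (sub_eq_self.mp h)
      · intro h; exact h20 (by linear_combination -h)
  -- adjacency implies Nb membership
  have hmemNb : ∀ u v : ZMod (3*n), (cycleG (3*n)).Adj u v → v ∈ Nb (3*n) u := by
    intro u v ⟨_, h⟩
    rcases h with h | h
    · simp only [Nb, Finset.mem_insert, Finset.mem_singleton]
      exact Or.inl (by linear_combination -h)
    · simp only [Nb, Finset.mem_insert, Finset.mem_singleton]
      exact Or.inr (Or.inr (by linear_combination h))
  have hself : ∀ u : ZMod (3*n), u ∈ Nb (3*n) u := by
    intro u; simp [Nb]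
  -- the counting function
  set cnt : ZMod (3*n) → ℕ := fun v => (S.filter (fun u => v ∈ Nb (3*n) u)).card with hcnt_def
  have hcnt1 : ∀ v, 1 ≤ cnt v := by
    intro v
    rw [hcnt_def]
    apply Finset.card_pos.mpr
    by_cases hv : v ∈ S
    · exact ⟨v, Finset.mem_filter.mpr ⟨hv, hself v⟩⟩
    · obtain ⟨u, hu, hadj⟩ := hdom v hv
      exact ⟨u, Finset.mem_filter.mpr ⟨hu, hmemNb u v hadj⟩⟩
  have hsum : ∑ v : ZMod (3*n), cnt v = 3 * n := by
    have e1 : ∀ v, cnt v = ∑ u ∈ S, if v ∈ Nb (3*n) u then 1 else 0 := by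
      intro v; rw [hcnt_def]; exact Finset.card_filter _ _
    simp_rw [e1]
    rw [Finset.sum_comm]
    have e2 : ∀ u : ZMod (3*n),
        (∑ v : ZMod (3*n), if v ∈ Nb (3*n) u then 1 else 0) = 3 := by
      intro u
      rw [← Finset.card_filter]
      rw [Finset.filter_mem_eq_inter, Finset.univ_inter]
      exact hNb u
    simp_rw [e2]
    rw [Finset.sum_const, smul_eq_mul, hcard, mul_comm]
  have hcnt_eq : ∀ v, cnt v = 1 := by
    by_contra hc
    push_neg at hc
    obtain ⟨v, hv⟩ := hc
    have hlt : ∑ _v : ZMod (3*n), (1:ℕ) < ∑ v : ZMod (3*n), cnt v :=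
      Finset.sum_lt_sum (fun i _ => hcnt1 i)
        ⟨v, Finset.mem_univ v, by have := hcnt1 v; omega⟩
    rw [hsum, Finset.sum_const, smul_eq_mul, mul_one, Finset.card_univ, ZMod.card] at hlt
    omega
  -- unique dominator
  have key : ∀ v u u' : ZMod (3*n), u ∈ S → u' ∈ S → v ∈ Nb (3*n) u → v ∈ Nb (3*n) u' →
      u = u' := by
    intro v u u' hu hu' hvu hvu'
    by_contra hne
    have : 1 < cnt v := by
      rw [hcnt_def]
      exact Finset.one_lt_card.mpr
        ⟨u, Finset.mem_filter.mpr ⟨hu, hvu⟩, u', Finset.mem_filter.mpr ⟨hu', hvu'⟩, hne⟩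
    rw [hcnt_eq] at this
    omega
  have hsp1 : ∀ u : ZMod (3*n), u ∈ S → u + 1 ∉ S := by
    intro u hu h1
    have heq := key u u (u + 1) hu h1 (hself u)
      (by simp only [Nb, Finset.mem_insert, Finset.mem_singleton]; exact Or.inl (by ring))
    exact h10 (left_eq_add.mp heq)
  have hsp2 : ∀ u : ZMod (3*n), u ∈ S → u + 2 ∉ S := by
    intro u hu h2
    have heq := key (u+1) u (u + 2) hu h2
      (by simp [Nb])
      (by simp only [Nb, Finset.mem_insert, Finset.mem_singleton]; exact Or.inl (by ring))
    exact h20 (by linear_combination -heq)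
  have hstep : ∀ u : ZMod (3*n), u ∈ S → u + 3 ∈ S := by
    intro u hu
    obtain ⟨w, hw, _, hadj⟩ := hdom (u + 2) (hsp2 u hu)
    rcases hadj with h | h
    · have : w = u + 3 := by linear_combination h
      rwa [← this]
    · exfalso
      have : w = u + 1 := by linear_combination -h
      exact hsp1 u hu (this ▸ hw)
  -- S contains a full residue class
  obtain ⟨a, ha⟩ := Finset.card_pos.mp (by omega : 0 < S.card)
  have hAk : ∀ k : ℕ, 3*((k:ℕ) : ZMod (3*n)) + a ∈ S := by
    intro k
    induction k with
    | zero => simpa using ha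
    | succ k ih =>
      have e : 3*(((k+1 : ℕ)) : ZMod (3*n)) + a = (3*((k:ℕ) : ZMod (3*n)) + a) + 3 := by
        push_cast; ring
      rw [e]
      exact hstep _ ih
  set A : Finset (ZMod (3*n)) :=
    (Finset.range n).image (fun k : ℕ => 3*((k:ℕ) : ZMod (3*n)) + a) with hA_def
  have hsub : A ⊆ S := by
    intro x hx
    rw [hA_def, Finset.mem_image] at hx
    obtain ⟨k, _, rfl⟩ := hx
    exact hAk k
  have hSA : A = S := Finset.eq_of_subset_of_card_le hsub
    (by rw [hcard, hA_def, classCard n hn])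
  refine ⟨a, ?_⟩
  rw [← hSA]
  ext x
  rw [Finset.mem_coe, hA_def, classMem n hn]
  exact Iff.rfl

end C3nAux

theorem min_dominating_sets_of_C3n (n : ℕ) (hn : 3 ≤ n) (S : Finset (ZMod (3 * n))) :
    (isDomSet (cycleG (3 * n)) S ∧ S.card = n) ↔
      ((S : Set (ZMod (3 * n))) = {x | ∃ m : ZMod (3 * n), x = 3 * m + 1} ∨
       (S : Set (ZMod (3 * n))) = {x | ∃ m : ZMod (3 * n), x = 3 * m + 2} ∨
       (S : Set (ZMod (3 * n))) = {x | ∃ m : ZMod (3 * n), x = 3 * m}) := by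
  constructor
  · rintro ⟨hdom, hcard⟩
    obtain ⟨a, hSa⟩ := C3nAux.forward n hn S hdom hcard
    obtain ⟨q, r, hr3, haq⟩ := C3nAux.decomp n hn a
    interval_cases r
    · right; right
      rw [hSa, C3nAux.class_shift n a 0 ⟨(q : ZMod (3*n)), by simpa using haq⟩]
      ext x
      simp
    · left
      rw [hSa, C3nAux.class_shift n a 1 ⟨(q : ZMod (3*n)), by rw [haq]; norm_num⟩]
    · right; left
      rw [hSa, C3nAux.class_shift n a 2 ⟨(q : ZMod (3*n)), by rw [haq]; norm_num⟩]
  · rintro (h | h | h)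
    · exact C3nAux.backward n hn S 1 h
    · exact C3nAux.backward n hn S 2 h
    · refine C3nAux.backward n hn S 0 ?_
      rw [h]
      ext x
      simp
end

section
/- For n ≥ 4: C_{n−1} has no dominating set of cardinality i−1 while both C_{n−2} and C_{n−3} do, if and only if n = 3k+2 and i = k+1 for some positive integer k. -/
lemma dom_lb (m : ℕ) (hm : 1 ≤ m) (S : Finset (ZMod m)) (hS : isDomSet (cycleG m) S) :
    (m + 2) / 3 ≤ S.card := by
  haveI : NeZero m := ⟨by omega⟩
  have cover : (Finset.univ : Finset (ZMod m)) ⊆ S.biUnion (fun u => {u - 1, u, u + 1}) := by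
    intro v _
    rw [Finset.mem_biUnion]
    by_cases hv : v ∈ S
    · exact ⟨v, hv, by simp⟩
    · obtain ⟨u, hu, _, hadj⟩ := hS v hv
      refine ⟨u, hu, ?_⟩
      rcases hadj with h | h
      · have : v = u - 1 := by rw [← h]; ring
        simp [this]
      · have : v = u + 1 := by rw [← h]; ring
        simp [this]
  have h1 : (Finset.univ : Finset (ZMod m)).card ≤ (S.biUnion (fun u => {u - 1, u, u + 1})).card :=
    Finset.card_le_card cover
  have h2 : (S.biUnion (fun u => {u - 1, u, u + 1})).card ≤ ∑ u ∈ S, ({u - 1, u, u + 1} : Finset (ZMod m)).card :=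
    Finset.card_biUnion_le
  have h3 : ∑ u ∈ S, ({u - 1, u, u + 1} : Finset (ZMod m)).card ≤ ∑ _u ∈ S, 3 := by
    refine Finset.sum_le_sum fun u _ => ?_
    exact (Finset.card_insert_le _ _).trans (Nat.succ_le_succ ((Finset.card_insert_le _ _).trans (by simp)))
  have h4 : ∑ _u ∈ S, 3 = 3 * S.card := by rw [Finset.sum_const]; ring
  have h5 : (Finset.univ : Finset (ZMod m)).card = m := by
    rw [Finset.card_univ, ZMod.card]
  omega

lemma dom_exists (m j : ℕ) (hm : 1 ≤ m) (hlo : (m + 2) / 3 ≤ j) (hhi : j ≤ m) :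
    ∃ S : Finset (ZMod m), isDomSet (cycleG m) S ∧ S.card = j := by
  haveI : NeZero m := ⟨by omega⟩
  set c := (m + 2) / 3 with hc
  have hc1 : 1 ≤ c := by omega
  have hc3 : m ≤ 3 * c := by omega
  set S₀ : Finset (ZMod m) := (Finset.range c).image (fun t => ((3 * t : ℕ) : ZMod m)) with hS₀
  have hdom : isDomSet (cycleG m) S₀ := by
    intro v hv
    set x := v.val with hxdef
    have hx : x < m := ZMod.val_lt v
    have hvx : ((x : ℕ) : ZMod m) = v := by
      rw [hxdef, ZMod.natCast_val, ZMod.cast_id]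
    by_cases hr0 : x % 3 = 0
    · -- then v ∈ S₀, contradiction
      exfalso
      apply hv
      rw [hS₀, Finset.mem_image]
      refine ⟨x / 3, Finset.mem_range.mpr (by omega), ?_⟩
      rw [show 3 * (x / 3) = x by omega, hvx]
    by_cases hlast : x = m - 1
    · -- dominated by 0
      refine ⟨((3 * 0 : ℕ) : ZMod m), ?_, ?_, ?_⟩
      · rw [hS₀, Finset.mem_image]
        exact ⟨0, Finset.mem_range.mpr hc1, rfl⟩
      · intro h
        have := congrArg ZMod.val h
        rw [ZMod.val_cast_of_lt (by omega)] at this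
        omega
      · left
        rw [← hvx, hlast]
        have : ((m - 1 : ℕ) : ZMod m) + 1 = 0 := by
          rw [show ((1 : ZMod m)) = ((1 : ℕ) : ZMod m) by simp, ← Nat.cast_add,
            show m - 1 + 1 = m by omega, ZMod.natCast_self]
        push_cast
        linear_combination -this
    · have hxm : x < m - 1 := by omega
      by_cases hr1 : x % 3 = 1
      · -- dominated by 3*(x/3), v - u = 1
        set t := x / 3 with ht
        have hxt : x = 3 * t + 1 := by omega
        refine ⟨((3 * t : ℕ) : ZMod m), ?_, ?_, ?_⟩
        · rw [hS₀, Finset.mem_image]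
          exact ⟨t, Finset.mem_range.mpr (by omega), rfl⟩
        · intro h
          have := congrArg ZMod.val h
          rw [ZMod.val_cast_of_lt (by omega)] at this
          omega
        · right
          rw [← hvx, hxt]
          push_cast
          ring
      · -- x % 3 = 2, dominated by 3*(x/3)+3 = x+1, u - v = 1
        have hr2 : x % 3 = 2 := by omega
        set t := x / 3 with ht
        have hxt : x = 3 * t + 2 := by omega
        refine ⟨((3 * (t + 1) : ℕ) : ZMod m), ?_, ?_, ?_⟩
        · rw [hS₀, Finset.mem_image]
          exact ⟨t + 1, Finset.mem_range.mpr (by omega), rfl⟩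
        · intro h
          have := congrArg ZMod.val h
          rw [ZMod.val_cast_of_lt (by omega)] at this
          omega
        · left
          rw [← hvx, hxt]
          push_cast
          ring
  have hcard0 : S₀.card ≤ j := (Finset.card_image_le).trans_eq (Finset.card_range c) |>.trans hlo
  have hcardu : j ≤ Fintype.card (ZMod m) := by rw [ZMod.card]; exact hhi
  obtain ⟨S, hsub, hcard⟩ := Finset.exists_superset_card_eq hcard0 hcardu
  refine ⟨S, ?_, hcard⟩
  intro v hv
  obtain ⟨u, hu, hadj⟩ := hdom v (fun h => hv (hsub h))
  exact ⟨u, hsub hu, hadj⟩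

lemma dom_iff (m j : ℕ) (hm : 1 ≤ m) :
    (∃ S : Finset (ZMod m), isDomSet (cycleG m) S ∧ S.card = j) ↔ ((m + 2) / 3 ≤ j ∧ j ≤ m) := by
  constructor
  · rintro ⟨S, hS, rfl⟩
    haveI : NeZero m := ⟨by omega⟩
    refine ⟨dom_lb m hm S hS, ?_⟩
    have := Finset.card_le_univ S
    rwa [ZMod.card] at this
  · rintro ⟨h1, h2⟩
    exact dom_exists m j hm h1 h2

theorem empty_first_iff (n : ℕ) (hn : 4 ≤ n) (i : ℕ) :
    ((¬ ∃ S : Finset (ZMod (n - 1)), isDomSet (cycleG (n - 1)) S ∧ S.card = i - 1) ∧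
     (∃ S : Finset (ZMod (n - 2)), isDomSet (cycleG (n - 2)) S ∧ S.card = i - 1) ∧
     (∃ S : Finset (ZMod (n - 3)), isDomSet (cycleG (n - 3)) S ∧ S.card = i - 1)) ↔
      ∃ k : ℕ, 1 ≤ k ∧ n = 3 * k + 2 ∧ i = k + 1 := by
  rw [dom_iff (n - 1) (i - 1) (by omega), dom_iff (n - 2) (i - 1) (by omega),
    dom_iff (n - 3) (i - 1) (by omega)]
  constructor
  · rintro ⟨h1, h2, h3⟩
    refine ⟨(n - 2) / 3, by omega, by omega, by omega⟩
  · rintro ⟨k, hk, rfl, rfl⟩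
    refine ⟨by omega, by omega, by omega⟩
end
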